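/- Let r : D⊗D → D⊗D be a non-degenerate coalgebra automorphism that induces a non-degenerate set-theoretic solution r₀ of the braid equation on X×X. Then for all (a,b),(c,d),(e,f) ∈ Y, with T := [a,b]×[c,d]×[e,f], one has Σ LBE(S,T) = δ_{a,b}·δ_{c,d}·δ_{e,f} and Σ RBE(S,T) = δ_{a,b}·δ_{c,d}·δ_{e,f}, where both sums run over all singleton subintervals S = [(g,i,k),(g,i,k)] ⊆ T (i.e. over all S ⊆ T with h(S) = 0). -/

import Mathlib

open Finsupp

namespace BraidPaper

/-- The set of ordered pairs `Y = {(a,b) : a ≤ b}` indexing the basis of the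
incidence coalgebra of `X`. -/
abbrev Y (X : Type) [PartialOrder X] : Type := {p : X × X // p.1 ≤ p.2}

/-- The incidence coalgebra `D` of `X`, modelled as the free `K`-module on `Y`. -/
abbrev Inc (K X : Type) [Field K] [PartialOrder X] : Type := Y X →₀ K

/-- `D ⊗ D`, modelled as the free `K`-module on `Y × Y`. -/
abbrev Inc2 (K X : Type) [Field K] [PartialOrder X] : Type := (Y X × Y X) →₀ K

/-- `D ⊗ D ⊗ D`, modelled as the free `K`-module on `Y × Y × Y`. -/
abbrev Inc3 (K X : Type) [Field K] [PartialOrder X] : Type := (Y X × Y X × Y X) →₀ K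

/-- `(D ⊗ D) ⊗ (D ⊗ D)`, modelled as the free `K`-module on `(Y × Y) × (Y × Y)`. -/
abbrev Inc4 (K X : Type) [Field K] [PartialOrder X] : Type :=
  ((Y X × Y X) × (Y X × Y X)) →₀ K

variable {K X : Type} [Field K] [PartialOrder X] [DecidableEq X]
  [@DecidableRel X X (· ≤ ·)] [LocallyFiniteOrder X]

/-- The coefficients `λ_{a|b|c|d}^{e|f|g|h}` of a linear endomorphism of `D ⊗ D`
(defined to be `0` unless `a ≤ b`, `c ≤ d`, `e ≤ f` and `g ≤ h`). -/
noncomputable def lam (r : Inc2 K X →ₗ[K] Inc2 K X) (a b c d e f g h : X) : K :=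
  if h1 : a ≤ b then if h2 : c ≤ d then if h3 : e ≤ f then if h4 : g ≤ h then
    (r (single (⟨(a, b), h1⟩, ⟨(c, d), h2⟩) 1)) (⟨(e, f), h3⟩, ⟨(g, h), h4⟩)
  else 0 else 0 else 0 else 0

/-- The counit of `D ⊗ D`. -/
noncomputable def eps2 : Inc2 K X →ₗ[K] K :=
  Finsupp.lsum K fun pq =>
    if pq.1.1.1 = pq.1.1.2 ∧ pq.2.1.1 = pq.2.1.2 then LinearMap.id else 0

/-- The comultiplication of `D ⊗ D`. -/
noncomputable def comul2 : Inc2 K X →ₗ[K] Inc4 K X :=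
  Finsupp.lsum K fun pq => LinearMap.toSpanSingleton K _ <|
    ∑ x ∈ (Finset.Icc pq.1.1.1 pq.1.1.2).attach,
      ∑ y ∈ (Finset.Icc pq.2.1.1 pq.2.1.2).attach,
        single ((⟨(pq.1.1.1, x.1), (Finset.mem_Icc.mp x.2).1⟩,
                 ⟨(pq.2.1.1, y.1), (Finset.mem_Icc.mp y.2).1⟩),
                (⟨(x.1, pq.1.1.2), (Finset.mem_Icc.mp x.2).2⟩,
                 ⟨(y.1, pq.2.1.2), (Finset.mem_Icc.mp y.2).2⟩)) (1 : K)

/-- The tensor product `r ⊗ s` of two linear endomorphisms of `D ⊗ D`, in the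
free-module model. -/
noncomputable def tmap (r s : Inc2 K X →ₗ[K] Inc2 K X) : Inc4 K X →ₗ[K] Inc4 K X :=
  Finsupp.lsum K fun pq => LinearMap.toSpanSingleton K _ <|
    (r (single pq.1 1)).sum fun p a => (s (single pq.2 1)).sum fun q b =>
      single (p, q) (a * b)

/-- `r` is a coalgebra automorphism of `D ⊗ D`. -/
def IsCoalgAuto (r : Inc2 K X →ₗ[K] Inc2 K X) : Prop :=
  Function.Bijective ⇑r ∧ comul2 ∘ₗ r = tmap r r ∘ₗ comul2 ∧ eps2 ∘ₗ r = eps2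

/-- `D ⊗ ε : D ⊗ D → D`. -/
noncomputable def rcu : Inc2 K X →ₗ[K] Inc K X :=
  Finsupp.lsum K fun pq => LinearMap.toSpanSingleton K _ <|
    if pq.2.1.1 = pq.2.1.2 then single pq.1 (1 : K) else 0

/-- `ε ⊗ D : D ⊗ D → D`. -/
noncomputable def lcu : Inc2 K X →ₗ[K] Inc K X :=
  Finsupp.lsum K fun pq => LinearMap.toSpanSingleton K _ <|
    if pq.1.1.1 = pq.1.1.2 then single pq.2 (1 : K) else 0

/-- `(D ⊗ σ) ∘ (Δ ⊗ D)` where `σ := (D ⊗ ε) ∘ r`. -/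
noncomputable def ndeg1 (r : Inc2 K X →ₗ[K] Inc2 K X) : Inc2 K X →ₗ[K] Inc2 K X :=
  Finsupp.lsum K fun pq => LinearMap.toSpanSingleton K _ <|
    ∑ x ∈ (Finset.Icc pq.1.1.1 pq.1.1.2).attach,
      ((rcu ∘ₗ r) (single ((⟨(x.1, pq.1.1.2), (Finset.mem_Icc.mp x.2).2⟩ : Y X), pq.2) 1)).sum
        fun s a => single ((⟨(pq.1.1.1, x.1), (Finset.mem_Icc.mp x.2).1⟩ : Y X), s) a

/-- `(τ ⊗ D) ∘ (D ⊗ Δ)` where `τ := (ε ⊗ D) ∘ r`. -/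
noncomputable def ndeg2 (r : Inc2 K X →ₗ[K] Inc2 K X) : Inc2 K X →ₗ[K] Inc2 K X :=
  Finsupp.lsum K fun pq => LinearMap.toSpanSingleton K _ <|
    ∑ y ∈ (Finset.Icc pq.2.1.1 pq.2.1.2).attach,
      ((lcu ∘ₗ r) (single (pq.1, (⟨(pq.2.1.1, y.1), (Finset.mem_Icc.mp y.2).1⟩ : Y X)) 1)).sum
        fun s a => single (s, (⟨(y.1, pq.2.1.2), (Finset.mem_Icc.mp y.2).2⟩ : Y X)) a

/-- `r` is non-degenerate. -/
def NonDeg (r : Inc2 K X →ₗ[K] Inc2 K X) : Prop :=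
  Function.Bijective ⇑(ndeg1 r) ∧ Function.Bijective ⇑(ndeg2 r)

/-- The set-map `r₀(a,c) = (ᵃc, aᶜ)` built from left translations `lt` (so
`ᵃc = lt a c`) and right translations `rt` (so `aᶜ = rt a c`). -/
def r0map (lt rt : X → X → X) : X × X → X × X := fun p => (lt p.1 p.2, rt p.1 p.2)

/-- The set-map `r₀` is non-degenerate. -/
def NonDeg0 (lt rt : X → X → X) : Prop :=
  (∀ a : X, Function.Bijective (lt a)) ∧ (∀ c : X, Function.Bijective (fun a => rt a c))

def m12 (f : X × X → X × X) : X × X × X → X × X × X :=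
  fun t => ((f (t.1, t.2.1)).1, (f (t.1, t.2.1)).2, t.2.2)

def m23 (f : X × X → X × X) : X × X × X → X × X × X := fun t => (t.1, f t.2)

/-- `f : X × X → X × X` is a set-theoretic solution of the braid equation. -/
def Braid0 (f : X × X → X × X) : Prop :=
  m12 f ∘ m23 f ∘ m12 f = m23 f ∘ m12 f ∘ m23 f

/-- `r` induces `r₀` on `X × X`. -/
def Induces (r : Inc2 K X →ₗ[K] Inc2 K X) (lt rt : X → X → X) : Prop :=
  ∀ a c : X,
    r (single (⟨(a, a), le_refl a⟩, ⟨(c, c), le_refl c⟩) 1)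
      = single (⟨(lt a c, lt a c), le_refl _⟩, ⟨(rt a c, rt a c), le_refl _⟩) 1

/-- `r ⊗ id` acting on `D ⊗ D ⊗ D`. -/
noncomputable def r12 (r : Inc2 K X →ₗ[K] Inc2 K X) : Inc3 K X →ₗ[K] Inc3 K X :=
  Finsupp.lsum K fun t => LinearMap.toSpanSingleton K _ <|
    (r (single (t.1, t.2.1) 1)).sum fun p a => single (p.1, p.2, t.2.2) a

/-- `id ⊗ r` acting on `D ⊗ D ⊗ D`. -/
noncomputable def r23 (r : Inc2 K X →ₗ[K] Inc2 K X) : Inc3 K X →ₗ[K] Inc3 K X :=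
  Finsupp.lsum K fun t => LinearMap.toSpanSingleton K _ <|
    (r (single t.2 1)).sum fun p a => single (t.1, p) a

/-- The braid equation `r₁₂ ∘ r₂₃ ∘ r₁₂ = r₂₃ ∘ r₁₂ ∘ r₂₃` on `D ⊗ D ⊗ D`. -/
def BraidEqR (r : Inc2 K X →ₗ[K] Inc2 K X) : Prop :=
  r12 r ∘ₗ r23 r ∘ₗ r12 r = r23 r ∘ₗ r12 r ∘ₗ r23 r

/-- The height of the interval `[a,b]`: the length of its longest chain. -/
noncomputable def hgt (a b : X) : ℕ∞ := Set.chainHeight (Set.Icc a b) (· < ·) - 1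

/-- `LBE(S,T)` for `T = [a,b]×[c,d]×[e,f] ⊇ S = [g,h]×[i,j]×[k,l]`. -/
noncomputable def LBE (r : Inc2 K X →ₗ[K] Inc2 K X) (lt rt : X → X → X)
    (a b c d e f g h i j k l : X) : K :=
  ∑ x ∈ Finset.Icc a g, ∑ y ∈ Finset.Icc h b, ∑ w ∈ Finset.Icc c i,
  ∑ z ∈ Finset.Icc j d, ∑ u ∈ Finset.Icc e k, ∑ v ∈ Finset.Icc l f,
    lam r a b c d (lt a w) (lt a z) (rt x c) (rt y c) *
    lam r (rt x c) (rt y c) e f (lt (rt x c) u) (lt (rt x c) v)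
      (rt (rt g c) e) (rt (rt h c) e) *
    lam r (lt a w) (lt a z) (lt (rt x c) u) (lt (rt x c) v)
      (lt a (lt c k)) (lt a (lt c l))
      (rt (lt a i) (lt (rt a i) e)) (rt (lt a j) (lt (rt a j) e))

/-- `RBE(S,T)` for `T = [a,b]×[c,d]×[e,f] ⊇ S = [g,h]×[i,j]×[k,l]`. -/
noncomputable def RBE (r : Inc2 K X →ₗ[K] Inc2 K X) (lt rt : X → X → X)
    (a b c d e f g h i j k l : X) : K :=
  ∑ x ∈ Finset.Icc a g, ∑ y ∈ Finset.Icc h b, ∑ w ∈ Finset.Icc c i,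
  ∑ z ∈ Finset.Icc j d, ∑ u ∈ Finset.Icc e k, ∑ v ∈ Finset.Icc l f,
    lam r c d e f (lt c u) (lt c v) (rt w e) (rt z e) *
    lam r a b (lt c u) (lt c v) (lt a (lt c k)) (lt a (lt c l))
      (rt x (lt c u)) (rt y (lt c u)) *
    lam r (rt x (lt c u)) (rt y (lt c u)) (rt w e) (rt z e)
      (lt (rt a (lt i e)) (rt i e)) (lt (rt a (lt j e)) (rt j e))
      (rt (rt g c) e) (rt (rt h c) e)

/-- the height of `T = [a,b]×[c,d]×[e,f]`. -/
noncomputable def hgt3 (a b c d e f : X) : ℕ∞ := hgt a b + hgt c d + hgt e f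

/-- `LSQ(S,T)` for `T = [a,b]×[c,d] ⊇ S = [e,f]×[g,h]`. -/
noncomputable def LSQ (r : Inc2 K X →ₗ[K] Inc2 K X) (lt rt : X → X → X)
    (a b c d e f g h : X) : K :=
  ∑ x ∈ Finset.Icc a e, ∑ y ∈ Finset.Icc f b, ∑ w ∈ Finset.Icc c g, ∑ z ∈ Finset.Icc h d,
    lam r a b c d (lt a w) (lt a z) (rt x c) (rt y c) *
    lam r (lt a w) (lt a z) (rt x c) (rt y c)
      (lt (lt a w) (rt e c)) (lt (lt a w) (rt f c))
      (rt (lt a g) (rt x c)) (rt (lt a h) (rt x c))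

/-- `RSQ(S,T)` for `T = [a,b]×[c,d] ⊇ S = [e,f]×[g,h]`. -/
def RSQ (K : Type) [Field K] (a b c d e f g h : X) : K :=
  (if a = e then (1 : K) else 0) * (if b = f then 1 else 0) *
  (if c = g then 1 else 0) * (if d = h then 1 else 0)

/-- the height of `T = [a,b]×[c,d]`. -/
noncomputable def hgt2 (a b c d : X) : ℕ∞ := hgt a b + hgt c d

/-- `r` has set-type square. -/
def SetSq (r : Inc2 K X →ₗ[K] Inc2 K X) (lt rt : X → X → X) : Prop :=
  ∀ (a b c d : X) (hab : a ≤ b) (hcd : c ≤ d)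
    (h1 : lt (lt a c) (rt a c) ≤ lt (lt a c) (rt b c))
    (h2 : rt (lt a c) (rt a c) ≤ rt (lt a d) (rt a c)),
    r (r (single (⟨(a, b), hab⟩, ⟨(c, d), hcd⟩) 1))
      = single (⟨(lt (lt a c) (rt a c), lt (lt a c) (rt b c)), h1⟩,
                ⟨(rt (lt a c) (rt a c), rt (lt a d) (rt a c)), h2⟩) 1

/-- `r` has set-type square up to height 1. -/
def SetSq1 (r : Inc2 K X →ₗ[K] Inc2 K X) (lt rt : X → X → X) : Prop :=
  ∀ (a b c d : X) (hab : a ≤ b) (hcd : c ≤ d), hgt a b + hgt c d = 1 →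
    ∀ (h1 : lt (lt a c) (rt a c) ≤ lt (lt a c) (rt b c))
      (h2 : rt (lt a c) (rt a c) ≤ rt (lt a d) (rt a c)),
    r (r (single (⟨(a, b), hab⟩, ⟨(c, d), hcd⟩) 1))
      = single (⟨(lt (lt a c) (rt a c), lt (lt a c) (rt b c)), h1⟩,
                ⟨(rt (lt a c) (rt a c), rt (lt a d) (rt a c)), h2⟩) 1

/-- `α_r(c)(a,b)` (for translations given by poset automorphisms `φl`, `φr`). -/
noncomputable def alphaR (r : Inc2 K X →ₗ[K] Inc2 K X) (φl φr : X → X) (c a b : X) : K :=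
  lam r a b c c (φl c) (φl c) (φr a) (φr b)

/-- `β_r(c)(a,b)`. -/
noncomputable def betaR (r : Inc2 K X →ₗ[K] Inc2 K X) (φl φr : X → X) (c a b : X) : K :=
  lam r a b c c (φl c) (φl c) (φr a) (φr a)

/-- `α_l(c)(a,b)`. -/
noncomputable def alphaL (r : Inc2 K X →ₗ[K] Inc2 K X) (φl φr : X → X) (c a b : X) : K :=
  lam r c c a b (φl a) (φl b) (φr c) (φr c)

/-- `β_l(c)(a,b)`. -/
noncomputable def betaL (r : Inc2 K X →ₗ[K] Inc2 K X) (φl φr : X → X) (c a b : X) : K :=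
  lam r c c a b (φl a) (φl a) (φr c) (φr c)

/-- `Γ_{a|b|c|d}`. -/
noncomputable def Gam (r : Inc2 K X →ₗ[K] Inc2 K X) (φl φr : X → X) (a b c d : X) : K :=
  lam r a b c d (φl c) (φl c) (φr a) (φr a)

/-- `X` is connected. -/
def Connected (X : Type) [PartialOrder X] : Prop :=
  ∀ x y : X, Relation.ReflTransGen (fun a b : X => a ≤ b ∨ b ≤ a) x y


section Chunk1
set_option linter.unusedSectionVars false

variable {K X : Type} [Field K] [PartialOrder X] [DecidableEq X]
  [@DecidableRel X X (· ≤ ·)] [LocallyFiniteOrder X]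

/-! ### Generic helpers -/

lemma sum_support_cover {α : Type} [DecidableEq α] (w : α →₀ K) (W : Finset α) (f : α → K)
    (h0 : ∀ p, w p = 0 → f p = 0) (hW : ∀ p, f p ≠ 0 → p ∈ W) :
    ∑ p ∈ w.support, f p = ∑ p ∈ W, f p := by
  have e1 : ∑ p ∈ w.support ∩ W, f p = ∑ p ∈ w.support, f p :=
    Finset.sum_subset Finset.inter_subset_left (fun x hx hx' => by
      by_contra h
      exact hx' (Finset.mem_inter.mpr ⟨hx, hW x h⟩))
  have e2 : ∑ p ∈ w.support ∩ W, f p = ∑ p ∈ W, f p :=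
    Finset.sum_subset Finset.inter_subset_right (fun x hx hx' => by
      have : x ∉ w.support := fun hs => hx' (Finset.mem_inter.mpr ⟨hs, hx⟩)
      exact h0 x (Finsupp.notMem_support_iff.mp this))
  rw [← e1, e2]

lemma lsumEval {α β : Type} (vecs : α → (β →₀ K)) (v : α →₀ K) (pt : β) :
    (Finsupp.lsum K (fun a => LinearMap.toSpanSingleton K (β →₀ K) (vecs a)) v) pt
      = ∑ p ∈ v.support, v p * vecs p pt := by
  rw [Finsupp.lsum_apply, Finsupp.sum_apply, Finsupp.sum]
  exact Finset.sum_congr rfl fun p _ => by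
    rw [LinearMap.toSpanSingleton_apply, Finsupp.smul_apply, smul_eq_mul]

lemma support_sum_point {α : Type} [DecidableEq α] (v : α →₀ K) (g0 : α) (f : α → K) :
    (∑ p ∈ v.support, if p = g0 then v p * f p else 0) = v g0 * f g0 := by
  rw [Finset.sum_ite_eq' v.support g0 (fun p => v p * f p)]
  by_cases h : g0 ∈ v.support
  · rw [if_pos h]
  · rw [if_neg h, Finsupp.notMem_support_iff.mp h, zero_mul]

lemma sum_ite_point {α : Type} [DecidableEq α] {s : Finset α} (A : α) (P : α → Prop)
    [DecidablePred P] (c : K) :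
    (∑ m ∈ s, if (m = A ∧ P m) then c else 0) = if (A ∈ s ∧ P A) then c else 0 := by
  have : ∀ m ∈ s, (if (m = A ∧ P m) then c else 0) = if m = A then (if P m then c else 0) else 0 :=
    fun m _ => by by_cases h1 : m = A <;> by_cases h2 : P m <;> simp [h1, h2]
  rw [Finset.sum_congr rfl this, Finset.sum_ite_eq' s A (fun m => if P m then c else 0)]
  by_cases h1 : A ∈ s <;> by_cases h2 : P A <;> simp [h1, h2]

lemma ite_and_mul_one {p q : Prop} [Decidable p] [Decidable q] :
    (if (p ∧ q) then (1:K) else 0) = (if p then (1:K) else 0) * (if q then (1:K) else 0) := by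
  by_cases hp : p <;> by_cases hq : q <;> simp [hp, hq]

/-! ### Basic evaluation of `lam` -/

lemma lam_eval (r : Inc2 K X →ₗ[K] Inc2 K X) {a b c d e f g h : X}
    (h1 : a ≤ b) (h2 : c ≤ d) (h3 : e ≤ f) (h4 : g ≤ h) :
    lam r a b c d e f g h
      = r (single (⟨(a,b),h1⟩, ⟨(c,d),h2⟩) 1) (⟨(e,f),h3⟩, ⟨(g,h),h4⟩) := by
  unfold lam
  rw [dif_pos h1, dif_pos h2, dif_pos h3, dif_pos h4]

lemma lam_zero_out {a b c d e f g h : X} (r : Inc2 K X →ₗ[K] Inc2 K X)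
    (hn : ¬ (e ≤ f ∧ g ≤ h)) : lam r a b c d e f g h = 0 := by
  unfold lam
  by_cases h1 : a ≤ b
  · by_cases h2 : c ≤ d
    · rw [dif_pos h1, dif_pos h2]
      by_cases h3 : e ≤ f
      · rw [dif_pos h3, dif_neg (fun h4 => hn ⟨h3, h4⟩)]
      · rw [dif_neg h3]
    · rw [dif_pos h1, dif_neg h2]
  · rw [dif_neg h1]

/-- extraction of `Induces`. -/
lemma lam_ind {r : Inc2 K X →ₗ[K] Inc2 K X} {lt rt : X → X → X}
    (hind : Induces r lt rt) (a c E F G H : X) :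
    lam r a a c c E F G H =
      if (E = lt a c ∧ F = lt a c ∧ G = rt a c ∧ H = rt a c) then 1 else 0 := by
  by_cases h3 : E ≤ F
  · by_cases h4 : G ≤ H
    · rw [lam_eval r le_rfl le_rfl h3 h4, hind a c, Finsupp.single_apply]
      congr 1
      simp [Prod.ext_iff, Subtype.ext_iff, eq_comm, and_assoc]
    · rw [lam_zero_out r (fun hh => h4 hh.2), if_neg]
      rintro ⟨_, _, h5, h6⟩
      exact h4 (by rw [h5, h6])
  · rw [lam_zero_out r (fun hh => h3 hh.1), if_neg]
    rintro ⟨h5, h6, _, _⟩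
    exact h3 (by rw [h5, h6])

/-! ### Counit extraction -/

lemma eps2_apply (v : Inc2 K X) :
    eps2 v = ∑ P ∈ v.support,
      if (P.1.1.1 = P.1.1.2 ∧ P.2.1.1 = P.2.1.2) then v P else 0 := by
  unfold eps2
  rw [Finsupp.lsum_apply, Finsupp.sum]
  exact Finset.sum_congr rfl fun P _ => by
    by_cases h : (P.1.1.1 = P.1.1.2 ∧ P.2.1.1 = P.2.1.2) <;> simp [h]

lemma counit_cover {r : Inc2 K X →ₗ[K] Inc2 K X} (hca : IsCoalgAuto r)
    {A B C D : X} (hAB : A ≤ B) (hCD : C ≤ D)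
    (W : Finset (X × X)) (hW : ∀ p : X × X, lam r A B C D p.1 p.1 p.2 p.2 ≠ 0 → p ∈ W) :
    ∑ p ∈ W, lam r A B C D p.1 p.1 p.2 p.2
      = (if A = B then (1:K) else 0) * (if C = D then (1:K) else 0) := by
  have h0 := congrArg (fun (φ : Inc2 K X →ₗ[K] K) =>
      φ (single (⟨(A,B),hAB⟩, ⟨(C,D),hCD⟩) 1)) hca.2.2
  simp only [LinearMap.comp_apply] at h0
  rw [eps2_apply, eps2_apply (single (⟨(A,B),hAB⟩, ⟨(C,D),hCD⟩) 1)] at h0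
  rw [Finsupp.support_single_ne_zero _ (one_ne_zero), Finset.sum_singleton,
      Finsupp.single_eq_same] at h0
  set w := r (single ((⟨(A,B),hAB⟩ : Y X), (⟨(C,D),hCD⟩ : Y X)) 1) with hw
  -- LHS of h0 is a sum over support; convert to sum over W.image e
  have ecov : ∀ Q : Y X × Y X,
      (if (Q.1.1.1 = Q.1.1.2 ∧ Q.2.1.1 = Q.2.1.2) then w Q else 0) ≠ 0 →
      Q ∈ W.image (fun p : X × X => ((⟨(p.1,p.1), le_refl _⟩ : Y X), (⟨(p.2,p.2), le_refl _⟩ : Y X))) := by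
    intro Q hQ
    by_cases hd : (Q.1.1.1 = Q.1.1.2 ∧ Q.2.1.1 = Q.2.1.2)
    · rw [if_pos hd] at hQ
      have hQeq : Q = ((⟨(Q.1.1.1, Q.1.1.1), le_refl _⟩ : Y X), (⟨(Q.2.1.1, Q.2.1.1), le_refl _⟩ : Y X)) := by
        apply Prod.ext <;> apply Subtype.ext <;> apply Prod.ext <;> simp [hd.1.symm, hd.2.symm]
      have hlam : lam r A B C D Q.1.1.1 Q.1.1.1 Q.2.1.1 Q.2.1.1 ≠ 0 := by
        rw [lam_eval r hAB hCD (le_refl _) (le_refl _), ← hw, ← hQeq]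
        exact hQ
      refine Finset.mem_image.mpr ⟨(Q.1.1.1, Q.2.1.1), hW _ hlam, ?_⟩
      exact hQeq.symm
    · rw [if_neg hd] at hQ; exact absurd rfl hQ
  have h1 : ∑ Q ∈ w.support, (if (Q.1.1.1 = Q.1.1.2 ∧ Q.2.1.1 = Q.2.1.2) then w Q else 0)
      = ∑ Q ∈ W.image (fun p : X × X => ((⟨(p.1,p.1), le_refl _⟩ : Y X), (⟨(p.2,p.2), le_refl _⟩ : Y X))),
          (if (Q.1.1.1 = Q.1.1.2 ∧ Q.2.1.1 = Q.2.1.2) then w Q else 0) :=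
    sum_support_cover w _ _ (fun p hp => by rw [hp]; simp) ecov
  rw [h1] at h0
  rw [Finset.sum_image (fun x _ y _ hxy => by
        simpa [Prod.ext_iff, Subtype.ext_iff] using hxy)] at h0
  have h2 : ∀ p ∈ W,
      (if ((⟨(p.1,p.1), le_refl _⟩ : Y X), (⟨(p.2,p.2), le_refl _⟩ : Y X)).1.1.1 =
            ((⟨(p.1,p.1), le_refl _⟩ : Y X), (⟨(p.2,p.2), le_refl _⟩ : Y X)).1.1.2 ∧
          ((⟨(p.1,p.1), le_refl _⟩ : Y X), (⟨(p.2,p.2), le_refl _⟩ : Y X)).2.1.1 =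
            ((⟨(p.1,p.1), le_refl _⟩ : Y X), (⟨(p.2,p.2), le_refl _⟩ : Y X)).2.1.2
        then w ((⟨(p.1,p.1), le_refl _⟩ : Y X), (⟨(p.2,p.2), le_refl _⟩ : Y X)) else 0)
      = lam r A B C D p.1 p.1 p.2 p.2 := by
    intro p _
    rw [if_pos ⟨rfl, rfl⟩, lam_eval r hAB hCD (le_refl _) (le_refl _)]
  rw [Finset.sum_congr rfl h2] at h0
  rw [h0, ← ite_and_mul_one]

end Chunk1
section Chunk2
set_option linter.unusedSectionVars false
set_option maxHeartbeats 1000000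

variable {K X : Type} [Field K] [PartialOrder X] [DecidableEq X]
  [@DecidableRel X X (· ≤ ·)] [LocallyFiniteOrder X]

lemma blk_eval (P : Y X × Y X) (Q : (Y X × Y X) × (Y X × Y X)) :
    (∑ x ∈ (Finset.Icc P.1.1.1 P.1.1.2).attach, ∑ y ∈ (Finset.Icc P.2.1.1 P.2.1.2).attach,
      single ((⟨(P.1.1.1, x.1), (Finset.mem_Icc.mp x.2).1⟩,
               ⟨(P.2.1.1, y.1), (Finset.mem_Icc.mp y.2).1⟩),
              (⟨(x.1, P.1.1.2), (Finset.mem_Icc.mp x.2).2⟩,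
               ⟨(y.1, P.2.1.2), (Finset.mem_Icc.mp y.2).2⟩)) (1:K)) Q
    = if (P.1.1.1 = Q.1.1.1.1 ∧ Q.1.1.1.2 = Q.2.1.1.1 ∧ P.1.1.2 = Q.2.1.1.2
        ∧ P.2.1.1 = Q.1.2.1.1 ∧ Q.1.2.1.2 = Q.2.2.1.1 ∧ P.2.1.2 = Q.2.2.1.2
        ∧ P.1.1.1 ≤ Q.1.1.1.2 ∧ Q.1.1.1.2 ≤ P.1.1.2 ∧ P.2.1.1 ≤ Q.1.2.1.2 ∧ Q.1.2.1.2 ≤ P.2.1.2)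
      then 1 else 0 := by
  rw [Finsupp.finset_sum_apply]
  by_cases hc : (P.1.1.1 = Q.1.1.1.1 ∧ Q.1.1.1.2 = Q.2.1.1.1 ∧ P.1.1.2 = Q.2.1.1.2
        ∧ P.2.1.1 = Q.1.2.1.1 ∧ Q.1.2.1.2 = Q.2.2.1.1 ∧ P.2.1.2 = Q.2.2.1.2
        ∧ P.1.1.1 ≤ Q.1.1.1.2 ∧ Q.1.1.1.2 ≤ P.1.1.2 ∧ P.2.1.1 ≤ Q.1.2.1.2 ∧ Q.1.2.1.2 ≤ P.2.1.2)
  · obtain ⟨c1, c2, c3, c4, c5, c6, m1, m2, m3, m4⟩ := hc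
    rw [if_pos ⟨c1, c2, c3, c4, c5, c6, m1, m2, m3, m4⟩]
    have hx0 : Q.1.1.1.2 ∈ Finset.Icc P.1.1.1 P.1.1.2 := Finset.mem_Icc.mpr ⟨m1, m2⟩
    have hy0 : Q.1.2.1.2 ∈ Finset.Icc P.2.1.1 P.2.1.2 := Finset.mem_Icc.mpr ⟨m3, m4⟩
    rw [Finset.sum_eq_single_of_mem (⟨Q.1.1.1.2, hx0⟩ : {z // z ∈ Finset.Icc P.1.1.1 P.1.1.2})
        (Finset.mem_attach _ _) ?_]
    · rw [Finsupp.finset_sum_apply]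
      rw [Finset.sum_eq_single_of_mem (⟨Q.1.2.1.2, hy0⟩ : {z // z ∈ Finset.Icc P.2.1.1 P.2.1.2})
          (Finset.mem_attach _ _) ?_]
      · rw [Finsupp.single_apply, if_pos]
        refine Prod.ext (Prod.ext (Subtype.ext (Prod.ext ?_ ?_)) (Subtype.ext (Prod.ext ?_ ?_)))
          (Prod.ext (Subtype.ext (Prod.ext ?_ ?_)) (Subtype.ext (Prod.ext ?_ ?_))) <;>
          simp [c1, c2, c3, c4, c5, c6]
      · intro y _ hy
        rw [Finsupp.single_apply, if_neg]
        intro he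
        apply hy
        apply Subtype.ext
        have := congrArg (fun z => z.1.2.1.2) he
        simpa using this
    · intro x _ hx
      rw [Finsupp.finset_sum_apply]
      apply Finset.sum_eq_zero
      intro y _
      rw [Finsupp.single_apply, if_neg]
      intro he
      apply hx
      apply Subtype.ext
      have := congrArg (fun z => z.1.1.1.2) he
      simpa using this
  · rw [if_neg hc]
    apply Finset.sum_eq_zero
    intro x _
    rw [Finsupp.finset_sum_apply]
    apply Finset.sum_eq_zero
    intro y _
    rw [Finsupp.single_apply, if_neg]
    intro he
    apply hc
    simp only [Prod.ext_iff, Subtype.ext_iff] at he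
    obtain ⟨⟨⟨e1, e2⟩, ⟨e3, e4⟩⟩, ⟨e5, e6⟩, ⟨e7, e8⟩⟩ := he
    refine ⟨e1, by rw [← e2, e5], e6, e3, by rw [← e4, e7], e8, ?_, ?_, ?_, ?_⟩
    · rw [← e2]; exact (Finset.mem_Icc.mp x.2).1
    · rw [← e2]; exact (Finset.mem_Icc.mp x.2).2
    · rw [← e4]; exact (Finset.mem_Icc.mp y.2).1
    · rw [← e4]; exact (Finset.mem_Icc.mp y.2).2

lemma comul2_apply (v : Inc2 K X) (Q : (Y X × Y X) × (Y X × Y X)) :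
    comul2 v Q
      = if h : (Q.1.1.1.2 = Q.2.1.1.1 ∧ Q.1.2.1.2 = Q.2.2.1.1)
        then v (⟨(Q.1.1.1.1, Q.2.1.1.2), le_trans (h.1 ▸ Q.1.1.2) Q.2.1.2⟩,
                ⟨(Q.1.2.1.1, Q.2.2.1.2), le_trans (h.2 ▸ Q.1.2.2) Q.2.2.2⟩)
        else 0 := by
  have e0 : comul2 v Q = ∑ P ∈ v.support, v P *
      (∑ x ∈ (Finset.Icc P.1.1.1 P.1.1.2).attach, ∑ y ∈ (Finset.Icc P.2.1.1 P.2.1.2).attach,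
        single ((⟨(P.1.1.1, x.1), (Finset.mem_Icc.mp x.2).1⟩,
                 ⟨(P.2.1.1, y.1), (Finset.mem_Icc.mp y.2).1⟩),
                (⟨(x.1, P.1.1.2), (Finset.mem_Icc.mp x.2).2⟩,
                 ⟨(y.1, P.2.1.2), (Finset.mem_Icc.mp y.2).2⟩)) (1:K)) Q := by
    unfold comul2
    exact lsumEval _ v Q
  rw [e0]
  by_cases hg : (Q.1.1.1.2 = Q.2.1.1.1 ∧ Q.1.2.1.2 = Q.2.2.1.1)
  · rw [dif_pos hg]
    set g0 : Y X × Y X := (⟨(Q.1.1.1.1, Q.2.1.1.2), le_trans (hg.1 ▸ Q.1.1.2) Q.2.1.2⟩,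
                ⟨(Q.1.2.1.1, Q.2.2.1.2), le_trans (hg.2 ▸ Q.1.2.2) Q.2.2.2⟩) with hg0
    have hcong : ∀ P ∈ v.support, v P *
        (∑ x ∈ (Finset.Icc P.1.1.1 P.1.1.2).attach, ∑ y ∈ (Finset.Icc P.2.1.1 P.2.1.2).attach,
          single ((⟨(P.1.1.1, x.1), (Finset.mem_Icc.mp x.2).1⟩,
                   ⟨(P.2.1.1, y.1), (Finset.mem_Icc.mp y.2).1⟩),
                  (⟨(x.1, P.1.1.2), (Finset.mem_Icc.mp x.2).2⟩,
                   ⟨(y.1, P.2.1.2), (Finset.mem_Icc.mp y.2).2⟩)) (1:K)) Q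
        = if P = g0 then v P * 1 else 0 := by
      intro P _
      rw [blk_eval]
      by_cases hP : P = g0
      · rw [if_pos hP]
        rw [if_pos]
        subst hP
        exact ⟨rfl, hg.1, rfl, rfl, hg.2, rfl, Q.1.1.2, hg.1 ▸ Q.2.1.2, Q.1.2.2, hg.2 ▸ Q.2.2.2⟩
      · rw [if_neg hP, if_neg, mul_zero]
        intro hcond
        apply hP
        apply Prod.ext <;> apply Subtype.ext <;> apply Prod.ext <;>
          simp [hg0, hcond.1, hcond.2.2.1, hcond.2.2.2.1, hcond.2.2.2.2.2.1]
    rw [Finset.sum_congr rfl hcong, support_sum_point v g0 (fun _ => 1), mul_one]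
  · rw [dif_neg hg]
    apply Finset.sum_eq_zero
    intro P _
    rw [blk_eval, if_neg, mul_zero]
    intro hcond
    exact hg ⟨hcond.2.1, hcond.2.2.2.2.1⟩

lemma op2_eval (u v : Inc2 K X) (Q1 Q2 : Y X × Y X) :
    (u.sum fun p a => v.sum fun q b => single (p,q) (a*b) : Inc4 K X) (Q1,Q2) = u Q1 * v Q2 := by
  rw [Finsupp.sum_apply, Finsupp.sum]
  have inner : ∀ p ∈ u.support, ((v.sum fun q b => single (p,q) (u p * b) : Inc4 K X) (Q1,Q2))
      = if p = Q1 then u p * v Q2 else 0 := by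
    intro p _
    rw [Finsupp.sum_apply, Finsupp.sum]
    have e1 : ∀ q ∈ v.support, ((single (p,q) (u p * v q) : Inc4 K X) (Q1,Q2))
        = if q = Q2 then (if p = Q1 then u p * v q else 0) else 0 := by
      intro q _
      rw [Finsupp.single_apply]
      by_cases h1 : p = Q1 <;> by_cases h2 : q = Q2 <;> simp [h1, h2, Prod.ext_iff]
    rw [Finset.sum_congr rfl e1, Finset.sum_ite_eq' v.support Q2]
    by_cases hq : Q2 ∈ v.support
    · rw [if_pos hq]
    · rw [if_neg hq, Finsupp.notMem_support_iff.mp hq]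
      by_cases h1 : p = Q1 <;> simp [h1]
  rw [Finset.sum_congr rfl inner, Finset.sum_ite_eq' u.support Q1]
  by_cases hp : Q1 ∈ u.support
  · rw [if_pos hp]
  · rw [if_neg hp, Finsupp.notMem_support_iff.mp hp, zero_mul]

lemma tmap_single_eval (r s : Inc2 K X →ₗ[K] Inc2 K X) (P : (Y X × Y X) × (Y X × Y X))
    (Q1 Q2 : Y X × Y X) :
    tmap r s (single P (1:K)) (Q1, Q2) = r (single P.1 1) Q1 * s (single P.2 1) Q2 := by
  unfold tmap
  rw [Finsupp.lsum_single, LinearMap.toSpanSingleton_apply, one_smul]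
  exact op2_eval _ _ _ _

/-- The master comultiplication coefficient identity. -/
lemma comult_coeff {r : Inc2 K X →ₗ[K] Inc2 K X} (hca : IsCoalgAuto r)
    {A B C D E1 F1 G1 H1 E2 F2 G2 H2 : X}
    (hAB : A ≤ B) (hCD : C ≤ D) (h11 : E1 ≤ F1) (h12 : G1 ≤ H1) (h21 : E2 ≤ F2) (h22 : G2 ≤ H2) :
    (if (F1 = E2 ∧ H1 = G2) then lam r A B C D E1 F2 G1 H2 else 0)
      = ∑ x ∈ Finset.Icc A B, ∑ y ∈ Finset.Icc C D,
          lam r A x C y E1 F1 G1 H1 * lam r x B y D E2 F2 G2 H2 := by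
  have h0 := congrArg (fun (φ : Inc2 K X →ₗ[K] Inc4 K X) =>
      φ (single ((⟨(A,B),hAB⟩ : Y X), (⟨(C,D),hCD⟩ : Y X)) 1)
        (((⟨(E1,F1),h11⟩ : Y X), (⟨(G1,H1),h12⟩ : Y X)),
         ((⟨(E2,F2),h21⟩ : Y X), (⟨(G2,H2),h22⟩ : Y X)))) hca.2.1
  simp only [LinearMap.comp_apply] at h0
  rw [comul2_apply] at h0
  -- right side of h0
  have hcs : comul2 (single ((⟨(A,B),hAB⟩ : Y X), (⟨(C,D),hCD⟩ : Y X)) (1:K))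
      = ∑ x ∈ (Finset.Icc A B).attach, ∑ y ∈ (Finset.Icc C D).attach,
          single ((((⟨(A, x.1), (Finset.mem_Icc.mp x.2).1⟩ : Y X),
                   (⟨(C, y.1), (Finset.mem_Icc.mp y.2).1⟩ : Y X))),
                  (((⟨(x.1, B), (Finset.mem_Icc.mp x.2).2⟩ : Y X),
                   (⟨(y.1, D), (Finset.mem_Icc.mp y.2).2⟩ : Y X)))) (1:K) := by
    unfold comul2
    rw [Finsupp.lsum_single, LinearMap.toSpanSingleton_apply, one_smul]
  rw [hcs, map_sum] at h0
  simp only [map_sum] at h0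
  rw [Finsupp.finset_sum_apply] at h0
  have hterm : ∀ x ∈ (Finset.Icc A B).attach,
      (∑ y ∈ (Finset.Icc C D).attach, tmap r r (single ((((⟨(A, x.1), (Finset.mem_Icc.mp x.2).1⟩ : Y X),
                   (⟨(C, y.1), (Finset.mem_Icc.mp y.2).1⟩ : Y X))),
                  (((⟨(x.1, B), (Finset.mem_Icc.mp x.2).2⟩ : Y X),
                   (⟨(y.1, D), (Finset.mem_Icc.mp y.2).2⟩ : Y X)))) (1:K)))
        (((⟨(E1,F1),h11⟩ : Y X), (⟨(G1,H1),h12⟩ : Y X)),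
         ((⟨(E2,F2),h21⟩ : Y X), (⟨(G2,H2),h22⟩ : Y X)))
      = ∑ y ∈ Finset.Icc C D, lam r A x.1 C y E1 F1 G1 H1 * lam r x.1 B y D E2 F2 G2 H2 := by
    intro x _
    rw [Finsupp.finset_sum_apply]
    rw [show (∑ y ∈ (Finset.Icc C D).attach, (tmap r r (single ((((⟨(A, x.1), (Finset.mem_Icc.mp x.2).1⟩ : Y X),
                   (⟨(C, y.1), (Finset.mem_Icc.mp y.2).1⟩ : Y X))),
                  (((⟨(x.1, B), (Finset.mem_Icc.mp x.2).2⟩ : Y X),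
                   (⟨(y.1, D), (Finset.mem_Icc.mp y.2).2⟩ : Y X)))) (1:K)))
        (((⟨(E1,F1),h11⟩ : Y X), (⟨(G1,H1),h12⟩ : Y X)),
         ((⟨(E2,F2),h21⟩ : Y X), (⟨(G2,H2),h22⟩ : Y X))))
      = ∑ y ∈ (Finset.Icc C D).attach, lam r A x.1 C y.1 E1 F1 G1 H1 * lam r x.1 B y.1 D E2 F2 G2 H2
      from Finset.sum_congr rfl fun y _ => by
        rw [tmap_single_eval]
        rw [lam_eval r (Finset.mem_Icc.mp x.2).1 (Finset.mem_Icc.mp y.2).1 h11 h12,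
            lam_eval r (Finset.mem_Icc.mp x.2).2 (Finset.mem_Icc.mp y.2).2 h21 h22]]
    exact Finset.sum_attach _ (fun m => lam r A x.1 C m E1 F1 G1 H1 * lam r x.1 B m D E2 F2 G2 H2)
  rw [Finset.sum_congr rfl hterm] at h0
  rw [Finset.sum_attach _ (fun m => ∑ y ∈ Finset.Icc C D,
      lam r A m C y E1 F1 G1 H1 * lam r m B y D E2 F2 G2 H2)] at h0
  rw [← h0]
  by_cases hg : (F1 = E2 ∧ H1 = G2)
  · rw [if_pos hg, dif_pos hg,
        lam_eval r hAB hCD (le_trans (le_trans h11 (le_of_eq hg.1)) h21)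
          (le_trans (le_trans h12 (le_of_eq hg.2)) h22)]
  · rw [if_neg hg, dif_neg hg]

end Chunk2
section Chunk3
set_option linter.unusedSectionVars false
set_option maxHeartbeats 1000000

variable {K X : Type} [Field K] [PartialOrder X] [DecidableEq X]
  [@DecidableRel X X (· ≤ ·)] [LocallyFiniteOrder X]
variable {r : Inc2 K X →ₗ[K] Inc2 K X} {lt rt : X → X → X}

lemma icc_subset_left {a b x : X} (hx : x ∈ Finset.Icc a b) :
    Finset.Icc a x ⊆ Finset.Icc a b := fun z hz => Finset.mem_Icc.mpr
  ⟨(Finset.mem_Icc.mp hz).1, le_trans (Finset.mem_Icc.mp hz).2 (Finset.mem_Icc.mp hx).2⟩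

lemma icc_subset_right {a b x : X} (hx : x ∈ Finset.Icc a b) :
    Finset.Icc x b ⊆ Finset.Icc a b := fun z hz => Finset.mem_Icc.mpr
  ⟨le_trans (Finset.mem_Icc.mp hx).1 (Finset.mem_Icc.mp hz).1, (Finset.mem_Icc.mp hz).2⟩

lemma gamma_supp_aux (hca : IsCoalgAuto r) (hind : Induces r lt rt) :
    ∀ n : ℕ, ∀ a b c d E G : X, a ≤ b → c ≤ d →
      (Finset.Icc a b).card + (Finset.Icc c d).card ≤ n →
      lam r a b c d E E G G ≠ 0 →
      ∃ x ∈ Finset.Icc a b, ∃ w ∈ Finset.Icc c d, E = lt x w ∧ G = rt x w := by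
  intro n
  induction n with
  | zero =>
    intro a b c d E G ha hc hcard _
    exfalso
    have h1 : 0 < (Finset.Icc a b).card :=
      Finset.card_pos.mpr ⟨a, Finset.mem_Icc.mpr ⟨le_rfl, ha⟩⟩
    omega
  | succ n ih =>
    intro a b c d E G ha hc hcard hne
    by_contra hex
    apply hne
    have hid := comult_coeff (E1 := E) (F1 := E) (G1 := G) (H1 := G)
      (E2 := E) (F2 := E) (G2 := G) (H2 := G) hca ha hc le_rfl le_rfl le_rfl le_rfl
    rw [if_pos ⟨rfl, rfl⟩] at hid
    rw [hid]
    apply Finset.sum_eq_zero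
    intro x hx
    apply Finset.sum_eq_zero
    intro y hy
    by_cases hbd : x = b ∧ y = d
    · apply mul_eq_zero_of_right
      by_contra h2
      rw [hbd.1, hbd.2, lam_ind hind] at h2
      by_cases hcnd : (E = lt b d ∧ E = lt b d ∧ G = rt b d ∧ G = rt b d)
      · exact hex ⟨b, Finset.mem_Icc.mpr ⟨ha, le_rfl⟩, d, Finset.mem_Icc.mpr ⟨hc, le_rfl⟩,
          hcnd.1, hcnd.2.2.1⟩
      · rw [if_neg hcnd] at h2; exact h2 rfl
    · apply mul_eq_zero_of_left
      by_contra h2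
      have hsub1 := icc_subset_left hx
      have hsub2 := icc_subset_left hy
      have hcard' : (Finset.Icc a x).card + (Finset.Icc c y).card ≤ n := by
        have h1 : (Finset.Icc a x).card ≤ (Finset.Icc a b).card := Finset.card_le_card hsub1
        have h2' : (Finset.Icc c y).card ≤ (Finset.Icc c d).card := Finset.card_le_card hsub2
        rcases not_and_or.mp hbd with hxb | hyd
        · have hss : Finset.Icc a x ⊂ Finset.Icc a b := by
            refine ⟨hsub1, fun hsup => hxb ?_⟩
            have hb := hsup (Finset.mem_Icc.mpr ⟨ha, le_rfl⟩)
            exact le_antisymm (Finset.mem_Icc.mp hx).2 (Finset.mem_Icc.mp hb).2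
          have := Finset.card_lt_card hss
          omega
        · have hss : Finset.Icc c y ⊂ Finset.Icc c d := by
            refine ⟨hsub2, fun hsup => hyd ?_⟩
            have hd := hsup (Finset.mem_Icc.mpr ⟨hc, le_rfl⟩)
            exact le_antisymm (Finset.mem_Icc.mp hy).2 (Finset.mem_Icc.mp hd).2
          have := Finset.card_lt_card hss
          omega
      obtain ⟨x', hx', w', hw', hE, hG⟩ :=
        ih a x c y E G (Finset.mem_Icc.mp hx).1 (Finset.mem_Icc.mp hy).1 hcard' h2
      exact hex ⟨x', hsub1 hx', w', hsub2 hw', hE, hG⟩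

lemma gamma_supp (hca : IsCoalgAuto r) (hind : Induces r lt rt)
    {a b c d E G : X} (ha : a ≤ b) (hc : c ≤ d) (hne : lam r a b c d E E G G ≠ 0) :
    ∃ x ∈ Finset.Icc a b, ∃ w ∈ Finset.Icc c d, E = lt x w ∧ G = rt x w :=
  gamma_supp_aux hca hind _ a b c d E G ha hc le_rfl hne

lemma mu_supp (hca : IsCoalgAuto r) (hind : Induces r lt rt)
    {a b c d E F G H : X} (ha : a ≤ b) (hc : c ≤ d) (hEF : E ≤ F) (hGH : G ≤ H)
    (hne : lam r a b c d E F G H ≠ 0) :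
    (∃ x ∈ Finset.Icc a b, ∃ w ∈ Finset.Icc c d, E = lt x w ∧ G = rt x w) ∧
    (∃ x ∈ Finset.Icc a b, ∃ w ∈ Finset.Icc c d, F = lt x w ∧ H = rt x w) := by
  constructor
  · have hid := comult_coeff (E1 := E) (F1 := E) (G1 := G) (H1 := G)
      (E2 := E) (F2 := F) (G2 := G) (H2 := H) hca ha hc le_rfl le_rfl hEF hGH
    rw [if_pos ⟨rfl, rfl⟩] at hid
    rw [hid] at hne
    obtain ⟨x, hx, hne2⟩ := Finset.exists_ne_zero_of_sum_ne_zero hne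
    obtain ⟨y, hy, hne3⟩ := Finset.exists_ne_zero_of_sum_ne_zero hne2
    have h1 : lam r a x c y E E G G ≠ 0 := fun h => hne3 (by rw [h, zero_mul])
    obtain ⟨x', hx', w', hw', hE, hG⟩ :=
      gamma_supp hca hind (Finset.mem_Icc.mp hx).1 (Finset.mem_Icc.mp hy).1 h1
    exact ⟨x', icc_subset_left hx hx', w', icc_subset_left hy hw', hE, hG⟩
  · have hid := comult_coeff (E1 := E) (F1 := F) (G1 := G) (H1 := H)
      (E2 := F) (F2 := F) (G2 := H) (H2 := H) hca ha hc hEF hGH le_rfl le_rfl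
    rw [if_pos ⟨rfl, rfl⟩] at hid
    rw [hid] at hne
    obtain ⟨x, hx, hne2⟩ := Finset.exists_ne_zero_of_sum_ne_zero hne
    obtain ⟨y, hy, hne3⟩ := Finset.exists_ne_zero_of_sum_ne_zero hne2
    have h1 : lam r x b y d F F H H ≠ 0 := fun h => hne3 (by rw [h, mul_zero])
    obtain ⟨x', hx', w', hw', hE, hG⟩ :=
      gamma_supp hca hind (Finset.mem_Icc.mp hx).2 (Finset.mem_Icc.mp hy).2 h1
    exact ⟨x', icc_subset_right hx hx', w', icc_subset_right hy hw', hE, hG⟩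

end Chunk3
section Chunk4
set_option linter.unusedSectionVars false
set_option maxHeartbeats 1000000

variable {K X : Type} [Field K] [PartialOrder X] [DecidableEq X]
  [@DecidableRel X X (· ≤ ·)] [LocallyFiniteOrder X]

/-- the embedding `v ↦ (b,b) ⊗ v`. -/
noncomputable def embB (b : X) : Inc K X →ₗ[K] Inc2 K X :=
  Finsupp.lsum K fun p => LinearMap.toSpanSingleton K _
    (single ((⟨(b,b), le_rfl⟩ : Y X), p) (1:K))

/-- `σ_b := (D ⊗ ε) ∘ r ∘ (v ↦ (b,b) ⊗ v)`. -/
noncomputable def sigB (r : Inc2 K X →ₗ[K] Inc2 K X) (b : X) : Inc K X →ₗ[K] Inc K X :=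
  rcu ∘ₗ r ∘ₗ embB b

lemma rowEval (w : Inc K X) (c0 q s : Y X) :
    (w.sum fun s' a => single ((c0, s')) a : Inc2 K X) (q, s) = if c0 = q then w s else 0 := by
  rw [Finsupp.sum_apply, Finsupp.sum]
  have e : ∀ s' ∈ w.support, ((single ((c0,s')) (w s') : Inc2 K X) (q,s))
      = if s' = s then (if c0 = q then w s' else 0) else 0 := fun s' _ => by
    rw [Finsupp.single_apply]
    by_cases h1 : c0 = q <;> by_cases h2 : s' = s <;> simp [h1, h2, Prod.ext_iff]
  rw [Finset.sum_congr rfl e, Finset.sum_ite_eq' w.support s]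
  by_cases hs : s ∈ w.support
  · rw [if_pos hs]
  · rw [if_neg hs, Finsupp.notMem_support_iff.mp hs]
    by_cases h1 : c0 = q <;> simp [h1]

lemma embB_eval (b : X) (w : Inc K X) (q s : Y X) :
    embB b w (q, s) = if (⟨(b,b), le_rfl⟩ : Y X) = q then w s else 0 := by
  unfold embB
  rw [lsumEval]
  rw [show (∑ p ∈ w.support, w p * (single ((⟨(b,b), le_rfl⟩ : Y X), p) (1:K)) (q,s))
      = ∑ p ∈ w.support, (if p = s then (if (⟨(b,b), le_rfl⟩ : Y X) = q then w p else 0) else 0)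
    from Finset.sum_congr rfl fun p _ => by
      rw [Finsupp.single_apply]
      by_cases h1 : (⟨(b,b), le_rfl⟩ : Y X) = q <;> by_cases h2 : p = s <;>
        simp [h1, h2, Prod.ext_iff]]
  rw [Finset.sum_ite_eq' w.support s]
  by_cases hs : s ∈ w.support
  · rw [if_pos hs]
  · rw [if_neg hs, Finsupp.notMem_support_iff.mp hs]
    by_cases h1 : (⟨(b,b), le_rfl⟩ : Y X) = q <;> simp [h1]

lemma embB_single (b : X) (p : Y X) :
    embB b (single p (1:K)) = single ((⟨(b,b), le_rfl⟩ : Y X), p) (1:K) := by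
  unfold embB
  rw [Finsupp.lsum_single, LinearMap.toSpanSingleton_apply, one_smul]

lemma embB_inj (b : X) : Function.Injective (embB (K := K) b) := by
  intro v v' h
  ext s
  have := congrArg (fun z => z ((⟨(b,b), le_rfl⟩ : Y X), s)) h
  simpa [embB_eval] using this

lemma sigB_single (r : Inc2 K X →ₗ[K] Inc2 K X) (b : X) (p : Y X) :
    sigB r b (single p (1:K)) = rcu (r (single ((⟨(b,b), le_rfl⟩ : Y X), p) (1:K))) := by
  unfold sigB
  rw [LinearMap.comp_apply, LinearMap.comp_apply, embB_single]

/-- evaluation of `ndeg1` on a basis vector. -/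
lemma ndeg1_single_eval (r : Inc2 K X →ₗ[K] Inc2 K X) (P : Y X × Y X) (q s : Y X) :
    (ndeg1 r (single P (1:K))) (q, s)
      = if h : (q.1.1 = P.1.1.1 ∧ P.1.1.1 ≤ q.1.2 ∧ q.1.2 ≤ P.1.1.2)
        then (rcu (r (single ((⟨(q.1.2, P.1.1.2), h.2.2⟩ : Y X), P.2) (1:K)))) s
        else 0 := by
  have e0 : (ndeg1 r (single P (1:K))) (q, s)
      = (∑ x ∈ (Finset.Icc P.1.1.1 P.1.1.2).attach,
          ((rcu ∘ₗ r) (single ((⟨(x.1, P.1.1.2), (Finset.mem_Icc.mp x.2).2⟩ : Y X), P.2) 1)).sum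
            fun s' a => single ((⟨(P.1.1.1, x.1), (Finset.mem_Icc.mp x.2).1⟩ : Y X), s') a) (q, s) := by
    unfold ndeg1
    rw [Finsupp.lsum_single, LinearMap.toSpanSingleton_apply, one_smul]
  rw [e0, Finsupp.finset_sum_apply]
  by_cases hc : (q.1.1 = P.1.1.1 ∧ P.1.1.1 ≤ q.1.2 ∧ q.1.2 ≤ P.1.1.2)
  · rw [dif_pos hc]
    have hx0 : q.1.2 ∈ Finset.Icc P.1.1.1 P.1.1.2 := Finset.mem_Icc.mpr ⟨hc.2.1, hc.2.2⟩
    rw [Finset.sum_eq_single_of_mem (⟨q.1.2, hx0⟩ : {z // z ∈ Finset.Icc P.1.1.1 P.1.1.2})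
        (Finset.mem_attach _ _) ?_]
    · rw [rowEval]
      rw [if_pos (by apply Subtype.ext; apply Prod.ext <;> simp [hc.1.symm])]
      rfl
    · intro x _ hx
      rw [rowEval, if_neg]
      intro he
      apply hx
      apply Subtype.ext
      have := congrArg (fun z : Y X => z.1.2) he
      simpa using this
  · rw [dif_neg hc]
    apply Finset.sum_eq_zero
    intro x _
    rw [rowEval, if_neg]
    intro he
    apply hc
    have h1 := congrArg (fun z : Y X => z.1.1) he
    have h2 := congrArg (fun z : Y X => z.1.2) he
    simp only at h1 h2
    exact ⟨h1.symm, h2 ▸ (Finset.mem_Icc.mp x.2).1, h2 ▸ (Finset.mem_Icc.mp x.2).2⟩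

lemma ndeg1_eval (r : Inc2 K X →ₗ[K] Inc2 K X) (u : Inc2 K X) (pt : Y X × Y X) :
    ndeg1 r u pt = ∑ P ∈ u.support, u P * (ndeg1 r (single P (1:K))) pt := by
  unfold ndeg1
  rw [lsumEval]
  refine Finset.sum_congr rfl fun P _ => ?_
  congr 1
  rw [Finsupp.lsum_single, LinearMap.toSpanSingleton_apply, one_smul]

lemma ndeg1_embB (r : Inc2 K X →ₗ[K] Inc2 K X) (b : X) (v : Inc K X) :
    ndeg1 r (embB b v) = embB b (sigB r b v) := by
  have hext : (ndeg1 r) ∘ₗ (embB b) = (embB b) ∘ₗ (sigB r b) := by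
    apply Finsupp.lhom_ext
    intro p k
    have hsing : ∀ (m : Inc K X →ₗ[K] Inc2 K X) (n : Inc K X →ₗ[K] Inc K X), True := fun _ _ => trivial
    -- reduce to k = 1 by linearity
    have h1 : ((ndeg1 r) ∘ₗ (embB b)) (single p k) = k • ((ndeg1 r) ∘ₗ (embB b)) (single p 1) := by
      rw [← map_smul, Finsupp.smul_single, smul_eq_mul, mul_one]
    have h2 : ((embB b) ∘ₗ (sigB r b)) (single p k) = k • ((embB b) ∘ₗ (sigB r b)) (single p 1) := by
      rw [← map_smul, Finsupp.smul_single, smul_eq_mul, mul_one]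
    rw [h1, h2]
    congr 1
    simp only [LinearMap.comp_apply]
    ext pt
    obtain ⟨q, s⟩ := pt
    rw [embB_single, ndeg1_single_eval, embB_eval]
    by_cases hq : (⟨(b,b), le_rfl⟩ : Y X) = q
    · subst hq
      rw [if_pos rfl]
      rw [dif_pos (⟨rfl, le_rfl, le_rfl⟩ : ((⟨(b,b), le_rfl⟩ : Y X).1.1 = ((⟨(b,b), le_rfl⟩ : Y X), p).1.1.1 ∧ ((⟨(b,b), le_rfl⟩ : Y X), p).1.1.1 ≤ (⟨(b,b), le_rfl⟩ : Y X).1.2 ∧ (⟨(b,b), le_rfl⟩ : Y X).1.2 ≤ ((⟨(b,b), le_rfl⟩ : Y X), p).1.1.2))]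
      rw [sigB_single]
    · rw [if_neg hq, dif_neg]
      intro hcond
      apply hq
      apply Subtype.ext
      apply Prod.ext
      · exact hcond.1.symm
      · exact (le_antisymm hcond.2.2 hcond.2.1).symm
  exact congrArg (fun (φ : Inc K X →ₗ[K] Inc2 K X) => φ v) hext

lemma sigB_inj {r : Inc2 K X →ₗ[K] Inc2 K X} (hnd : NonDeg r) (b : X) :
    Function.Injective (sigB r b) := by
  intro v v' h
  apply embB_inj b
  apply hnd.1.injective
  rw [ndeg1_embB, ndeg1_embB, h]

lemma sigB_surj {r : Inc2 K X →ₗ[K] Inc2 K X} (hnd : NonDeg r) (b : X) :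
    Function.Surjective (sigB r b) := by
  intro w
  obtain ⟨u, hu⟩ := hnd.1.2 (embB b w)
  by_cases hu0 : u = 0
  · refine ⟨0, ?_⟩
    have : embB b w = 0 := by rw [← hu, hu0, map_zero]
    have hw : w = 0 := embB_inj b (by rw [this, map_zero])
    rw [hw, map_zero]
  -- Claim A: all P in u.support have P.1.1.1 = b
  have claimA : ∀ P ∈ u.support, P.1.1.1 = b := by
    intro P0 hP0
    by_contra hne
    set a0 := P0.1.1.1 with ha0
    have hker : ndeg1 r (Finsupp.filter (fun P : Y X × Y X => P.1.1.1 = a0) u) = 0 := by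
      ext pt
      obtain ⟨q, s⟩ := pt
      rw [ndeg1_eval]
      by_cases hqa : q.1.1 = a0
      · have e1 : ∑ P ∈ (Finsupp.filter (fun P : Y X × Y X => P.1.1.1 = a0) u).support,
            (Finsupp.filter (fun P : Y X × Y X => P.1.1.1 = a0) u) P * (ndeg1 r (single P (1:K))) (q,s)
            = ∑ P ∈ u.support, u P * (ndeg1 r (single P (1:K))) (q,s) := by
          rw [Finset.sum_subset (show (Finsupp.filter (fun P : Y X × Y X => P.1.1.1 = a0) u).support ⊆ u.support from by rw [Finsupp.support_filter]; exact Finset.filter_subset _ _)]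
          · refine Finset.sum_congr rfl fun P hP => ?_
            rw [Finsupp.filter_apply]
            by_cases hPa : P.1.1.1 = a0
            · rw [if_pos hPa]
            · rw [if_neg hPa]
              have : (ndeg1 r (single P (1:K))) (q,s) = 0 := by
                rw [ndeg1_single_eval, dif_neg]
                intro hcond
                exact hPa (hqa ▸ hcond.1.symm)
              rw [this, mul_zero, mul_zero]
          · intro P hP hP'
            have : (Finsupp.filter (fun P : Y X × Y X => P.1.1.1 = a0) u) P = 0 :=
              Finsupp.notMem_support_iff.mp hP'
            rw [this, zero_mul]
        rw [e1, ← ndeg1_eval, hu, embB_eval, if_neg]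
        · simp
        · intro he
          apply hne
          have h5 := congrArg (fun z : Y X => z.1.1) he
          simp only at h5
          rw [← hqa, ← h5]
      · apply Finset.sum_eq_zero
        intro P hP
        have hPa : P.1.1.1 = a0 := by
          by_contra h2
          have := Finsupp.filter_apply (fun P : Y X × Y X => P.1.1.1 = a0) u P
          rw [if_neg h2] at this
          exact (Finsupp.mem_support_iff.mp hP) this
        have : (ndeg1 r (single P (1:K))) (q,s) = 0 := by
          rw [ndeg1_single_eval, dif_neg]
          intro hcond
          exact hqa (hPa ▸ hcond.1)
        rw [this, mul_zero]
    have := hnd.1.injective (by rw [hker, map_zero] :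
      ndeg1 r (Finsupp.filter (fun P : Y X × Y X => P.1.1.1 = a0) u) = ndeg1 r 0)
    have hP0z : (Finsupp.filter (fun P : Y X × Y X => P.1.1.1 = a0) u) P0 = 0 := by
      rw [this]; rfl
    rw [Finsupp.filter_apply, if_pos ha0.symm] at hP0z
    exact (Finsupp.mem_support_iff.mp hP0) hP0z
  -- Claim B : all P in u.support have P.1.1.2 = b
  have hBne : (u.support.image (fun P : Y X × Y X => P.1.1.2)).Nonempty :=
    Finset.Nonempty.image (Finsupp.support_nonempty_iff.mpr hu0) _
  obtain ⟨b₀, hb₀, hmax⟩ : ∃ m ∈ u.support.image (fun P : Y X × Y X => P.1.1.2),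
      ∀ x ∈ u.support.image (fun P : Y X × Y X => P.1.1.2), ¬ m < x := by
    obtain ⟨i, hi⟩ := Finset.exists_maximal hBne
    exact ⟨i, hi.1, fun x hx hlt => lt_irrefl _ (lt_of_lt_of_le hlt (hi.2 hx hlt.le))⟩
  obtain ⟨P1, hP1, hP1b⟩ := Finset.mem_image.mp hb₀
  have hbb₀ : b ≤ b₀ := by
    have := P1.1.2
    rw [claimA P1 hP1] at this
    exact hP1b ▸ this
  have claimB1 : b₀ = b := by
    by_contra hne
    set qY : Y X := ⟨(b, b₀), hbb₀⟩ with hqY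
    set S := u.support.filter (fun P : Y X × Y X => P.1 = qY) with hS
    set v₀ : Inc K X := ∑ P ∈ S, single P.2 (u P) with hv₀
    have hsig : ∀ s : Y X, sigB r b₀ v₀ s = (ndeg1 r u) (qY, s) := by
      intro s
      rw [ndeg1_eval]
      have e1 : ∀ P ∈ u.support, u P * (ndeg1 r (single P (1:K))) (qY, s)
          = if P.1 = qY then u P * (sigB r b₀ (single P.2 1)) s else 0 := by
        intro P hP
        rw [ndeg1_single_eval]
        by_cases hcond : (qY.1.1 = P.1.1.1 ∧ P.1.1.1 ≤ qY.1.2 ∧ qY.1.2 ≤ P.1.1.2)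
        · have hPtop : P.1.1.2 = b₀ := by
            have hmem : P.1.1.2 ∈ u.support.image (fun P : Y X × Y X => P.1.1.2) :=
              Finset.mem_image.mpr ⟨P, hP, rfl⟩
            have hle : b₀ ≤ P.1.1.2 := hcond.2.2
            by_contra hne2
            exact hmax _ hmem (lt_of_le_of_ne hle (fun h => hne2 h.symm))
          have hPq : P.1 = qY := by
            apply Subtype.ext
            apply Prod.ext
            · rw [claimA P hP]
            · exact hPtop
          rw [if_pos hPq, dif_pos hcond, sigB_single]
          have heq : (⟨((qY : Y X).1.2, P.1.1.2), hcond.2.2⟩ : Y X) = (⟨(b₀, b₀), le_rfl⟩ : Y X) :=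
            Subtype.ext (Prod.ext rfl hPtop)
          rw [heq]
        · have hPq : ¬ (P.1 = qY) := by
            intro hPq
            apply hcond
            rw [hPq]
            exact ⟨rfl, hbb₀, le_rfl⟩
          rw [if_neg hPq, dif_neg hcond, mul_zero]
      rw [Finset.sum_congr rfl e1, ← Finset.sum_filter, ← hS]
      rw [hv₀, map_sum, Finsupp.finset_sum_apply]
      refine Finset.sum_congr rfl fun P _ => ?_
      have : single P.2 (u P) = u P • single P.2 (1:K) := by
        rw [Finsupp.smul_single, smul_eq_mul, mul_one]
      rw [this, map_smul]
      simp
    have hzero : sigB r b₀ v₀ = 0 := by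
      ext s
      rw [hsig s, hu, embB_eval, if_neg]
      · simp
      · intro he
        apply hne
        have := congrArg (fun z : Y X => z.1.2) he
        simpa using this.symm
    have hv₀0 : v₀ = 0 := sigB_inj hnd b₀ (by rw [hzero, map_zero])
    have hP1S : P1 ∈ S := by
      rw [hS, Finset.mem_filter]
      refine ⟨hP1, ?_⟩
      apply Subtype.ext
      apply Prod.ext
      · exact claimA P1 hP1
      · exact hP1b
    have : v₀ P1.2 = u P1 := by
      rw [hv₀, Finsupp.finset_sum_apply]
      rw [Finset.sum_eq_single_of_mem P1 hP1S]
      · rw [Finsupp.single_eq_same]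
      · intro P hPS hPne
        rw [Finsupp.single_apply, if_neg]
        intro he
        apply hPne
        have h1 : P.1 = qY := (Finset.mem_filter.mp hPS).2
        have h2 : P1.1 = qY := (Finset.mem_filter.mp hP1S).2
        exact Prod.ext (h1.trans h2.symm) he
    rw [hv₀0] at this
    simp only [Finsupp.coe_zero, Pi.zero_apply] at this
    exact (Finsupp.mem_support_iff.mp hP1) this.symm
  have claimB : ∀ P ∈ u.support, P.1 = (⟨(b,b), le_rfl⟩ : Y X) := by
    intro P hP
    have h1 : P.1.1.2 ∈ u.support.image (fun P : Y X × Y X => P.1.1.2) :=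
      Finset.mem_image.mpr ⟨P, hP, rfl⟩
    have h2 : b ≤ P.1.1.2 := by
      have := P.1.2; rw [claimA P hP] at this; exact this
    have h3 : P.1.1.2 = b := by
      by_contra hne
      exact hmax _ h1 (claimB1 ▸ lt_of_le_of_ne h2 (fun h => hne h.symm))
    apply Subtype.ext
    apply Prod.ext
    · exact claimA P hP
    · exact h3
  -- assemble
  set vfin : Inc K X := ∑ P ∈ u.support, single P.2 (u P) with hvfin
  have hemb : embB b vfin = u := by
    ext Q
    rw [hvfin, map_sum, Finsupp.finset_sum_apply]
    have e1 : ∀ P ∈ u.support, (embB b (single P.2 (u P))) Q = if P = Q then u P else 0 := by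
      intro P hP
      have : single P.2 (u P) = u P • single P.2 (1:K) := by
        rw [Finsupp.smul_single, smul_eq_mul, mul_one]
      rw [this, map_smul, embB_single]
      rw [Finsupp.smul_single]
      rw [Finsupp.single_apply]
      have hcond : (((⟨(b,b), le_rfl⟩ : Y X), P.2) = Q) ↔ P = Q := by
        constructor
        · intro he
          rw [← he]
          apply Prod.ext
          · exact claimB P hP
          · rfl
        · intro he
          rw [← he]
          apply Prod.ext
          · exact (claimB P hP).symm
          · rfl
      by_cases h : P = Q
      · rw [if_pos (hcond.mpr h), if_pos h, smul_eq_mul, mul_one]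
      · rw [if_neg (fun hc => h (hcond.mp hc)), if_neg h]
    rw [Finset.sum_congr rfl e1, Finset.sum_ite_eq' u.support Q]
    by_cases hQ : Q ∈ u.support
    · rw [if_pos hQ]
    · rw [if_neg hQ, Finsupp.notMem_support_iff.mp hQ]
  refine ⟨vfin, ?_⟩
  apply embB_inj b
  rw [← ndeg1_embB, hemb, hu]

end Chunk4
section Chunk5
set_option linter.unusedSectionVars false
set_option maxHeartbeats 1000000

variable {K X : Type} [Field K] [PartialOrder X] [DecidableEq X]
  [@DecidableRel X X (· ≤ ·)] [LocallyFiniteOrder X]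

/-- coefficients of an endomorphism of `D`. -/
noncomputable def ScoD (f : Inc K X →ₗ[K] Inc K X) (c d E F : X) : K :=
  if h1 : c ≤ d then if h2 : E ≤ F then
    f (single (⟨(c,d),h1⟩ : Y X) 1) (⟨(E,F),h2⟩ : Y X) else 0 else 0

lemma ScoD_eval (f : Inc K X →ₗ[K] Inc K X) {c d E F : X} (h1 : c ≤ d) (h2 : E ≤ F) :
    ScoD f c d E F = f (single (⟨(c,d),h1⟩ : Y X) 1) (⟨(E,F),h2⟩ : Y X) := by
  unfold ScoD; rw [dif_pos h1, dif_pos h2]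

lemma ScoD_zero (f : Inc K X →ₗ[K] Inc K X) {c d E F : X} (h2 : ¬ E ≤ F) :
    ScoD f c d E F = 0 := by
  unfold ScoD
  by_cases h1 : c ≤ d
  · rw [dif_pos h1, dif_neg h2]
  · rw [dif_neg h1]

lemma rcu_single (Q : Y X × Y X) (k : K) :
    rcu (single Q k) = if Q.2.1.1 = Q.2.1.2 then single Q.1 k else 0 := by
  unfold rcu
  rw [Finsupp.lsum_single, LinearMap.toSpanSingleton_apply]
  by_cases h : Q.2.1.1 = Q.2.1.2
  · rw [if_pos h, if_pos h, Finsupp.smul_single, smul_eq_mul, mul_one]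
  · rw [if_neg h, if_neg h, smul_zero]

lemma rcu_eval (w : Inc2 K X) (s : Y X) :
    rcu w s = ∑ P ∈ w.support, w P * (if (P.2.1.1 = P.2.1.2 ∧ P.1 = s) then 1 else 0) := by
  unfold rcu
  rw [lsumEval]
  refine Finset.sum_congr rfl fun P _ => ?_
  congr 1
  by_cases h1 : P.2.1.1 = P.2.1.2
  · rw [if_pos h1, Finsupp.single_apply]
    by_cases h2 : P.1 = s
    · rw [if_pos h2, if_pos ⟨h1, h2⟩]
    · rw [if_neg h2, if_neg (fun hc => h2 hc.2)]
  · rw [if_neg h1, if_neg (fun hc => h1 hc.1)]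
    rfl

lemma sigB_gl {r : Inc2 K X →ₗ[K] Inc2 K X} {lt rt : X → X → X}
    (hind : Induces r lt rt) (b c : X) :
    sigB r b (single (⟨(c,c), le_rfl⟩ : Y X) 1)
      = single (⟨(lt b c, lt b c), le_rfl⟩ : Y X) 1 := by
  rw [sigB_single, hind b c, rcu_single, if_pos rfl]

lemma SB_sum {r : Inc2 K X →ₗ[K] Inc2 K X} (b : X) {c d E F : X}
    (hcd : c ≤ d) (hEF : E ≤ F) (W : Finset X)
    (hW : ∀ G, lam r b b c d E F G G ≠ 0 → G ∈ W) :
    ScoD (sigB r b) c d E F = ∑ G ∈ W, lam r b b c d E F G G := by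
  rw [ScoD_eval _ hcd hEF, sigB_single, rcu_eval]
  set w := r (single ((⟨(b,b),le_rfl⟩ : Y X), (⟨(c,d),hcd⟩ : Y X)) 1) with hw
  have hlamw : ∀ G : X, lam r b b c d E F G G = w ((⟨(E,F),hEF⟩ : Y X), (⟨(G,G), le_rfl⟩ : Y X)) :=
    fun G => lam_eval r le_rfl hcd hEF le_rfl
  have hcov : ∀ P : Y X × Y X,
      (w P * (if (P.2.1.1 = P.2.1.2 ∧ P.1 = (⟨(E,F),hEF⟩ : Y X)) then 1 else 0)) ≠ 0
      → P ∈ W.image (fun G => ((⟨(E,F),hEF⟩ : Y X), (⟨(G,G), le_rfl⟩ : Y X))) := by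
    intro P hne
    have hd : (P.2.1.1 = P.2.1.2 ∧ P.1 = (⟨(E,F),hEF⟩ : Y X)) := by
      by_contra hq; rw [if_neg hq, mul_zero] at hne; exact hne rfl
    have hPeq : P = ((⟨(E,F),hEF⟩ : Y X), (⟨(P.2.1.1, P.2.1.1), le_rfl⟩ : Y X)) := by
      apply Prod.ext
      · exact hd.2
      · apply Subtype.ext; apply Prod.ext
        · rfl
        · exact hd.1.symm
    refine Finset.mem_image.mpr ⟨P.2.1.1, hW _ ?_, hPeq.symm⟩
    rw [hlamw, ← hPeq]
    intro h0
    rw [if_pos hd, mul_one] at hne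
    exact hne h0
  rw [sum_support_cover w _ _ (fun P hP => by rw [hP, zero_mul]) hcov]
  rw [Finset.sum_image (fun x _ y _ hxy => by
    have := congrArg (fun z : Y X × Y X => z.2.1.1) hxy
    simpa using this)]
  refine Finset.sum_congr rfl fun G _ => ?_
  rw [if_pos ⟨rfl, rfl⟩, mul_one, hlamw]

lemma SB_cov {r : Inc2 K X →ₗ[K] Inc2 K X} {lt rt : X → X → X}
    (hca : IsCoalgAuto r) (hind : Induces r lt rt) (b : X) {c d c0 d0 E F : X}
    (hcd : c ≤ d) (hEF : E ≤ F) (hsub : Finset.Icc c d ⊆ Finset.Icc c0 d0) :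
    ∀ G, lam r b b c d E F G G ≠ 0 → G ∈ (Finset.Icc c0 d0).image (fun z => rt b z) := by
  intro G hne
  obtain ⟨⟨x, hx, w', hw', _, hG⟩, _⟩ := mu_supp hca hind le_rfl hcd hEF le_rfl hne
  have hxb : x = b := le_antisymm (Finset.mem_Icc.mp hx).2 (Finset.mem_Icc.mp hx).1
  exact Finset.mem_image.mpr ⟨w', hsub hw', by rw [hG, hxb]⟩

lemma comult_coeff_left_triv {r : Inc2 K X →ₗ[K] Inc2 K X} (hca : IsCoalgAuto r)
    {b c d E1 F1 G1 H1 E2 F2 G2 H2 : X} (hcd : c ≤ d)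
    (h11 : E1 ≤ F1) (h12 : G1 ≤ H1) (h21 : E2 ≤ F2) (h22 : G2 ≤ H2) :
    (if (F1 = E2 ∧ H1 = G2) then lam r b b c d E1 F2 G1 H2 else 0)
      = ∑ y ∈ Finset.Icc c d, lam r b b c y E1 F1 G1 H1 * lam r b b y d E2 F2 G2 H2 := by
  rw [comult_coeff hca le_rfl hcd h11 h12 h21 h22, Finset.Icc_self, Finset.sum_singleton]

lemma SB_conv {r : Inc2 K X →ₗ[K] Inc2 K X} {lt rt : X → X → X}
    (hca : IsCoalgAuto r) (hind : Induces r lt rt) (b : X)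
    {c d E M M' F : X} (hcd : c ≤ d) (h1 : E ≤ M) (h2 : M' ≤ F) :
    (if M = M' then ScoD (sigB r b) c d E F else 0)
      = ∑ w ∈ Finset.Icc c d, ScoD (sigB r b) c w E M * ScoD (sigB r b) w d M' F := by
  set W := (Finset.Icc c d).image (fun z => rt b z) with hWdef
  have hfac : ∀ w ∈ Finset.Icc c d,
      ScoD (sigB r b) c w E M * ScoD (sigB r b) w d M' F
        = ∑ G1 ∈ W, ∑ G2 ∈ W, lam r b b c w E M G1 G1 * lam r b b w d M' F G2 G2 := by
    intro w hw
    rw [SB_sum b (Finset.mem_Icc.mp hw).1 h1 W (SB_cov hca hind b (Finset.mem_Icc.mp hw).1 h1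
          (icc_subset_left hw)),
        SB_sum b (Finset.mem_Icc.mp hw).2 h2 W (SB_cov hca hind b (Finset.mem_Icc.mp hw).2 h2
          (icc_subset_right hw)),
        Finset.sum_mul_sum]
  rw [Finset.sum_congr rfl hfac, Finset.sum_comm]
  have hswap : ∀ G1 ∈ W, (∑ w ∈ Finset.Icc c d, ∑ G2 ∈ W,
        lam r b b c w E M G1 G1 * lam r b b w d M' F G2 G2)
      = ∑ G2 ∈ W, (if (M = M' ∧ G1 = G2) then lam r b b c d E F G1 G2 else 0) := by
    intro G1 _
    rw [Finset.sum_comm]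
    exact Finset.sum_congr rfl fun G2 _ =>
      (comult_coeff_left_triv hca hcd h1 le_rfl h2 le_rfl).symm
  rw [Finset.sum_congr rfl hswap]
  by_cases hMM : M = M'
  · rw [if_pos hMM]
    have e1 : ∀ G1 ∈ W, (∑ G2 ∈ W, (if (M = M' ∧ G1 = G2) then lam r b b c d E F G1 G2 else 0))
        = lam r b b c d E F G1 G1 := by
      intro G1 hG1
      have e2 : ∀ G2 ∈ W, (if (M = M' ∧ G1 = G2) then lam r b b c d E F G1 G2 else 0)
          = if G2 = G1 then lam r b b c d E F G1 G2 else 0 := by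
        intro G2 _
        by_cases h : G1 = G2
        · rw [if_pos ⟨hMM, h⟩, if_pos h.symm]
        · rw [if_neg (fun hc => h hc.2), if_neg (fun hc => h hc.symm)]
      rw [Finset.sum_congr rfl e2, Finset.sum_ite_eq' W G1, if_pos hG1]
    rw [Finset.sum_congr rfl e1]
    exact SB_sum b hcd (le_trans h1 (hMM ▸ h2)) W (SB_cov hca hind b hcd
      (le_trans h1 (hMM ▸ h2)) (subset_refl _))
  · rw [if_neg hMM]
    symm
    apply Finset.sum_eq_zero
    intro G1 _
    apply Finset.sum_eq_zero
    intro G2 _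
    rw [if_neg (fun hc => hMM hc.1)]

/-! ### Covers -/

def Cov (c d : X) : Prop := c < d ∧ ∀ z, c < z → z < d → False

lemma exists_cov_step {c d : X} (h : c < d) : ∃ m, Cov c m ∧ m ≤ d := by
  obtain ⟨m, hm, hmin⟩ : ∃ m ∈ Finset.Ioc c d, ∀ x ∈ Finset.Ioc c d, ¬ x < m := by
    obtain ⟨i, hi⟩ := Finset.exists_minimal (s := Finset.Ioc c d) ⟨d, Finset.mem_Ioc.mpr ⟨h, le_rfl⟩⟩
    exact ⟨i, hi.1, fun x hx hlt => lt_irrefl _ (lt_of_lt_of_le hlt (hi.2 hx hlt.le))⟩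
  refine ⟨m, ⟨(Finset.mem_Ioc.mp hm).1, ?_⟩, (Finset.mem_Ioc.mp hm).2⟩
  intro z hz1 hz2
  exact hmin z (Finset.mem_Ioc.mpr ⟨hz1, le_trans (le_of_lt hz2) (Finset.mem_Ioc.mp hm).2⟩) hz2

lemma le_induction_cov (P : X → X → Prop) (hrefl : ∀ u, P u u)
    (hstep : ∀ u m v, Cov u m → m ≤ v → P m v → P u v) :
    ∀ u v : X, u ≤ v → P u v := by
  suffices h : ∀ n : ℕ, ∀ u v : X, u ≤ v → (Finset.Icc u v).card ≤ n → P u v by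
    intro u v huv
    exact h (Finset.Icc u v).card u v huv le_rfl
  intro n
  induction n with
  | zero =>
    intro u v huv hcard
    exfalso
    have : 0 < (Finset.Icc u v).card :=
      Finset.card_pos.mpr ⟨u, Finset.mem_Icc.mpr ⟨le_rfl, huv⟩⟩
    omega
  | succ n ih =>
    intro u v huv hcard
    by_cases he : u = v
    · exact he ▸ hrefl u
    · obtain ⟨m, hcov, hmv⟩ := exists_cov_step (lt_of_le_of_ne huv he)
      refine hstep u m v hcov hmv (ih m v hmv ?_)
      have hsub : Finset.Icc m v ⊆ Finset.Icc u v := fun z hz => Finset.mem_Icc.mpr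
        ⟨le_trans (le_of_lt hcov.1) (Finset.mem_Icc.mp hz).1, (Finset.mem_Icc.mp hz).2⟩
      have hss : Finset.Icc m v ⊂ Finset.Icc u v := by
        refine ⟨hsub, fun hsup => ?_⟩
        have := Finset.mem_Icc.mp (hsup (Finset.mem_Icc.mpr ⟨le_rfl, huv⟩))
        exact absurd (lt_of_lt_of_le hcov.1 this.1) (lt_irrefl u)
      have := Finset.card_lt_card hss
      omega

lemma mono_of_cov (T : X → X) (hT : ∀ u v : X, Cov u v → Cov (T u) (T v)) :
    ∀ u v : X, u ≤ v → T u ≤ T v := by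
  refine le_induction_cov (fun u v => T u ≤ T v) (fun u => le_rfl) ?_
  intro u m v hcov _ hP
  exact le_trans (le_of_lt (hT u m hcov).1) hP

lemma const_of_cov (T : X → X → X) (hT : ∀ u v : X, Cov u v → T u = T v) :
    ∀ u v : X, u ≤ v → T u = T v := by
  refine le_induction_cov (fun u v => T u = T v) (fun u => rfl) ?_
  intro u m v hcov _ hP
  rw [hT u m hcov, hP]

/-! ### the generic cover-preservation lemma -/

lemma gen_cov (f : Inc K X →ₗ[K] Inc K X) (φ : X → X)
    (hconv : ∀ (c d E M M' F : X), c ≤ d → E ≤ M → M' ≤ F →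
      (if M = M' then ScoD f c d E F else 0)
        = ∑ w ∈ Finset.Icc c d, ScoD f c w E M * ScoD f w d M' F)
    (hgl : ∀ c, f (single (⟨(c,c),le_rfl⟩ : Y X) 1) = single (⟨(φ c, φ c), le_rfl⟩ : Y X) 1)
    (hf : Function.Injective f) (hφ : Function.Injective φ)
    {c d : X} (hcov : Cov c d) : Cov (φ c) (φ d) := by
  have hcd : c ≤ d := le_of_lt hcov.1
  have hne : c ≠ d := ne_of_lt hcov.1
  have hgl' : ∀ c' E F, ScoD f c' c' E F = if (E = φ c' ∧ F = φ c') then 1 else 0 := by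
    intro c' E F
    by_cases hEF : E ≤ F
    · rw [ScoD_eval f le_rfl hEF, hgl c', Finsupp.single_apply]
      by_cases h : (E = φ c' ∧ F = φ c')
      · rw [if_pos h, if_pos (Subtype.ext (Prod.ext h.1.symm h.2.symm))]
      · rw [if_neg h, if_neg (fun he => h ⟨(congrArg (fun z : Y X => z.1.1) he).symm,
          (congrArg (fun z : Y X => z.1.2) he).symm⟩)]
    · rw [ScoD_zero f hEF, if_neg (fun h => hEF (by rw [h.1, h.2]))]
  have hicc : Finset.Icc c d = {c, d} := by
    ext z
    simp only [Finset.mem_Icc, Finset.mem_insert, Finset.mem_singleton]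
    constructor
    · rintro ⟨h1, h2⟩
      by_cases hz : z = c
      · exact Or.inl hz
      · right
        by_contra hzd
        exact hcov.2 z (lt_of_le_of_ne h1 (Ne.symm hz)) (lt_of_le_of_ne h2 hzd)
    · rintro (rfl | rfl)
      · exact ⟨le_rfl, hcd⟩
      · exact ⟨hcd, le_rfl⟩
  have hpair : ∀ (E M M' F : X), E ≤ M → M' ≤ F →
      (if M = M' then ScoD f c d E F else 0)
        = ScoD f c c E M * ScoD f c d M' F + ScoD f c d E M * ScoD f d d M' F := by
    intro E M M' F h1 h2
    rw [hconv c d E M M' F hcd h1 h2, hicc, Finset.sum_pair hne]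
  have z1 : ∀ E F : X, E ≤ F → E ≠ F → E ≠ φ c → ScoD f c d E F = 0 := by
    intro E F hEF hEF' hEg
    have h0 := hpair E E E F le_rfl hEF
    rw [if_pos rfl, hgl' c, hgl' d, if_neg (fun hc => hEg hc.1),
        if_neg (fun hc => hEF' (hc.1.trans hc.2.symm)), zero_mul, mul_zero, add_zero] at h0
    exact h0
  have z2 : ∀ E F : X, E ≤ F → E ≠ F → F ≠ φ d → ScoD f c d E F = 0 := by
    intro E F hEF hEF' hFh
    have h0 := hpair E F F F hEF le_rfl
    rw [if_pos rfl, hgl' c, hgl' d, if_neg (fun hc => hEF' (hc.1.trans hc.2.symm)),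
        if_neg (fun hc => hFh hc.1), zero_mul, mul_zero, add_zero] at h0
    exact h0
  have z3 : ∀ E : X, E ≠ φ c → E ≠ φ d → ScoD f c d E E = 0 := by
    intro E hEg hEh
    have h0 := hpair E E E E le_rfl le_rfl
    rw [if_pos rfl, hgl' c, hgl' d, if_neg (fun hc => hEg hc.1),
        if_neg (fun hc => hEh hc.1), zero_mul, mul_zero, add_zero] at h0
    exact h0
  have z4 : ∀ M : X, φ c ≤ M → M ≤ φ d → M ≠ φ c → M ≠ φ d → ScoD f c d (φ c) (φ d) = 0 := by
    intro M hgM hMh hMg hMh'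
    have h0 := hpair (φ c) M M (φ d) hgM hMh
    rw [if_pos rfl, hgl' c, hgl' d, if_neg (fun hc => hMg hc.2),
        if_neg (fun hc => hMh' hc.1), zero_mul, mul_zero, add_zero] at h0
    exact h0
  by_contra hncov
  have hsupp : ∀ pt : Y X, pt.1 ≠ (φ c, φ c) → pt.1 ≠ (φ d, φ d) →
      f (single (⟨(c,d), hcd⟩ : Y X) 1) pt = 0 := by
    intro pt hpt1 hpt2
    have hval : f (single (⟨(c,d), hcd⟩ : Y X) 1) pt = ScoD f c d pt.1.1 pt.1.2 := by
      rw [ScoD_eval f hcd pt.2]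
    rw [hval]
    by_cases hEF : pt.1.1 = pt.1.2
    · rw [← hEF]
      exact z3 pt.1.1 (fun h => hpt1 (Prod.ext h (hEF.symm.trans h)))
        (fun h => hpt2 (Prod.ext h (hEF.symm.trans h)))
    · by_cases hEg : pt.1.1 = φ c
      · by_cases hFh : pt.1.2 = φ d
        · have hgF : φ c < φ d := by
            rw [← hEg, ← hFh]
            exact lt_of_le_of_ne pt.2 hEF
          have hz : ∃ z, φ c < z ∧ z < φ d := by
            by_contra hno
            push_neg at hno
            exact hncov ⟨hgF, fun z hz1 hz2 => (hno z hz1) hz2⟩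
          obtain ⟨z, hz1, hz2⟩ := hz
          rw [hEg, hFh]
          exact z4 z (le_of_lt hz1) (le_of_lt hz2) (ne_of_gt hz1) (ne_of_lt hz2)
        · exact z2 pt.1.1 pt.1.2 pt.2 hEF hFh
      · exact z1 pt.1.1 pt.1.2 pt.2 hEF hEg
  set α := f (single (⟨(c,d), hcd⟩ : Y X) 1) (⟨(φ c, φ c), le_rfl⟩ : Y X) with hα
  set β := f (single (⟨(c,d), hcd⟩ : Y X) 1) (⟨(φ d, φ d), le_rfl⟩ : Y X) with hβ
  have hgh : φ c ≠ φ d := fun e => hne (hφ e)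
  have hcombo : single (⟨(c,d),hcd⟩ : Y X) (1:K)
      = α • single (⟨(c,c),le_rfl⟩ : Y X) 1 + β • single (⟨(d,d),le_rfl⟩ : Y X) 1 := by
    apply hf
    rw [map_add, map_smul, map_smul, hgl c, hgl d]
    ext pt
    rw [Finsupp.add_apply, Finsupp.smul_apply, Finsupp.smul_apply,
        Finsupp.single_apply, Finsupp.single_apply]
    by_cases h1 : (⟨(φ c, φ c), le_rfl⟩ : Y X) = pt
    · rw [if_pos h1, if_neg (fun h2 => hgh (by
        have e1 := congrArg (fun z : Y X => z.1.1) (h1.trans h2.symm)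
        simpa using e1))]
      rw [← h1, ← hα]
      simp
    · by_cases h2 : (⟨(φ d, φ d), le_rfl⟩ : Y X) = pt
      · rw [if_pos h2, if_neg h1, ← h2, ← hβ]
        simp
      · rw [if_neg h1, if_neg h2]
        rw [hsupp pt (fun hc => h1 (Subtype.ext hc.symm)) (fun hc => h2 (Subtype.ext hc.symm))]
        simp
  have hL : (single (⟨(c,d),hcd⟩ : Y X) (1:K)) (⟨(c,d),hcd⟩ : Y X) = 1 := Finsupp.single_eq_same
  have hR1 : (single (⟨(c,c),le_rfl⟩ : Y X) (1:K)) (⟨(c,d),hcd⟩ : Y X) = 0 := by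
    rw [Finsupp.single_apply, if_neg]
    intro he
    exact hne (by simpa using congrArg (fun z : Y X => z.1.2) he)
  have hR2 : (single (⟨(d,d),le_rfl⟩ : Y X) (1:K)) (⟨(c,d),hcd⟩ : Y X) = 0 := by
    rw [Finsupp.single_apply, if_neg]
    intro he
    exact hne (by simpa using (congrArg (fun z : Y X => z.1.1) he).symm)
  have hcontra := congrArg (fun z : Inc K X => z (⟨(c,d), hcd⟩ : Y X)) hcombo
  simp only [Finsupp.add_apply, Finsupp.smul_apply, hL, hR1, hR2, smul_zero, add_zero] at hcontra
  exact one_ne_zero hcontra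

end Chunk5
section Chunk6
set_option linter.unusedSectionVars false
set_option maxHeartbeats 1000000

variable {K X : Type} [Field K] [PartialOrder X] [DecidableEq X]
  [@DecidableRel X X (· ≤ ·)] [LocallyFiniteOrder X]

/-- comultiplication of `D` in the free model. -/
noncomputable def comulD : Inc K X →ₗ[K] Inc2 K X :=
  Finsupp.lsum K fun p => LinearMap.toSpanSingleton K _
    (∑ m ∈ (Finset.Icc p.1.1 p.1.2).attach,
      single ((⟨(p.1.1, m.1), (Finset.mem_Icc.mp m.2).1⟩ : Y X),
              (⟨(m.1, p.1.2), (Finset.mem_Icc.mp m.2).2⟩ : Y X)) (1:K))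

noncomputable def opD (u v : Inc K X) : Inc2 K X :=
  u.sum fun p a => v.sum fun q b => single (p,q) (a*b)

noncomputable def tmapD (f g : Inc K X →ₗ[K] Inc K X) : Inc2 K X →ₗ[K] Inc2 K X :=
  Finsupp.lsum K fun pq => LinearMap.toSpanSingleton K _
    (opD (f (single pq.1 1)) (g (single pq.2 1)))

lemma opD_eval (u v : Inc K X) (q1 q2 : Y X) : opD u v (q1, q2) = u q1 * v q2 := by
  unfold opD
  rw [Finsupp.sum_apply, Finsupp.sum]
  have inner : ∀ p ∈ u.support, ((v.sum fun q b => single (p,q) (u p * b) : Inc2 K X) (q1,q2))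
      = if p = q1 then u p * v q2 else 0 := by
    intro p _
    rw [Finsupp.sum_apply, Finsupp.sum]
    have e1 : ∀ q ∈ v.support, ((single ((p,q)) (u p * v q) : Inc2 K X) (q1,q2))
        = if q = q2 then (if p = q1 then u p * v q else 0) else 0 := by
      intro q _
      rw [Finsupp.single_apply]
      by_cases h1 : p = q1 <;> by_cases h2 : q = q2 <;> simp [h1, h2, Prod.ext_iff]
    rw [Finset.sum_congr rfl e1, Finset.sum_ite_eq' v.support q2]
    by_cases hq : q2 ∈ v.support
    · rw [if_pos hq]
    · rw [if_neg hq, Finsupp.notMem_support_iff.mp hq]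
      by_cases h1 : p = q1 <;> simp [h1]
  rw [Finset.sum_congr rfl inner, Finset.sum_ite_eq' u.support q1]
  by_cases hp : q1 ∈ u.support
  · rw [if_pos hp]
  · rw [if_neg hp, Finsupp.notMem_support_iff.mp hp, zero_mul]

lemma apply_eval (f : Inc K X →ₗ[K] Inc K X) (u : Inc K X) (q : Y X) :
    f u q = ∑ p ∈ u.support, u p * f (single p 1) q := by
  conv_lhs => rw [← Finsupp.sum_single u]
  rw [map_finsuppSum, Finsupp.sum_apply, Finsupp.sum]
  refine Finset.sum_congr rfl fun p _ => ?_
  have h : (single p (u p) : Inc K X) = u p • single p 1 := by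
    rw [Finsupp.smul_single, smul_eq_mul, mul_one]
  rw [h, map_smul, Finsupp.smul_apply, smul_eq_mul]

lemma tmapD_eval (f g : Inc K X →ₗ[K] Inc K X) (w : Inc2 K X) (q1 q2 : Y X) :
    tmapD f g w (q1, q2)
      = ∑ P ∈ w.support, w P * (f (single P.1 1) q1 * g (single P.2 1) q2) := by
  unfold tmapD
  rw [lsumEval]
  exact Finset.sum_congr rfl fun P _ => by rw [opD_eval]

lemma tmapD_single (f g : Inc K X →ₗ[K] Inc K X) (P : Y X × Y X) (k : K) :
    tmapD f g (single P k) = k • opD (f (single P.1 1)) (g (single P.2 1)) := by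
  unfold tmapD
  rw [Finsupp.lsum_single, LinearMap.toSpanSingleton_apply]

lemma tmapD_opD (f g : Inc K X →ₗ[K] Inc K X) (u v : Inc K X) :
    tmapD f g (opD u v) = opD (f u) (g v) := by
  ext pt
  obtain ⟨q1, q2⟩ := pt
  rw [tmapD_eval, opD_eval]
  have e0 : ∀ P : Y X × Y X, opD u v P = u P.1 * v P.2 := fun P => opD_eval u v P.1 P.2
  have e1 : ∑ P ∈ (opD u v).support, opD u v P * (f (single P.1 1) q1 * g (single P.2 1) q2)
      = ∑ P ∈ u.support ×ˢ v.support, opD u v P * (f (single P.1 1) q1 * g (single P.2 1) q2) := by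
    apply sum_support_cover
    · intro P hP; rw [hP, zero_mul]
    · intro P hP
      have h2 : opD u v P ≠ 0 := fun h => hP (by rw [h, zero_mul])
      rw [e0] at h2
      exact Finset.mem_product.mpr
        ⟨Finsupp.mem_support_iff.mpr (fun h => h2 (by rw [h, zero_mul])),
         Finsupp.mem_support_iff.mpr (fun h => h2 (by rw [h, mul_zero]))⟩
  rw [e1, Finset.sum_product, apply_eval f u q1, apply_eval g v q2, Finset.sum_mul_sum]
  refine Finset.sum_congr rfl fun p _ => Finset.sum_congr rfl fun q _ => ?_
  rw [e0]
  ring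

lemma opD_single (p q : Y X) :
    opD (single p (1:K)) (single q (1:K)) = single ((p,q)) (1:K) := by
  unfold opD
  rw [Finsupp.sum_single_index, Finsupp.sum_single_index, mul_one]
  · simp
  · simp

lemma tmapD_id : tmapD (LinearMap.id : Inc K X →ₗ[K] Inc K X) LinearMap.id = LinearMap.id := by
  apply Finsupp.lhom_ext
  intro P k
  rw [tmapD_single]
  simp only [LinearMap.id_coe, id_eq]
  rw [opD_single, Finsupp.smul_single, smul_eq_mul, mul_one]

lemma tmapD_comp_apply (f g f' g' : Inc K X →ₗ[K] Inc K X) (w : Inc2 K X) :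
    tmapD f g (tmapD f' g' w) = tmapD (f ∘ₗ f') (g ∘ₗ g') w := by
  have hext : (tmapD f g) ∘ₗ (tmapD f' g') = tmapD (f ∘ₗ f') (g ∘ₗ g') := by
    apply Finsupp.lhom_ext
    intro P k
    rw [LinearMap.comp_apply, tmapD_single, map_smul, tmapD_opD, tmapD_single]
    simp only [LinearMap.comp_apply]
  exact congrArg (fun (φ : Inc2 K X →ₗ[K] Inc2 K X) => φ w) hext

/-! ### evaluation of `comulD` -/

lemma blkD_eval (p : Y X) (Qp : Y X × Y X) :
    (∑ m ∈ (Finset.Icc p.1.1 p.1.2).attach,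
      single ((⟨(p.1.1, m.1), (Finset.mem_Icc.mp m.2).1⟩ : Y X),
              (⟨(m.1, p.1.2), (Finset.mem_Icc.mp m.2).2⟩ : Y X)) (1:K)) Qp
    = if (p.1.1 = Qp.1.1.1 ∧ Qp.1.1.2 = Qp.2.1.1 ∧ p.1.2 = Qp.2.1.2
          ∧ p.1.1 ≤ Qp.1.1.2 ∧ Qp.1.1.2 ≤ p.1.2) then 1 else 0 := by
  rw [Finsupp.finset_sum_apply]
  by_cases hc : (p.1.1 = Qp.1.1.1 ∧ Qp.1.1.2 = Qp.2.1.1 ∧ p.1.2 = Qp.2.1.2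
          ∧ p.1.1 ≤ Qp.1.1.2 ∧ Qp.1.1.2 ≤ p.1.2)
  · obtain ⟨c1, c2, c3, m1, m2⟩ := hc
    rw [if_pos ⟨c1, c2, c3, m1, m2⟩]
    have hx0 : Qp.1.1.2 ∈ Finset.Icc p.1.1 p.1.2 := Finset.mem_Icc.mpr ⟨m1, m2⟩
    rw [Finset.sum_eq_single_of_mem (⟨Qp.1.1.2, hx0⟩ : {z // z ∈ Finset.Icc p.1.1 p.1.2})
        (Finset.mem_attach _ _) ?_]
    · rw [Finsupp.single_apply, if_pos]
      refine Prod.ext (Subtype.ext (Prod.ext ?_ ?_)) (Subtype.ext (Prod.ext ?_ ?_)) <;>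
        simp [c1, c2, c3]
    · intro m _ hm
      rw [Finsupp.single_apply, if_neg]
      intro he
      apply hm
      apply Subtype.ext
      have := congrArg (fun z : Y X × Y X => z.1.1.2) he
      simpa using this
  · rw [if_neg hc]
    apply Finset.sum_eq_zero
    intro m _
    rw [Finsupp.single_apply, if_neg]
    intro he
    apply hc
    simp only [Prod.ext_iff, Subtype.ext_iff] at he
    obtain ⟨⟨e1, e2⟩, ⟨e3, e4⟩⟩ := he
    refine ⟨e1, by rw [← e2, e3], e4, ?_, ?_⟩
    · rw [← e2]; exact (Finset.mem_Icc.mp m.2).1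
    · rw [← e2]; exact (Finset.mem_Icc.mp m.2).2

lemma comulD_apply (v : Inc K X) (Qp : Y X × Y X) :
    comulD v Qp
      = if h : Qp.1.1.2 = Qp.2.1.1
        then v (⟨(Qp.1.1.1, Qp.2.1.2), le_trans (h ▸ Qp.1.2) Qp.2.2⟩ : Y X)
        else 0 := by
  have e0 : comulD v Qp = ∑ p ∈ v.support, v p *
      (∑ m ∈ (Finset.Icc p.1.1 p.1.2).attach,
        single ((⟨(p.1.1, m.1), (Finset.mem_Icc.mp m.2).1⟩ : Y X),
                (⟨(m.1, p.1.2), (Finset.mem_Icc.mp m.2).2⟩ : Y X)) (1:K)) Qp := by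
    unfold comulD
    exact lsumEval _ v Qp
  rw [e0]
  by_cases hg : Qp.1.1.2 = Qp.2.1.1
  · rw [dif_pos hg]
    set g0 : Y X := ⟨(Qp.1.1.1, Qp.2.1.2), le_trans (hg ▸ Qp.1.2) Qp.2.2⟩ with hg0
    have hcong : ∀ p ∈ v.support, v p *
        (∑ m ∈ (Finset.Icc p.1.1 p.1.2).attach,
          single ((⟨(p.1.1, m.1), (Finset.mem_Icc.mp m.2).1⟩ : Y X),
                  (⟨(m.1, p.1.2), (Finset.mem_Icc.mp m.2).2⟩ : Y X)) (1:K)) Qp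
        = if p = g0 then v p * 1 else 0 := by
      intro p _
      rw [blkD_eval]
      by_cases hP : p = g0
      · rw [if_pos hP, if_pos]
        subst hP
        exact ⟨rfl, hg, rfl, Qp.1.2, hg ▸ Qp.2.2⟩
      · rw [if_neg hP, if_neg, mul_zero]
        intro hcond
        exact hP (Subtype.ext (Prod.ext hcond.1 hcond.2.2.1))
    rw [Finset.sum_congr rfl hcong, support_sum_point v g0 (fun _ => 1), mul_one]
  · rw [dif_neg hg]
    apply Finset.sum_eq_zero
    intro p _
    rw [blkD_eval, if_neg, mul_zero]
    intro hcond
    exact hg hcond.2.1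

lemma comulD_single_sum (c d : X) (hcd : c ≤ d) :
    comulD (single (⟨(c,d),hcd⟩ : Y X) (1:K))
      = ∑ m ∈ (Finset.Icc c d).attach,
          single ((⟨(c, m.1), (Finset.mem_Icc.mp m.2).1⟩ : Y X),
                  (⟨(m.1, d), (Finset.mem_Icc.mp m.2).2⟩ : Y X)) (1:K) := by
  unfold comulD
  rw [Finsupp.lsum_single, LinearMap.toSpanSingleton_apply, one_smul]

lemma tmapD_comulD_single_eval (f : Inc K X →ₗ[K] Inc K X) {c d : X} (hcd : c ≤ d)
    {E M M' F : X} (h1 : E ≤ M) (h2 : M' ≤ F) :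
    tmapD f f (comulD (single (⟨(c,d),hcd⟩ : Y X) (1:K)))
        ((⟨(E,M),h1⟩ : Y X), (⟨(M',F),h2⟩ : Y X))
      = ∑ m ∈ Finset.Icc c d, ScoD f c m E M * ScoD f m d M' F := by
  rw [comulD_single_sum c d hcd, map_sum, Finsupp.finset_sum_apply]
  rw [show (∑ m ∈ (Finset.Icc c d).attach, (tmapD f f
        (single ((⟨(c, m.1), (Finset.mem_Icc.mp m.2).1⟩ : Y X),
                 (⟨(m.1, d), (Finset.mem_Icc.mp m.2).2⟩ : Y X)) (1:K)))
        ((⟨(E,M),h1⟩ : Y X), (⟨(M',F),h2⟩ : Y X)))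
      = ∑ m ∈ (Finset.Icc c d).attach, ScoD f c m.1 E M * ScoD f m.1 d M' F from
    Finset.sum_congr rfl fun m _ => by
      rw [tmapD_single, one_smul, opD_eval]
      rw [ScoD_eval f (Finset.mem_Icc.mp m.2).1 h1, ScoD_eval f (Finset.mem_Icc.mp m.2).2 h2]]
  exact Finset.sum_attach _ (fun m => ScoD f c m E M * ScoD f m d M' F)

/-- transfer: convolution identities from a map-level comultiplication identity. -/
lemma conv_of_comulD (f : Inc K X →ₗ[K] Inc K X)
    (hcm : comulD ∘ₗ f = tmapD f f ∘ₗ comulD) :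
    ∀ (c d E M M' F : X), c ≤ d → E ≤ M → M' ≤ F →
      (if M = M' then ScoD f c d E F else 0)
        = ∑ w ∈ Finset.Icc c d, ScoD f c w E M * ScoD f w d M' F := by
  intro c d E M M' F hcd h1 h2
  have h0 := congrArg (fun (φ : Inc K X →ₗ[K] Inc2 K X) =>
    φ (single (⟨(c,d),hcd⟩ : Y X) 1) ((⟨(E,M),h1⟩ : Y X), (⟨(M',F),h2⟩ : Y X))) hcm
  simp only [LinearMap.comp_apply] at h0
  rw [comulD_apply, tmapD_comulD_single_eval f hcd h1 h2] at h0
  rw [← h0]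
  by_cases hMM : M = M'
  · rw [dif_pos hMM, if_pos hMM, ScoD_eval f hcd (le_trans h1 (hMM ▸ h2))]
  · rw [dif_neg hMM, if_neg hMM]

/-- transfer in the other direction. -/
lemma comulD_of_conv (f : Inc K X →ₗ[K] Inc K X)
    (hconv : ∀ (c d E M M' F : X), c ≤ d → E ≤ M → M' ≤ F →
      (if M = M' then ScoD f c d E F else 0)
        = ∑ w ∈ Finset.Icc c d, ScoD f c w E M * ScoD f w d M' F) :
    comulD ∘ₗ f = tmapD f f ∘ₗ comulD := by
  apply Finsupp.lhom_ext
  intro p k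
  have h1 : (comulD ∘ₗ f) (single p k) = k • (comulD ∘ₗ f) (single p 1) := by
    rw [← map_smul, Finsupp.smul_single, smul_eq_mul, mul_one]
  have h2 : (tmapD f f ∘ₗ comulD) (single p k) = k • (tmapD f f ∘ₗ comulD) (single p 1) := by
    rw [← map_smul, Finsupp.smul_single, smul_eq_mul, mul_one]
  rw [h1, h2]
  congr 1
  simp only [LinearMap.comp_apply]
  ext pt
  obtain ⟨q1, q2⟩ := pt
  have hp : p = (⟨(p.1.1, p.1.2), p.2⟩ : Y X) := rfl
  rw [comulD_apply]
  have hq1 : q1 = (⟨(q1.1.1, q1.1.2), q1.2⟩ : Y X) := rfl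
  have hq2 : q2 = (⟨(q2.1.1, q2.1.2), q2.2⟩ : Y X) := rfl
  calc _ = if (q1.1.2 = q2.1.1) then ScoD f p.1.1 p.1.2 q1.1.1 q2.1.2 else 0 := by
        by_cases hg : (q1, q2).1.1.2 = (q1, q2).2.1.1
        · rw [dif_pos hg, if_pos hg, ScoD_eval f p.2 (le_trans (hg ▸ q1.2) q2.2)]
        · rw [dif_neg hg, if_neg hg]
    _ = _ := by
        rw [hconv p.1.1 p.1.2 q1.1.1 q1.1.2 q2.1.1 q2.1.2 p.2 q1.2 q2.2]
        rw [hq1, hq2] at *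
        rw [← tmapD_comulD_single_eval f p.2 q1.2 q2.2]

end Chunk6
section Chunk7
set_option linter.unusedSectionVars false
set_option maxHeartbeats 1000000

variable {K X : Type} [Field K] [PartialOrder X] [DecidableEq X]
  [@DecidableRel X X (· ≤ ·)] [LocallyFiniteOrder X]

lemma gen_order (f : Inc K X →ₗ[K] Inc K X) (T : X → X)
    (hconv : ∀ (c d E M M' F : X), c ≤ d → E ≤ M → M' ≤ F →
      (if M = M' then ScoD f c d E F else 0)
        = ∑ w ∈ Finset.Icc c d, ScoD f c w E M * ScoD f w d M' F)
    (hgl : ∀ c, f (single (⟨(c,c),le_rfl⟩ : Y X) 1) = single (⟨(T c, T c), le_rfl⟩ : Y X) 1)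
    (hfinj : Function.Injective f) (hfsurj : Function.Surjective f)
    (hTbij : Function.Bijective T) :
    (∀ u v : X, u ≤ v ↔ T u ≤ T v) ∧
    (∀ u v : X, u ≤ v → Finset.Icc (T u) (T v) = (Finset.Icc u v).image T) := by
  set e := Equiv.ofBijective T hTbij with he
  set fe := LinearEquiv.ofBijective f ⟨hfinj, hfsurj⟩ with hfe
  set g := fe.symm.toLinearMap with hg
  have hfeapp : ∀ x, fe x = f x := fun x => rfl
  have hfg : ∀ x, f (g x) = x := by
    intro x
    have := fe.apply_symm_apply x
    rw [hfeapp] at this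
    exact this
  have hgf : ∀ x, g (f x) = x := by
    intro x
    have := fe.symm_apply_apply x
    rw [hfeapp] at this  
    exact this
  have heT : ∀ x, (e x : X) = T x := fun x => rfl
  have heTs : ∀ x, T (e.symm x) = x := by
    intro x
    have := e.apply_symm_apply x
    rw [heT] at this
    exact this
  have hesT : ∀ x, e.symm (T x) = x := by
    intro x
    have := e.symm_apply_apply x
    rw [heT] at this
    exact this
  have hcmf : comulD ∘ₗ f = tmapD f f ∘ₗ comulD := comulD_of_conv f hconv
  have hgsig : g ∘ₗ f = LinearMap.id := LinearMap.ext fun x => hgf x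
  have hcmg : comulD ∘ₗ g = tmapD g g ∘ₗ comulD := by
    apply LinearMap.ext
    intro v
    simp only [LinearMap.comp_apply]
    have h1 : tmapD f f (comulD (g v)) = comulD v := by
      have := congrArg (fun (φ : Inc K X →ₗ[K] Inc2 K X) => φ (g v)) hcmf
      simp only [LinearMap.comp_apply] at this
      rw [← this, hfg]
    calc comulD (g v) = tmapD LinearMap.id LinearMap.id (comulD (g v)) := by
          rw [tmapD_id]; rfl
      _ = tmapD (g ∘ₗ f) (g ∘ₗ f) (comulD (g v)) := by rw [hgsig]
      _ = tmapD g g (tmapD f f (comulD (g v))) := (tmapD_comp_apply g g f f _).symm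
      _ = tmapD g g (comulD v) := by rw [h1]
  have hggl : ∀ u, g (single (⟨(u,u),le_rfl⟩ : Y X) 1)
      = single (⟨(e.symm u, e.symm u), le_rfl⟩ : Y X) 1 := by
    intro u
    apply hfinj
    rw [hfg, hgl (e.symm u)]
    rw [show T (e.symm u) = u from heTs u]
  have covT : ∀ c d : X, Cov c d → Cov (T c) (T d) := fun c d hc =>
    gen_cov f T hconv hgl hfinj hTbij.injective hc
  have covT' : ∀ u v : X, Cov u v → Cov (e.symm u) (e.symm v) := fun u v hc =>
    gen_cov g e.symm (conv_of_comulD g hcmg) hggl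
      (fun x y hxy => by
        have : f (g x) = f (g y) := by rw [hxy]
        rw [hfg, hfg] at this; exact this)
      e.symm.injective hc
  have hmono : ∀ u v : X, u ≤ v → T u ≤ T v := mono_of_cov T covT
  have hmono' : ∀ u v : X, u ≤ v → e.symm u ≤ e.symm v := mono_of_cov e.symm covT'
  constructor
  · intro u v
    constructor
    · exact hmono u v
    · intro h
      have := hmono' _ _ h
      rw [hesT, hesT] at this
      exact this
  · intro u v huv
    ext z
    rw [Finset.mem_Icc, Finset.mem_image]
    constructor
    · rintro ⟨h1, h2⟩
      refine ⟨e.symm z, Finset.mem_Icc.mpr ⟨?_, ?_⟩, heTs z⟩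
      · have := hmono' _ _ h1; rw [hesT] at this; exact this
      · have := hmono' _ _ h2; rw [hesT] at this; exact this
    · rintro ⟨k, hk, rfl⟩
      exact ⟨hmono _ _ (Finset.mem_Icc.mp hk).1, hmono _ _ (Finset.mem_Icc.mp hk).2⟩

/-- All the order facts for left translations. -/
lemma L_facts {r : Inc2 K X →ₗ[K] Inc2 K X} {lt rt : X → X → X}
    (hca : IsCoalgAuto r) (hnd : NonDeg r) (hind : Induces r lt rt)
    (hnd0 : NonDeg0 lt rt) (b : X) :
    (∀ u v : X, u ≤ v ↔ lt b u ≤ lt b v) ∧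
    (∀ u v : X, u ≤ v → Finset.Icc (lt b u) (lt b v) = (Finset.Icc u v).image (lt b)) :=
  gen_order (sigB r b) (lt b)
    (fun c d E M M' F hcd h1 h2 => SB_conv hca hind b hcd h1 h2)
    (sigB_gl hind b) (sigB_inj hnd b) (sigB_surj hnd b) (hnd0.1 b)

end Chunk7
section Chunk8
set_option linter.unusedSectionVars false
set_option maxHeartbeats 1000000

variable {K X : Type} [Field K] [PartialOrder X] [DecidableEq X]
  [@DecidableRel X X (· ≤ ·)] [LocallyFiniteOrder X]

noncomputable def embT (c : X) : Inc K X →ₗ[K] Inc2 K X :=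
  Finsupp.lsum K fun p => LinearMap.toSpanSingleton K _
    (single ((p, (⟨(c,c), le_rfl⟩ : Y X))) (1:K))

noncomputable def tauC (r : Inc2 K X →ₗ[K] Inc2 K X) (c : X) : Inc K X →ₗ[K] Inc K X :=
  lcu ∘ₗ r ∘ₗ embT c

lemma rowEval2 (w : Inc K X) (c0 s0 q : Y X) :
    (w.sum fun s' a => single ((s', c0)) a : Inc2 K X) (s0, q) = if c0 = q then w s0 else 0 := by
  rw [Finsupp.sum_apply, Finsupp.sum]
  have e : ∀ s' ∈ w.support, ((single ((s',c0)) (w s') : Inc2 K X) (s0,q))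
      = if s' = s0 then (if c0 = q then w s' else 0) else 0 := fun s' _ => by
    rw [Finsupp.single_apply]
    by_cases h1 : c0 = q <;> by_cases h2 : s' = s0 <;> simp [h1, h2, Prod.ext_iff]
  rw [Finset.sum_congr rfl e, Finset.sum_ite_eq' w.support s0]
  by_cases hs : s0 ∈ w.support
  · rw [if_pos hs]
  · rw [if_neg hs, Finsupp.notMem_support_iff.mp hs]
    by_cases h1 : c0 = q <;> simp [h1]

lemma embT_eval (c : X) (w : Inc K X) (s q : Y X) :
    embT c w (s, q) = if (⟨(c,c), le_rfl⟩ : Y X) = q then w s else 0 := by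
  unfold embT
  rw [lsumEval]
  rw [show (∑ p ∈ w.support, w p * (single ((p, (⟨(c,c), le_rfl⟩ : Y X))) (1:K)) (s,q))
      = ∑ p ∈ w.support, (if p = s then (if (⟨(c,c), le_rfl⟩ : Y X) = q then w p else 0) else 0)
    from Finset.sum_congr rfl fun p _ => by
      rw [Finsupp.single_apply]
      by_cases h1 : (⟨(c,c), le_rfl⟩ : Y X) = q <;> by_cases h2 : p = s <;>
        simp [h1, h2, Prod.ext_iff]]
  rw [Finset.sum_ite_eq' w.support s]
  by_cases hs : s ∈ w.support
  · rw [if_pos hs]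
  · rw [if_neg hs, Finsupp.notMem_support_iff.mp hs]
    by_cases h1 : (⟨(c,c), le_rfl⟩ : Y X) = q <;> simp [h1]

lemma embT_single (c : X) (p : Y X) :
    embT c (single p (1:K)) = single ((p, (⟨(c,c), le_rfl⟩ : Y X))) (1:K) := by
  unfold embT
  rw [Finsupp.lsum_single, LinearMap.toSpanSingleton_apply, one_smul]

lemma embT_inj (c : X) : Function.Injective (embT (K := K) c) := by
  intro v v' h
  ext s
  have := congrArg (fun z => z (s, (⟨(c,c), le_rfl⟩ : Y X))) h
  simpa [embT_eval] using this

lemma tauC_single (r : Inc2 K X →ₗ[K] Inc2 K X) (c : X) (p : Y X) :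
    tauC r c (single p (1:K)) = lcu (r (single ((p, (⟨(c,c), le_rfl⟩ : Y X))) (1:K))) := by
  unfold tauC
  rw [LinearMap.comp_apply, LinearMap.comp_apply, embT_single]

lemma ndeg2_single_eval (r : Inc2 K X →ₗ[K] Inc2 K X) (P : Y X × Y X) (s0 q : Y X) :
    (ndeg2 r (single P (1:K))) (s0, q)
      = if h : (q.1.2 = P.2.1.2 ∧ P.2.1.1 ≤ q.1.1 ∧ q.1.1 ≤ P.2.1.2)
        then (lcu (r (single ((P.1, (⟨(P.2.1.1, q.1.1), h.2.1⟩ : Y X))) (1:K)))) s0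
        else 0 := by
  have e0 : (ndeg2 r (single P (1:K))) (s0, q)
      = (∑ y ∈ (Finset.Icc P.2.1.1 P.2.1.2).attach,
          ((lcu ∘ₗ r) (single ((P.1, (⟨(P.2.1.1, y.1), (Finset.mem_Icc.mp y.2).1⟩ : Y X))) 1)).sum
            fun s a => single ((s, (⟨(y.1, P.2.1.2), (Finset.mem_Icc.mp y.2).2⟩ : Y X))) a) (s0, q) := by
    unfold ndeg2
    rw [Finsupp.lsum_single, LinearMap.toSpanSingleton_apply, one_smul]
  rw [e0, Finsupp.finset_sum_apply]
  by_cases hc : (q.1.2 = P.2.1.2 ∧ P.2.1.1 ≤ q.1.1 ∧ q.1.1 ≤ P.2.1.2)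
  · rw [dif_pos hc]
    have hy0 : q.1.1 ∈ Finset.Icc P.2.1.1 P.2.1.2 := Finset.mem_Icc.mpr ⟨hc.2.1, hc.2.2⟩
    rw [Finset.sum_eq_single_of_mem (⟨q.1.1, hy0⟩ : {z // z ∈ Finset.Icc P.2.1.1 P.2.1.2})
        (Finset.mem_attach _ _) ?_]
    · rw [rowEval2]
      rw [if_pos (by apply Subtype.ext; apply Prod.ext <;> simp [hc.1.symm])]
      rfl
    · intro y _ hy
      rw [rowEval2, if_neg]
      intro he
      apply hy
      apply Subtype.ext
      have := congrArg (fun z : Y X => z.1.1) he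
      simpa using this
  · rw [dif_neg hc]
    apply Finset.sum_eq_zero
    intro y _
    rw [rowEval2, if_neg]
    intro he
    apply hc
    have h1 := congrArg (fun z : Y X => z.1.1) he
    have h2 := congrArg (fun z : Y X => z.1.2) he
    simp only at h1 h2
    exact ⟨h2.symm, h1 ▸ (Finset.mem_Icc.mp y.2).1, h1 ▸ (Finset.mem_Icc.mp y.2).2⟩

lemma ndeg2_eval (r : Inc2 K X →ₗ[K] Inc2 K X) (u : Inc2 K X) (pt : Y X × Y X) :
    ndeg2 r u pt = ∑ P ∈ u.support, u P * (ndeg2 r (single P (1:K))) pt := by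
  unfold ndeg2
  rw [lsumEval]
  refine Finset.sum_congr rfl fun P _ => ?_
  congr 1
  rw [Finsupp.lsum_single, LinearMap.toSpanSingleton_apply, one_smul]

lemma ndeg2_embT (r : Inc2 K X →ₗ[K] Inc2 K X) (c : X) (v : Inc K X) :
    ndeg2 r (embT c v) = embT c (tauC r c v) := by
  have hext : (ndeg2 r) ∘ₗ (embT c) = (embT c) ∘ₗ (tauC r c) := by
    apply Finsupp.lhom_ext
    intro p k
    have h1 : ((ndeg2 r) ∘ₗ (embT c)) (single p k) = k • ((ndeg2 r) ∘ₗ (embT c)) (single p 1) := by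
      rw [← map_smul, Finsupp.smul_single, smul_eq_mul, mul_one]
    have h2 : ((embT c) ∘ₗ (tauC r c)) (single p k) = k • ((embT c) ∘ₗ (tauC r c)) (single p 1) := by
      rw [← map_smul, Finsupp.smul_single, smul_eq_mul, mul_one]
    rw [h1, h2]
    congr 1
    simp only [LinearMap.comp_apply]
    ext pt
    obtain ⟨s, q⟩ := pt
    rw [embT_single, ndeg2_single_eval, embT_eval]
    by_cases hq : (⟨(c,c), le_rfl⟩ : Y X) = q
    · subst hq
      rw [if_pos rfl]
      rw [dif_pos (⟨rfl, le_rfl, le_rfl⟩ :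
        ((⟨(c,c), le_rfl⟩ : Y X).1.2 = (p, (⟨(c,c), le_rfl⟩ : Y X)).2.1.2
          ∧ (p, (⟨(c,c), le_rfl⟩ : Y X)).2.1.1 ≤ (⟨(c,c), le_rfl⟩ : Y X).1.1
          ∧ (⟨(c,c), le_rfl⟩ : Y X).1.1 ≤ (p, (⟨(c,c), le_rfl⟩ : Y X)).2.1.2))]
      rw [tauC_single]
    · rw [if_neg hq, dif_neg]
      intro hcond
      apply hq
      apply Subtype.ext
      apply Prod.ext
      · exact (le_antisymm hcond.2.2 hcond.2.1).symm
      · exact hcond.1.symm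
  exact congrArg (fun (φ : Inc K X →ₗ[K] Inc2 K X) => φ v) hext

lemma tauC_inj {r : Inc2 K X →ₗ[K] Inc2 K X} (hnd : NonDeg r) (c : X) :
    Function.Injective (tauC r c) := by
  intro v v' h
  apply embT_inj c
  apply hnd.2.injective
  rw [ndeg2_embT, ndeg2_embT, h]

lemma tauC_surj {r : Inc2 K X →ₗ[K] Inc2 K X} (hnd : NonDeg r) (c : X) :
    Function.Surjective (tauC r c) := by
  intro w
  obtain ⟨u, hu⟩ := hnd.2.2 (embT c w)
  by_cases hu0 : u = 0
  · refine ⟨0, ?_⟩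
    have h0 : embT c w = 0 := by rw [← hu, hu0, map_zero]
    have hw : w = 0 := embT_inj c (by rw [h0, map_zero])
    rw [hw, map_zero]
  have claimA : ∀ P ∈ u.support, P.2.1.2 = c := by
    intro P0 hP0
    by_contra hne
    set d0 := P0.2.1.2 with hd0
    have hker : ndeg2 r (Finsupp.filter (fun P : Y X × Y X => P.2.1.2 = d0) u) = 0 := by
      ext pt
      obtain ⟨s, q⟩ := pt
      rw [ndeg2_eval]
      by_cases hqa : q.1.2 = d0
      · have e1 : ∑ P ∈ (Finsupp.filter (fun P : Y X × Y X => P.2.1.2 = d0) u).support,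
            (Finsupp.filter (fun P : Y X × Y X => P.2.1.2 = d0) u) P * (ndeg2 r (single P (1:K))) (s,q)
            = ∑ P ∈ u.support, u P * (ndeg2 r (single P (1:K))) (s,q) := by
          rw [Finset.sum_subset (show (Finsupp.filter (fun P : Y X × Y X => P.2.1.2 = d0) u).support ⊆ u.support from by
            rw [Finsupp.support_filter]; exact Finset.filter_subset _ _)]
          · refine Finset.sum_congr rfl fun P hP => ?_
            rw [Finsupp.filter_apply]
            by_cases hPa : P.2.1.2 = d0
            · rw [if_pos hPa]
            · rw [if_neg hPa]
              have h3 : (ndeg2 r (single P (1:K))) (s,q) = 0 := by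
                rw [ndeg2_single_eval, dif_neg]
                intro hcond
                exact hPa (hqa ▸ hcond.1.symm)
              rw [h3, mul_zero, mul_zero]
          · intro P hP hP'
            have h3 : (Finsupp.filter (fun P : Y X × Y X => P.2.1.2 = d0) u) P = 0 :=
              Finsupp.notMem_support_iff.mp hP'
            rw [h3, zero_mul]
        rw [e1, ← ndeg2_eval, hu, embT_eval, if_neg]
        · simp
        · intro he
          apply hne
          have h5 := congrArg (fun z : Y X => z.1.2) he
          simp only at h5
          rw [h5, hqa]
      · apply Finset.sum_eq_zero
        intro P hP
        have hPa : P.2.1.2 = d0 := by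
          by_contra h2
          have h3 := Finsupp.filter_apply (fun P : Y X × Y X => P.2.1.2 = d0) u P
          rw [if_neg h2] at h3
          exact (Finsupp.mem_support_iff.mp hP) h3
        have h3 : (ndeg2 r (single P (1:K))) (s,q) = 0 := by
          rw [ndeg2_single_eval, dif_neg]
          intro hcond
          exact hqa (hPa ▸ hcond.1)
        rw [h3, mul_zero]
    have h4 := hnd.2.injective (by rw [hker, map_zero] :
      ndeg2 r (Finsupp.filter (fun P : Y X × Y X => P.2.1.2 = d0) u) = ndeg2 r 0)
    have hP0z : (Finsupp.filter (fun P : Y X × Y X => P.2.1.2 = d0) u) P0 = 0 := by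
      rw [h4]; rfl
    rw [Finsupp.filter_apply, if_pos hd0.symm] at hP0z
    exact (Finsupp.mem_support_iff.mp hP0) hP0z
  have hBne : (u.support.image (fun P : Y X × Y X => P.2.1.1)).Nonempty :=
    Finset.Nonempty.image (Finsupp.support_nonempty_iff.mpr hu0) _
  obtain ⟨c₀, hc₀, hmin⟩ : ∃ m ∈ u.support.image (fun P : Y X × Y X => P.2.1.1),
      ∀ x ∈ u.support.image (fun P : Y X × Y X => P.2.1.1), ¬ x < m := by
    obtain ⟨i, hi⟩ := Finset.exists_minimal hBne
    exact ⟨i, hi.1, fun x hx hlt => lt_irrefl _ (lt_of_lt_of_le hlt (hi.2 hx hlt.le))⟩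
  obtain ⟨P1, hP1, hP1c⟩ := Finset.mem_image.mp hc₀
  have hcc₀ : c₀ ≤ c := by
    have h5 := P1.2.2
    rw [claimA P1 hP1] at h5
    exact hP1c ▸ h5
  have claimB1 : c₀ = c := by
    by_contra hne
    set qY : Y X := ⟨(c₀, c), hcc₀⟩ with hqY
    set S := u.support.filter (fun P : Y X × Y X => P.2 = qY) with hS
    set v₀ : Inc K X := ∑ P ∈ S, single P.1 (u P) with hv₀
    have hsig : ∀ s : Y X, tauC r c₀ v₀ s = (ndeg2 r u) (s, qY) := by
      intro s
      rw [ndeg2_eval]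
      have e1 : ∀ P ∈ u.support, u P * (ndeg2 r (single P (1:K))) (s, qY)
          = if P.2 = qY then u P * (tauC r c₀ (single P.1 1)) s else 0 := by
        intro P hP
        rw [ndeg2_single_eval]
        by_cases hcond : (qY.1.2 = P.2.1.2 ∧ P.2.1.1 ≤ qY.1.1 ∧ qY.1.1 ≤ P.2.1.2)
        · have hPbot : P.2.1.1 = c₀ := by
            have hmem : P.2.1.1 ∈ u.support.image (fun P : Y X × Y X => P.2.1.1) :=
              Finset.mem_image.mpr ⟨P, hP, rfl⟩
            have hle : P.2.1.1 ≤ c₀ := hcond.2.1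
            by_contra hne2
            exact hmin _ hmem (lt_of_le_of_ne hle hne2)
          have hPq : P.2 = qY := by
            apply Subtype.ext
            apply Prod.ext
            · exact hPbot
            · rw [claimA P hP]
          rw [if_pos hPq, dif_pos hcond, tauC_single]
          have heq : (⟨(P.2.1.1, (qY : Y X).1.1), hcond.2.1⟩ : Y X) = (⟨(c₀, c₀), le_rfl⟩ : Y X) :=
            Subtype.ext (Prod.ext hPbot rfl)
          rw [heq]
        · have hPq : ¬ (P.2 = qY) := by
            intro hPq
            apply hcond
            rw [hPq]
            exact ⟨rfl, le_rfl, hcc₀⟩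
          rw [if_neg hPq, dif_neg hcond, mul_zero]
      rw [Finset.sum_congr rfl e1, ← Finset.sum_filter, ← hS]
      rw [hv₀, map_sum, Finsupp.finset_sum_apply]
      refine Finset.sum_congr rfl fun P _ => ?_
      have h6 : (single P.1 (u P) : Inc K X) = u P • single P.1 1 := by
        rw [Finsupp.smul_single, smul_eq_mul, mul_one]
      rw [h6, map_smul]
      simp
    have hzero : tauC r c₀ v₀ = 0 := by
      ext s
      rw [hsig s, hu, embT_eval, if_neg]
      · simp
      · intro he
        apply hne
        have h5 := congrArg (fun z : Y X => z.1.1) he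
        simpa using h5.symm
    have hv₀0 : v₀ = 0 := tauC_inj hnd c₀ (by rw [hzero, map_zero])
    have hP1S : P1 ∈ S := by
      rw [hS, Finset.mem_filter]
      refine ⟨hP1, ?_⟩
      apply Subtype.ext
      apply Prod.ext
      · exact hP1c
      · exact claimA P1 hP1
    have h7 : v₀ P1.1 = u P1 := by
      rw [hv₀, Finsupp.finset_sum_apply]
      rw [Finset.sum_eq_single_of_mem P1 hP1S]
      · rw [Finsupp.single_eq_same]
      · intro P hPS hPne
        rw [Finsupp.single_apply, if_neg]
        intro he
        apply hPne
        have h1 : P.2 = qY := (Finset.mem_filter.mp hPS).2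
        have h2 : P1.2 = qY := (Finset.mem_filter.mp hP1S).2
        exact Prod.ext he (h1.trans h2.symm)
    rw [hv₀0] at h7
    simp only [Finsupp.coe_zero, Pi.zero_apply] at h7
    exact (Finsupp.mem_support_iff.mp hP1) h7.symm
  have claimB : ∀ P ∈ u.support, P.2 = (⟨(c,c), le_rfl⟩ : Y X) := by
    intro P hP
    have h1 : P.2.1.1 ∈ u.support.image (fun P : Y X × Y X => P.2.1.1) :=
      Finset.mem_image.mpr ⟨P, hP, rfl⟩
    have h2 : P.2.1.1 ≤ c := by
      have h5 := P.2.2; rw [claimA P hP] at h5; exact h5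
    have h3 : P.2.1.1 = c := by
      by_contra hne
      exact hmin _ h1 (claimB1 ▸ lt_of_le_of_ne h2 hne)
    apply Subtype.ext
    apply Prod.ext
    · exact h3
    · exact claimA P hP
  set vfin : Inc K X := ∑ P ∈ u.support, single P.1 (u P) with hvfin
  have hemb : embT c vfin = u := by
    ext Q
    rw [hvfin, map_sum, Finsupp.finset_sum_apply]
    have e1 : ∀ P ∈ u.support, (embT c (single P.1 (u P))) Q = if P = Q then u P else 0 := by
      intro P hP
      have h6 : (single P.1 (u P) : Inc K X) = u P • single P.1 1 := by
        rw [Finsupp.smul_single, smul_eq_mul, mul_one]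
      rw [h6, map_smul, embT_single, Finsupp.smul_single, Finsupp.single_apply]
      have hcond : ((P.1, (⟨(c,c), le_rfl⟩ : Y X)) = Q) ↔ P = Q := by
        constructor
        · intro he
          rw [← he]
          apply Prod.ext
          · rfl
          · exact claimB P hP
        · intro he
          rw [← he]
          apply Prod.ext
          · rfl
          · exact (claimB P hP).symm
      by_cases h : P = Q
      · rw [if_pos (hcond.mpr h), if_pos h, smul_eq_mul, mul_one]
      · rw [if_neg (fun hc2 => h (hcond.mp hc2)), if_neg h]
    rw [Finset.sum_congr rfl e1, Finset.sum_ite_eq' u.support Q]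
    by_cases hQ : Q ∈ u.support
    · rw [if_pos hQ]
    · rw [if_neg hQ, Finsupp.notMem_support_iff.mp hQ]
  refine ⟨vfin, ?_⟩
  apply embT_inj c
  rw [← ndeg2_embT, hemb, hu]

/-! ### τ coefficients -/

lemma lcu_single (Q : Y X × Y X) (k : K) :
    lcu (single Q k) = if Q.1.1.1 = Q.1.1.2 then single Q.2 k else 0 := by
  unfold lcu
  rw [Finsupp.lsum_single, LinearMap.toSpanSingleton_apply]
  by_cases h : Q.1.1.1 = Q.1.1.2
  · rw [if_pos h, if_pos h, Finsupp.smul_single, smul_eq_mul, mul_one]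
  · rw [if_neg h, if_neg h, smul_zero]

lemma lcu_eval (w : Inc2 K X) (s : Y X) :
    lcu w s = ∑ P ∈ w.support, w P * (if (P.1.1.1 = P.1.1.2 ∧ P.2 = s) then 1 else 0) := by
  unfold lcu
  rw [lsumEval]
  refine Finset.sum_congr rfl fun P _ => ?_
  congr 1
  by_cases h1 : P.1.1.1 = P.1.1.2
  · rw [if_pos h1, Finsupp.single_apply]
    by_cases h2 : P.2 = s
    · rw [if_pos h2, if_pos ⟨h1, h2⟩]
    · rw [if_neg h2, if_neg (fun hc => h2 hc.2)]
  · rw [if_neg h1, if_neg (fun hc => h1 hc.1)]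
    rfl

lemma tauC_gl {r : Inc2 K X →ₗ[K] Inc2 K X} {lt rt : X → X → X}
    (hind : Induces r lt rt) (c a : X) :
    tauC r c (single (⟨(a,a), le_rfl⟩ : Y X) 1)
      = single (⟨(rt a c, rt a c), le_rfl⟩ : Y X) 1 := by
  rw [tauC_single, hind a c, lcu_single, if_pos rfl]

lemma TB_sum {r : Inc2 K X →ₗ[K] Inc2 K X} (c : X) {a b G H : X}
    (hab : a ≤ b) (hGH : G ≤ H) (W : Finset X)
    (hW : ∀ E, lam r a b c c E E G H ≠ 0 → E ∈ W) :
    ScoD (tauC r c) a b G H = ∑ E ∈ W, lam r a b c c E E G H := by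
  rw [ScoD_eval _ hab hGH, tauC_single, lcu_eval]
  set w := r (single ((⟨(a,b),hab⟩ : Y X), (⟨(c,c),le_rfl⟩ : Y X)) 1) with hw
  have hlamw : ∀ E : X, lam r a b c c E E G H = w ((⟨(E,E),le_rfl⟩ : Y X), (⟨(G,H), hGH⟩ : Y X)) :=
    fun E => lam_eval r hab le_rfl le_rfl hGH
  have hcov : ∀ P : Y X × Y X,
      (w P * (if (P.1.1.1 = P.1.1.2 ∧ P.2 = (⟨(G,H),hGH⟩ : Y X)) then 1 else 0)) ≠ 0
      → P ∈ W.image (fun E => ((⟨(E,E), le_rfl⟩ : Y X), (⟨(G,H),hGH⟩ : Y X))) := by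
    intro P hne
    have hd : (P.1.1.1 = P.1.1.2 ∧ P.2 = (⟨(G,H),hGH⟩ : Y X)) := by
      by_contra hq; rw [if_neg hq, mul_zero] at hne; exact hne rfl
    have hPeq : P = ((⟨(P.1.1.1, P.1.1.1), le_rfl⟩ : Y X), (⟨(G,H), hGH⟩ : Y X)) := by
      apply Prod.ext
      · apply Subtype.ext; apply Prod.ext
        · rfl
        · exact hd.1.symm
      · exact hd.2
    refine Finset.mem_image.mpr ⟨P.1.1.1, hW _ ?_, hPeq.symm⟩
    rw [hlamw, ← hPeq]
    intro h0
    rw [if_pos hd, mul_one] at hne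
    exact hne h0
  rw [sum_support_cover w _ _ (fun P hP => by rw [hP, zero_mul]) hcov]
  rw [Finset.sum_image (fun x _ y _ hxy => by
    have := congrArg (fun z : Y X × Y X => z.1.1.1) hxy
    simpa using this)]
  refine Finset.sum_congr rfl fun E _ => ?_
  rw [if_pos ⟨rfl, rfl⟩, mul_one, hlamw]

lemma TB_cov {r : Inc2 K X →ₗ[K] Inc2 K X} {lt rt : X → X → X}
    (hca : IsCoalgAuto r) (hind : Induces r lt rt) (c : X) {a b a0 b0 G H : X}
    (hab : a ≤ b) (hGH : G ≤ H) (hsub : Finset.Icc a b ⊆ Finset.Icc a0 b0) :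
    ∀ E, lam r a b c c E E G H ≠ 0 → E ∈ (Finset.Icc a0 b0).image (fun z => lt z c) := by
  intro E hne
  obtain ⟨⟨x, hx, w', hw', hE, _⟩, _⟩ := mu_supp hca hind hab le_rfl le_rfl hGH hne
  have hwc : w' = c := le_antisymm (Finset.mem_Icc.mp hw').2 (Finset.mem_Icc.mp hw').1
  exact Finset.mem_image.mpr ⟨x, hsub hx, by rw [hE, hwc]⟩

lemma comult_coeff_right_triv {r : Inc2 K X →ₗ[K] Inc2 K X} (hca : IsCoalgAuto r)
    {a b c E1 F1 G1 H1 E2 F2 G2 H2 : X} (hab : a ≤ b)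
    (h11 : E1 ≤ F1) (h12 : G1 ≤ H1) (h21 : E2 ≤ F2) (h22 : G2 ≤ H2) :
    (if (F1 = E2 ∧ H1 = G2) then lam r a b c c E1 F2 G1 H2 else 0)
      = ∑ x ∈ Finset.Icc a b, lam r a x c c E1 F1 G1 H1 * lam r x b c c E2 F2 G2 H2 := by
  rw [comult_coeff hca hab le_rfl h11 h12 h21 h22]
  refine Finset.sum_congr rfl fun x _ => ?_
  rw [Finset.Icc_self, Finset.sum_singleton]

lemma TB_conv {r : Inc2 K X →ₗ[K] Inc2 K X} {lt rt : X → X → X}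
    (hca : IsCoalgAuto r) (hind : Induces r lt rt) (c : X)
    {a b G N N' H : X} (hab : a ≤ b) (h1 : G ≤ N) (h2 : N' ≤ H) :
    (if N = N' then ScoD (tauC r c) a b G H else 0)
      = ∑ x ∈ Finset.Icc a b, ScoD (tauC r c) a x G N * ScoD (tauC r c) x b N' H := by
  set W := (Finset.Icc a b).image (fun z => lt z c) with hWdef
  have hfac : ∀ x ∈ Finset.Icc a b,
      ScoD (tauC r c) a x G N * ScoD (tauC r c) x b N' H
        = ∑ E1 ∈ W, ∑ E2 ∈ W, lam r a x c c E1 E1 G N * lam r x b c c E2 E2 N' H := by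
    intro x hx
    rw [TB_sum c (Finset.mem_Icc.mp hx).1 h1 W (TB_cov hca hind c (Finset.mem_Icc.mp hx).1 h1
          (icc_subset_left hx)),
        TB_sum c (Finset.mem_Icc.mp hx).2 h2 W (TB_cov hca hind c (Finset.mem_Icc.mp hx).2 h2
          (icc_subset_right hx)),
        Finset.sum_mul_sum]
  rw [Finset.sum_congr rfl hfac, Finset.sum_comm]
  have hswap : ∀ E1 ∈ W, (∑ x ∈ Finset.Icc a b, ∑ E2 ∈ W,
        lam r a x c c E1 E1 G N * lam r x b c c E2 E2 N' H)
      = ∑ E2 ∈ W, (if (E1 = E2 ∧ N = N') then lam r a b c c E1 E2 G H else 0) := by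
    intro E1 _
    rw [Finset.sum_comm]
    exact Finset.sum_congr rfl fun E2 _ =>
      (comult_coeff_right_triv hca hab le_rfl h1 le_rfl h2).symm
  rw [Finset.sum_congr rfl hswap]
  by_cases hNN : N = N'
  · rw [if_pos hNN]
    have e1 : ∀ E1 ∈ W, (∑ E2 ∈ W, (if (E1 = E2 ∧ N = N') then lam r a b c c E1 E2 G H else 0))
        = lam r a b c c E1 E1 G H := by
      intro E1 hE1
      have e2 : ∀ E2 ∈ W, (if (E1 = E2 ∧ N = N') then lam r a b c c E1 E2 G H else 0)
          = if E2 = E1 then lam r a b c c E1 E2 G H else 0 := by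
        intro E2 _
        by_cases h : E1 = E2
        · rw [if_pos ⟨h, hNN⟩, if_pos h.symm]
        · rw [if_neg (fun hc => h hc.1), if_neg (fun hc => h hc.symm)]
      rw [Finset.sum_congr rfl e2, Finset.sum_ite_eq' W E1, if_pos hE1]
    rw [Finset.sum_congr rfl e1]
    exact TB_sum c hab (le_trans h1 (hNN ▸ h2)) W (TB_cov hca hind c hab
      (le_trans h1 (hNN ▸ h2)) (subset_refl _))
  · rw [if_neg hNN]
    symm
    apply Finset.sum_eq_zero
    intro E1 _
    apply Finset.sum_eq_zero
    intro E2 _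
    rw [if_neg (fun hc => hNN hc.2)]

/-- All the order facts for right translations. -/
lemma R_facts {r : Inc2 K X →ₗ[K] Inc2 K X} {lt rt : X → X → X}
    (hca : IsCoalgAuto r) (hnd : NonDeg r) (hind : Induces r lt rt)
    (hnd0 : NonDeg0 lt rt) (c : X) :
    (∀ u v : X, u ≤ v ↔ rt u c ≤ rt v c) ∧
    (∀ u v : X, u ≤ v → Finset.Icc (rt u c) (rt v c)
      = (Finset.Icc u v).image (fun z => rt z c)) :=
  gen_order (tauC r c) (fun z => rt z c)
    (fun a b G N N' H hab h1 h2 => TB_conv hca hind c hab h1 h2)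
    (tauC_gl hind c) (tauC_inj hnd c) (tauC_surj hnd c) (hnd0.2 c)

end Chunk8
section Chunk9
set_option linter.unusedSectionVars false
set_option maxHeartbeats 1000000

variable {K X : Type} [Field K] [PartialOrder X] [DecidableEq X]
  [@DecidableRel X X (· ≤ ·)] [LocallyFiniteOrder X]

lemma cov_Icc {a b : X} (hcov : Cov a b) : Finset.Icc a b = {a, b} := by
  ext z
  simp only [Finset.mem_Icc, Finset.mem_insert, Finset.mem_singleton]
  constructor
  · rintro ⟨h1, h2⟩
    by_cases hz : z = a
    · exact Or.inl hz
    · right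
      by_contra hzd
      exact hcov.2 z (lt_of_le_of_ne h1 (Ne.symm hz)) (lt_of_le_of_ne h2 hzd)
  · rintro (rfl | rfl)
    · exact ⟨le_rfl, le_of_lt hcov.1⟩
    · exact ⟨le_of_lt hcov.1, le_rfl⟩

lemma T3L_cov {r : Inc2 K X →ₗ[K] Inc2 K X} {lt rt : X → X → X}
    (hca : IsCoalgAuto r) (hind : Induces r lt rt) (hnd0 : NonDeg0 lt rt)
    {a b : X} (hcov : Cov a b) : lt a = lt b := by
  funext w
  have hab : a ≤ b := le_of_lt hcov.1
  have hne : a ≠ b := ne_of_lt hcov.1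
  have hicc := cov_Icc hcov
  -- the pair-splitting identity
  have hpair : ∀ (E1 F1 G1 H1 E2 F2 G2 H2 : X), E1 ≤ F1 → G1 ≤ H1 → E2 ≤ F2 → G2 ≤ H2 →
      (if (F1 = E2 ∧ H1 = G2) then lam r a b w w E1 F2 G1 H2 else 0)
        = lam r a a w w E1 F1 G1 H1 * lam r a b w w E2 F2 G2 H2
          + lam r a b w w E1 F1 G1 H1 * lam r b b w w E2 F2 G2 H2 := by
    intro E1 F1 G1 H1 E2 F2 G2 H2 h11 h12 h21 h22
    rw [comult_coeff_right_triv hca hab h11 h12 h21 h22, hicc, Finset.sum_pair hne]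
  set p01 := lt a w with hp01
  set p02 := rt a w with hp02
  set p11 := lt b w with hp11
  set p12 := rt b w with hp12
  have hp0212 : p02 ≠ p12 := fun h => hne ((hnd0.2 w).injective h)
  -- (c1) off-diagonal support
  have c1 : ∀ (E F G H : X), E ≤ F → G ≤ H → ¬ (E = F ∧ G = H) →
      lam r a b w w E F G H ≠ 0 → (E = p01 ∧ G = p02) ∧ (F = p11 ∧ H = p12) := by
    intro E F G H hEF hGH hnd' hne'
    constructor
    · have h0 := hpair E E G G E F G H le_rfl le_rfl hEF hGH
      rw [if_pos ⟨rfl, rfl⟩, lam_ind hind, lam_ind hind] at h0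
      by_cases hc2 : (E = p11 ∧ F = p11 ∧ G = p12 ∧ H = p12)
      · exact absurd ⟨hc2.1.trans hc2.2.1.symm, hc2.2.2.1.trans hc2.2.2.2.symm⟩ hnd'
      · rw [if_neg hc2, mul_zero, add_zero] at h0
        by_cases hc1 : (E = p01 ∧ E = p01 ∧ G = p02 ∧ G = p02)
        · exact ⟨hc1.1, hc1.2.2.1⟩
        · rw [if_neg hc1, zero_mul] at h0
          exact absurd h0 hne'
    · have h0 := hpair E F G H F F H H hEF hGH le_rfl le_rfl
      rw [if_pos ⟨rfl, rfl⟩, lam_ind hind, lam_ind hind] at h0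
      by_cases hc1 : (E = p01 ∧ F = p01 ∧ G = p02 ∧ H = p02)
      · exact absurd ⟨hc1.1.trans hc1.2.1.symm, hc1.2.2.1.trans hc1.2.2.2.symm⟩ hnd'
      · rw [if_neg hc1, zero_mul, zero_add] at h0
        by_cases hc2 : (F = p11 ∧ F = p11 ∧ H = p12 ∧ H = p12)
        · exact ⟨hc2.1, hc2.2.2.1⟩
        · rw [if_neg hc2, mul_zero] at h0
          exact absurd h0 hne'
  -- (c2) diagonal support
  have c2 : ∀ (E G : X), lam r a b w w E E G G ≠ 0 →
      (E = p01 ∧ G = p02) ∨ (E = p11 ∧ G = p12) := by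
    intro E G hne'
    have h0 := hpair E E G G E E G G le_rfl le_rfl le_rfl le_rfl
    rw [if_pos ⟨rfl, rfl⟩, lam_ind hind, lam_ind hind] at h0
    by_cases hc1 : (E = p01 ∧ E = p01 ∧ G = p02 ∧ G = p02)
    · exact Or.inl ⟨hc1.1, hc1.2.2.1⟩
    · by_cases hc2 : (E = p11 ∧ E = p11 ∧ G = p12 ∧ G = p12)
      · exact Or.inr ⟨hc2.1, hc2.2.2.1⟩
      · rw [if_neg hc1, if_neg hc2, zero_mul, mul_zero, add_zero] at h0
        exact absurd h0 hne'
  -- (c4): there is a nonzero off-diagonal coefficient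
  have hex : ∃ (E F G H : X), ∃ (hEF : E ≤ F) (hGH : G ≤ H), ¬ (E = F ∧ G = H) ∧
      lam r a b w w E F G H ≠ 0 := by
    by_contra hno
    push_neg at hno
    set ξ := r (single ((⟨(a,b),hab⟩ : Y X), (⟨(w,w),le_rfl⟩ : Y X)) 1) with hξ
    set P0 : Y X × Y X := ((⟨(p01,p01),le_rfl⟩ : Y X), (⟨(p02,p02),le_rfl⟩ : Y X)) with hP0
    set P1 : Y X × Y X := ((⟨(p11,p11),le_rfl⟩ : Y X), (⟨(p12,p12),le_rfl⟩ : Y X)) with hP1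
    have hP01 : P0 ≠ P1 := fun h => hp0212 (by
      have := congrArg (fun z : Y X × Y X => z.2.1.1) h
      simpa using this)
    have hval : ∀ pt : Y X × Y X, ξ pt = lam r a b w w pt.1.1.1 pt.1.1.2 pt.2.1.1 pt.2.1.2 := by
      intro pt
      rw [lam_eval r hab le_rfl pt.1.2 pt.2.2]
    have hsupp : ∀ pt : Y X × Y X, pt ≠ P0 → pt ≠ P1 → ξ pt = 0 := by
      intro pt h1 h2
      rw [hval]
      by_cases hd : (pt.1.1.1 = pt.1.1.2 ∧ pt.2.1.1 = pt.2.1.2)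
      · obtain ⟨hd1, hd2⟩ := hd
        by_contra hz
        rw [← hd1, ← hd2] at hz
        rcases c2 _ _ hz with hc | hc
        · exact h1 (Prod.ext (Subtype.ext (Prod.ext hc.1 (hd1.symm.trans hc.1)))
            (Subtype.ext (Prod.ext hc.2 (hd2.symm.trans hc.2))))
        · exact h2 (Prod.ext (Subtype.ext (Prod.ext hc.1 (hd1.symm.trans hc.1)))
            (Subtype.ext (Prod.ext hc.2 (hd2.symm.trans hc.2))))
      · exact hno _ _ _ _ pt.1.2 pt.2.2 (fun ha hb => hd ⟨ha, hb⟩)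
    set α := ξ P0 with hα
    set β := ξ P1 with hβ
    have hcombo : single ((⟨(a,b),hab⟩ : Y X), (⟨(w,w),le_rfl⟩ : Y X)) (1:K)
        = α • single ((⟨(a,a),le_rfl⟩ : Y X), (⟨(w,w),le_rfl⟩ : Y X)) 1
          + β • single ((⟨(b,b),le_rfl⟩ : Y X), (⟨(w,w),le_rfl⟩ : Y X)) 1 := by
      apply hca.1.1
      rw [map_add, map_smul, map_smul, hind a w, hind b w]
      ext pt
      rw [Finsupp.add_apply, Finsupp.smul_apply, Finsupp.smul_apply,
          Finsupp.single_apply, Finsupp.single_apply]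
      by_cases h1 : P0 = pt
      · rw [if_pos h1, if_neg (fun h2 => hP01 (h1.trans h2.symm)), ← h1]
        simp [hα, hξ]
      · by_cases h2 : P1 = pt
        · rw [if_pos h2, if_neg h1, ← h2]
          simp [hβ, hξ]
        · rw [if_neg h1, if_neg h2,
            hsupp pt (fun hc => h1 hc.symm) (fun hc => h2 hc.symm)]
          simp
    have hcontra := congrArg (fun z : Inc2 K X =>
      z ((⟨(a,b),hab⟩ : Y X), (⟨(w,w),le_rfl⟩ : Y X))) hcombo
    have hL : (single ((⟨(a,b),hab⟩ : Y X), (⟨(w,w),le_rfl⟩ : Y X)) (1:K))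
        ((⟨(a,b),hab⟩ : Y X), (⟨(w,w),le_rfl⟩ : Y X)) = 1 := Finsupp.single_eq_same
    have hR1 : (single ((⟨(a,a),le_rfl⟩ : Y X), (⟨(w,w),le_rfl⟩ : Y X)) (1:K))
        ((⟨(a,b),hab⟩ : Y X), (⟨(w,w),le_rfl⟩ : Y X)) = 0 := by
      rw [Finsupp.single_apply, if_neg]
      intro he
      exact hne (by simpa using congrArg (fun z : Y X × Y X => z.1.1.2) he)
    have hR2 : (single ((⟨(b,b),le_rfl⟩ : Y X), (⟨(w,w),le_rfl⟩ : Y X)) (1:K))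
        ((⟨(a,b),hab⟩ : Y X), (⟨(w,w),le_rfl⟩ : Y X)) = 0 := by
      rw [Finsupp.single_apply, if_neg]
      intro he
      exact hne (by simpa using (congrArg (fun z : Y X × Y X => z.1.1.1) he).symm)
    simp only [Finsupp.add_apply, Finsupp.smul_apply, hL, hR1, hR2, smul_zero, add_zero] at hcontra
    exact one_ne_zero hcontra
  obtain ⟨E, F, G, H, hEF, hGH, hnd', hne'⟩ := hex
  obtain ⟨⟨hE, hG⟩, hF, hH⟩ := c1 E F G H hEF hGH hnd' hne'
  -- (c3): no interior point; apply with (M,N) = (p01, p12)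
  have h0 := hpair E E G H E F H H le_rfl hGH hEF le_rfl
  rw [if_pos ⟨rfl, rfl⟩, lam_ind hind, lam_ind hind] at h0
  -- h0 : lam r a b w w E F G H = [E=p01∧E=p01∧G=p02∧H=p02]*lam r a b w w E F H H
  --       + lam r a b w w E E G H * [E=p11∧F=p11∧H=p12∧H=p12]
  by_cases hc1 : (E = p01 ∧ E = p01 ∧ G = p02 ∧ H = p02)
  · exact absurd (hc1.2.2.2.symm.trans hH) hp0212
  · by_cases hc2 : (E = p11 ∧ F = p11 ∧ H = p12 ∧ H = p12)
    · exact hE.symm.trans hc2.1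
    · rw [if_neg hc1, if_neg hc2, zero_mul, mul_zero, add_zero] at h0
      exact absurd h0 hne'

lemma T3R_cov {r : Inc2 K X →ₗ[K] Inc2 K X} {lt rt : X → X → X}
    (hca : IsCoalgAuto r) (hind : Induces r lt rt) (hnd0 : NonDeg0 lt rt)
    {c d : X} (hcov : Cov c d) : (fun z => rt z c) = (fun z => rt z d) := by
  funext a
  have hcd : c ≤ d := le_of_lt hcov.1
  have hne : c ≠ d := ne_of_lt hcov.1
  have hicc := cov_Icc hcov
  have hpair : ∀ (E1 F1 G1 H1 E2 F2 G2 H2 : X), E1 ≤ F1 → G1 ≤ H1 → E2 ≤ F2 → G2 ≤ H2 →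
      (if (F1 = E2 ∧ H1 = G2) then lam r a a c d E1 F2 G1 H2 else 0)
        = lam r a a c c E1 F1 G1 H1 * lam r a a c d E2 F2 G2 H2
          + lam r a a c d E1 F1 G1 H1 * lam r a a d d E2 F2 G2 H2 := by
    intro E1 F1 G1 H1 E2 F2 G2 H2 h11 h12 h21 h22
    rw [comult_coeff_left_triv hca hcd h11 h12 h21 h22, hicc, Finset.sum_pair hne]
  set p01 := lt a c with hp01
  set p02 := rt a c with hp02
  set p11 := lt a d with hp11
  set p12 := rt a d with hp12
  have hp0111 : p01 ≠ p11 := fun h => hne ((hnd0.1 a).injective h)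
  have c1 : ∀ (E F G H : X), E ≤ F → G ≤ H → ¬ (E = F ∧ G = H) →
      lam r a a c d E F G H ≠ 0 → (E = p01 ∧ G = p02) ∧ (F = p11 ∧ H = p12) := by
    intro E F G H hEF hGH hnd' hne'
    constructor
    · have h0 := hpair E E G G E F G H le_rfl le_rfl hEF hGH
      rw [if_pos ⟨rfl, rfl⟩, lam_ind hind, lam_ind hind] at h0
      by_cases hc2 : (E = p11 ∧ F = p11 ∧ G = p12 ∧ H = p12)
      · exact absurd ⟨hc2.1.trans hc2.2.1.symm, hc2.2.2.1.trans hc2.2.2.2.symm⟩ hnd'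
      · rw [if_neg hc2, mul_zero, add_zero] at h0
        by_cases hc1 : (E = p01 ∧ E = p01 ∧ G = p02 ∧ G = p02)
        · exact ⟨hc1.1, hc1.2.2.1⟩
        · rw [if_neg hc1, zero_mul] at h0
          exact absurd h0 hne'
    · have h0 := hpair E F G H F F H H hEF hGH le_rfl le_rfl
      rw [if_pos ⟨rfl, rfl⟩, lam_ind hind, lam_ind hind] at h0
      by_cases hc1 : (E = p01 ∧ F = p01 ∧ G = p02 ∧ H = p02)
      · exact absurd ⟨hc1.1.trans hc1.2.1.symm, hc1.2.2.1.trans hc1.2.2.2.symm⟩ hnd'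
      · rw [if_neg hc1, zero_mul, zero_add] at h0
        by_cases hc2 : (F = p11 ∧ F = p11 ∧ H = p12 ∧ H = p12)
        · exact ⟨hc2.1, hc2.2.2.1⟩
        · rw [if_neg hc2, mul_zero] at h0
          exact absurd h0 hne'
  have c2 : ∀ (E G : X), lam r a a c d E E G G ≠ 0 →
      (E = p01 ∧ G = p02) ∨ (E = p11 ∧ G = p12) := by
    intro E G hne'
    have h0 := hpair E E G G E E G G le_rfl le_rfl le_rfl le_rfl
    rw [if_pos ⟨rfl, rfl⟩, lam_ind hind, lam_ind hind] at h0
    by_cases hc1 : (E = p01 ∧ E = p01 ∧ G = p02 ∧ G = p02)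
    · exact Or.inl ⟨hc1.1, hc1.2.2.1⟩
    · by_cases hc2 : (E = p11 ∧ E = p11 ∧ G = p12 ∧ G = p12)
      · exact Or.inr ⟨hc2.1, hc2.2.2.1⟩
      · rw [if_neg hc1, if_neg hc2, zero_mul, mul_zero, add_zero] at h0
        exact absurd h0 hne'
  have hex : ∃ (E F G H : X), ∃ (hEF : E ≤ F) (hGH : G ≤ H), ¬ (E = F ∧ G = H) ∧
      lam r a a c d E F G H ≠ 0 := by
    by_contra hno
    push_neg at hno
    set ξ := r (single ((⟨(a,a),le_rfl⟩ : Y X), (⟨(c,d),hcd⟩ : Y X)) 1) with hξ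
    set P0 : Y X × Y X := ((⟨(p01,p01),le_rfl⟩ : Y X), (⟨(p02,p02),le_rfl⟩ : Y X)) with hP0
    set P1 : Y X × Y X := ((⟨(p11,p11),le_rfl⟩ : Y X), (⟨(p12,p12),le_rfl⟩ : Y X)) with hP1
    have hP01 : P0 ≠ P1 := fun h => hp0111 (by
      have := congrArg (fun z : Y X × Y X => z.1.1.1) h
      simpa using this)
    have hval : ∀ pt : Y X × Y X, ξ pt = lam r a a c d pt.1.1.1 pt.1.1.2 pt.2.1.1 pt.2.1.2 := by
      intro pt
      rw [lam_eval r le_rfl hcd pt.1.2 pt.2.2]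
    have hsupp : ∀ pt : Y X × Y X, pt ≠ P0 → pt ≠ P1 → ξ pt = 0 := by
      intro pt h1 h2
      rw [hval]
      by_cases hd : (pt.1.1.1 = pt.1.1.2 ∧ pt.2.1.1 = pt.2.1.2)
      · obtain ⟨hd1, hd2⟩ := hd
        by_contra hz
        rw [← hd1, ← hd2] at hz
        rcases c2 _ _ hz with hc | hc
        · exact h1 (Prod.ext (Subtype.ext (Prod.ext hc.1 (hd1.symm.trans hc.1)))
            (Subtype.ext (Prod.ext hc.2 (hd2.symm.trans hc.2))))
        · exact h2 (Prod.ext (Subtype.ext (Prod.ext hc.1 (hd1.symm.trans hc.1)))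
            (Subtype.ext (Prod.ext hc.2 (hd2.symm.trans hc.2))))
      · exact hno _ _ _ _ pt.1.2 pt.2.2 (fun ha hb => hd ⟨ha, hb⟩)
    set α := ξ P0 with hα
    set β := ξ P1 with hβ
    have hcombo : single ((⟨(a,a),le_rfl⟩ : Y X), (⟨(c,d),hcd⟩ : Y X)) (1:K)
        = α • single ((⟨(a,a),le_rfl⟩ : Y X), (⟨(c,c),le_rfl⟩ : Y X)) 1
          + β • single ((⟨(a,a),le_rfl⟩ : Y X), (⟨(d,d),le_rfl⟩ : Y X)) 1 := by
      apply hca.1.1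
      rw [map_add, map_smul, map_smul, hind a c, hind a d]
      ext pt
      rw [Finsupp.add_apply, Finsupp.smul_apply, Finsupp.smul_apply,
          Finsupp.single_apply, Finsupp.single_apply]
      by_cases h1 : P0 = pt
      · rw [if_pos h1, if_neg (fun h2 => hP01 (h1.trans h2.symm)), ← h1]
        simp [hα, hξ]
      · by_cases h2 : P1 = pt
        · rw [if_pos h2, if_neg h1, ← h2]
          simp [hβ, hξ]
        · rw [if_neg h1, if_neg h2,
            hsupp pt (fun hc => h1 hc.symm) (fun hc => h2 hc.symm)]
          simp
    have hcontra := congrArg (fun z : Inc2 K X =>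
      z ((⟨(a,a),le_rfl⟩ : Y X), (⟨(c,d),hcd⟩ : Y X))) hcombo
    have hL : (single ((⟨(a,a),le_rfl⟩ : Y X), (⟨(c,d),hcd⟩ : Y X)) (1:K))
        ((⟨(a,a),le_rfl⟩ : Y X), (⟨(c,d),hcd⟩ : Y X)) = 1 := Finsupp.single_eq_same
    have hR1 : (single ((⟨(a,a),le_rfl⟩ : Y X), (⟨(c,c),le_rfl⟩ : Y X)) (1:K))
        ((⟨(a,a),le_rfl⟩ : Y X), (⟨(c,d),hcd⟩ : Y X)) = 0 := by
      rw [Finsupp.single_apply, if_neg]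
      intro he
      exact hne (by simpa using congrArg (fun z : Y X × Y X => z.2.1.2) he)
    have hR2 : (single ((⟨(a,a),le_rfl⟩ : Y X), (⟨(d,d),le_rfl⟩ : Y X)) (1:K))
        ((⟨(a,a),le_rfl⟩ : Y X), (⟨(c,d),hcd⟩ : Y X)) = 0 := by
      rw [Finsupp.single_apply, if_neg]
      intro he
      exact hne (by simpa using (congrArg (fun z : Y X × Y X => z.2.1.1) he).symm)
    simp only [Finsupp.add_apply, Finsupp.smul_apply, hL, hR1, hR2, smul_zero, add_zero] at hcontra
    exact one_ne_zero hcontra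
  obtain ⟨E, F, G, H, hEF, hGH, hnd', hne'⟩ := hex
  obtain ⟨⟨hE, hG⟩, hF, hH⟩ := c1 E F G H hEF hGH hnd' hne'
  -- apply the no-interior identity with (M,N) = (p11, p02)
  have h0 := hpair E F G G F F G H hEF le_rfl le_rfl hGH
  rw [if_pos ⟨rfl, rfl⟩, lam_ind hind, lam_ind hind] at h0
  by_cases hc1 : (E = p01 ∧ F = p01 ∧ G = p02 ∧ G = p02)
  · exact absurd (hc1.2.1.symm.trans hF) hp0111
  · by_cases hc2 : (F = p11 ∧ F = p11 ∧ G = p12 ∧ H = p12)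
    · exact hG.symm.trans hc2.2.2.1
    · rw [if_neg hc1, if_neg hc2, zero_mul, mul_zero, add_zero] at h0
      exact absurd h0 hne'

/-- T3: comparable base points have equal left translations. -/
lemma T3L {r : Inc2 K X →ₗ[K] Inc2 K X} {lt rt : X → X → X}
    (hca : IsCoalgAuto r) (hind : Induces r lt rt) (hnd0 : NonDeg0 lt rt)
    {a x : X} (hax : a ≤ x) : lt a = lt x :=
  const_of_cov lt (fun u v hc => T3L_cov hca hind hnd0 hc) a x hax

/-- T3: comparable base points have equal right translations. -/
lemma T3R {r : Inc2 K X →ₗ[K] Inc2 K X} {lt rt : X → X → X}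
    (hca : IsCoalgAuto r) (hind : Induces r lt rt) (hnd0 : NonDeg0 lt rt)
    {c w : X} (hcw : c ≤ w) : (fun z => rt z c) = (fun z => rt z w) :=
  const_of_cov (fun c z => rt z c) (fun u v hc => T3R_cov hca hind hnd0 hc) c w hcw

end Chunk9
section Chunk10
set_option linter.unusedSectionVars false
set_option maxHeartbeats 1000000

variable {K X : Type} [Field K] [PartialOrder X] [DecidableEq X]
  [@DecidableRel X X (· ≤ ·)] [LocallyFiniteOrder X]

/-- the final support lemma for diagonal coefficients. -/
lemma SL {r : Inc2 K X →ₗ[K] Inc2 K X} {lt rt : X → X → X}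
    (hca : IsCoalgAuto r) (hnd : NonDeg r) (hind : Induces r lt rt) (hnd0 : NonDeg0 lt rt)
    {A B C D E G : X} (hAB : A ≤ B) (hCD : C ≤ D)
    (hne : lam r A B C D E E G G ≠ 0) :
    ∃ w ∈ Finset.Icc C D, ∃ x ∈ Finset.Icc A B, E = lt A w ∧ G = rt x C := by
  obtain ⟨x, hx, w, hw, hE, hG⟩ := gamma_supp hca hind hAB hCD hne
  refine ⟨w, hw, x, hx, ?_, ?_⟩
  · rw [hE, show lt x = lt A from (T3L hca hind hnd0 (Finset.mem_Icc.mp hx).1).symm]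
  · rw [hG, show rt x w = rt x C from
      (congrFun (T3R hca hind hnd0 (Finset.mem_Icc.mp hw).1) x).symm]

/-- the counit-reindexing lemma. -/
lemma CRL {r : Inc2 K X →ₗ[K] Inc2 K X} {lt rt : X → X → X}
    (hca : IsCoalgAuto r) (hnd : NonDeg r) (hind : Induces r lt rt) (hnd0 : NonDeg0 lt rt)
    {A B C D : X} (hAB : A ≤ B) (hCD : C ≤ D) :
    ∑ w ∈ Finset.Icc C D, ∑ x ∈ Finset.Icc A B,
        lam r A B C D (lt A w) (lt A w) (rt x C) (rt x C)
      = (if A = B then (1:K) else 0) * (if C = D then (1:K) else 0) := by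
  set W := ((Finset.Icc C D) ×ˢ (Finset.Icc A B)).image
      (fun p : X × X => (lt A p.1, rt p.2 C)) with hW
  have hcov : ∀ p : X × X, lam r A B C D p.1 p.1 p.2 p.2 ≠ 0 → p ∈ W := by
    intro p hne
    obtain ⟨w, hw, x, hx, hE, hG⟩ := SL hca hnd hind hnd0 hAB hCD hne
    exact Finset.mem_image.mpr ⟨(w,x), Finset.mem_product.mpr ⟨hw, hx⟩,
      Prod.ext hE.symm hG.symm⟩
  have h := counit_cover hca hAB hCD W hcov
  rw [hW, Finset.sum_image (fun p _ q _ hpq => Prod.ext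
      ((hnd0.1 A).injective (congrArg Prod.fst hpq))
      ((hnd0.2 C).injective (congrArg Prod.snd hpq)))] at h
  rw [Finset.sum_product] at h
  exact h

lemma ite_inj {T : X → X} (hT : Function.Injective T) (u v : X) :
    (if T u = T v then (1:K) else 0) = if u = v then (1:K) else 0 := by
  by_cases h : u = v
  · rw [if_pos h, if_pos (congrArg T h)]
  · rw [if_neg h, if_neg (fun hc => h (hT hc))]

lemma braid1 {lt rt : X → X → X} (hbr0 : Braid0 (r0map lt rt)) (a c k : X) :
    lt (lt a c) (lt (rt a c) k) = lt a (lt c k) := by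
  have h := congrFun hbr0 (a, (c, k))
  exact congrArg (fun z : X × X × X => z.1) h

lemma braid3 {lt rt : X → X → X} (hbr0 : Braid0 (r0map lt rt)) (a c k : X) :
    rt (rt a c) k = rt (rt a (lt c k)) (rt c k) := by
  have h := congrFun hbr0 (a, (c, k))
  exact congrArg (fun z : X × X × X => z.2.2) h

end Chunk10
section Chunk11
set_option linter.unusedSectionVars false
set_option maxHeartbeats 1000000

variable {K X : Type} [Field K] [PartialOrder X] [DecidableEq X]
  [@DecidableRel X X (· ≤ ·)] [LocallyFiniteOrder X]

lemma triple_tri {a b c d e f : X} (T : X → X → X → X → X → X → X → X → X → K) :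
    (∑ g ∈ Finset.Icc a b, ∑ i ∈ Finset.Icc c d, ∑ k ∈ Finset.Icc e f,
     ∑ x ∈ Finset.Icc a g, ∑ y ∈ Finset.Icc g b, ∑ w ∈ Finset.Icc c i, ∑ z ∈ Finset.Icc i d,
     ∑ u ∈ Finset.Icc e k, ∑ v ∈ Finset.Icc k f, T g i k x y w z u v)
    = ∑ x ∈ Finset.Icc a b, ∑ y ∈ Finset.Icc x b, ∑ w ∈ Finset.Icc c d, ∑ z ∈ Finset.Icc w d,
      ∑ u ∈ Finset.Icc e f, ∑ v ∈ Finset.Icc u f,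
      ∑ g ∈ Finset.Icc x y, ∑ i ∈ Finset.Icc w z, ∑ k ∈ Finset.Icc u v,
        T g i k x y w z u v := by
  rw [Finset.sum_sigma', Finset.sum_sigma', Finset.sum_sigma', Finset.sum_sigma',
      Finset.sum_sigma', Finset.sum_sigma', Finset.sum_sigma', Finset.sum_sigma']
  conv_rhs => rw [Finset.sum_sigma', Finset.sum_sigma', Finset.sum_sigma', Finset.sum_sigma',
      Finset.sum_sigma', Finset.sum_sigma', Finset.sum_sigma', Finset.sum_sigma']
  refine Finset.sum_nbij'
    (i := fun p => ⟨⟨⟨⟨⟨⟨⟨⟨p.1.1.1.1.1.2, p.1.1.1.1.2⟩, p.1.1.1.2⟩, p.1.1.2⟩, p.1.2⟩, p.2⟩,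
        p.1.1.1.1.1.1.1.1⟩, p.1.1.1.1.1.1.1.2⟩, p.1.1.1.1.1.1.2⟩)
    (j := fun q => ⟨⟨⟨⟨⟨⟨⟨⟨q.1.1.2, q.1.2⟩, q.2⟩, q.1.1.1.1.1.1.1.1⟩, q.1.1.1.1.1.1.1.2⟩,
        q.1.1.1.1.1.1.2⟩, q.1.1.1.1.1.2⟩, q.1.1.1.1.2⟩, q.1.1.1.2⟩)
    ?_ ?_ ?_ ?_ ?_
  · intro p hp
    simp only [Finset.mem_sigma, Finset.mem_Icc] at hp ⊢
    obtain ⟨⟨⟨⟨⟨⟨⟨⟨hg, hi⟩, hk⟩, hx⟩, hy⟩, hw⟩, hz⟩, hu⟩, hv⟩ := hp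
    exact ⟨⟨⟨⟨⟨⟨⟨⟨⟨hx.1, le_trans hx.2 hg.2⟩, ⟨le_trans hx.2 hy.1, hy.2⟩⟩,
      ⟨hw.1, le_trans hw.2 hi.2⟩⟩, ⟨le_trans hw.2 hz.1, hz.2⟩⟩,
      ⟨hu.1, le_trans hu.2 hk.2⟩⟩, ⟨le_trans hu.2 hv.1, hv.2⟩⟩,
      ⟨hx.2, hy.1⟩⟩, ⟨hw.2, hz.1⟩⟩, ⟨hu.2, hv.1⟩⟩
  · intro q hq
    simp only [Finset.mem_sigma, Finset.mem_Icc] at hq ⊢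
    obtain ⟨⟨⟨⟨⟨⟨⟨⟨hx, hy⟩, hw⟩, hz⟩, hu⟩, hv⟩, hg⟩, hi⟩, hk⟩ := hq
    exact ⟨⟨⟨⟨⟨⟨⟨⟨⟨le_trans hx.1 hg.1, le_trans hg.2 hy.2⟩,
      ⟨le_trans hw.1 hi.1, le_trans hi.2 hz.2⟩⟩,
      ⟨le_trans hu.1 hk.1, le_trans hk.2 hv.2⟩⟩,
      ⟨hx.1, hg.1⟩⟩, ⟨hg.2, hy.2⟩⟩, ⟨hw.1, hi.1⟩⟩, ⟨hi.2, hz.2⟩⟩,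
      ⟨hu.1, hk.1⟩⟩, ⟨hk.2, hv.2⟩⟩
  · intro p _
    rcases p with ⟨⟨⟨⟨⟨⟨⟨⟨g, i⟩, k⟩, x⟩, y⟩, w⟩, z⟩, u⟩, v⟩
    rfl
  · intro q _
    rcases q with ⟨⟨⟨⟨⟨⟨⟨⟨x, y⟩, w⟩, z⟩, u⟩, v⟩, g⟩, i⟩, k⟩
    rfl
  · intro p _
    rcases p with ⟨⟨⟨⟨⟨⟨⟨⟨g, i⟩, k⟩, x⟩, y⟩, w⟩, z⟩, u⟩, v⟩
    rfl

lemma collapse_ite {u f' : X} (huf : u ≤ f') (H : X → K) :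
    (∑ v ∈ Finset.Icc u f', (if u = v then (1:K) else 0) * H v) = H u := by
  have e : ∀ v ∈ Finset.Icc u f', (if u = v then (1:K) else 0) * H v
      = if v = u then H v else 0 := by
    intro v _
    by_cases h : u = v
    · rw [if_pos h, if_pos h.symm, one_mul]
    · rw [if_neg h, if_neg (fun hc => h hc.symm), zero_mul]
  rw [Finset.sum_congr rfl e, Finset.sum_ite_eq' _ u H,
      if_pos (Finset.mem_Icc.mpr ⟨le_rfl, huf⟩)]

end Chunk11
section Chunk12
set_option linter.unusedSectionVars false
set_option maxHeartbeats 1000000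

variable {K X : Type} [Field K] [PartialOrder X] [DecidableEq X]
  [@DecidableRel X X (· ≤ ·)] [LocallyFiniteOrder X]
variable {r : Inc2 K X →ₗ[K] Inc2 K X} {lt rt : X → X → X}

lemma stage1L (hca : IsCoalgAuto r) (hnd : NonDeg r) (hind : Induces r lt rt)
    (hnd0 : NonDeg0 lt rt) (hbr0 : Braid0 (r0map lt rt))
    {a c e x w z u v : X} (hax : a ≤ x) (hcw : c ≤ w) (hwz : w ≤ z) (heu : e ≤ u) (huv : u ≤ v) :
    (∑ i ∈ Finset.Icc w z, ∑ k ∈ Finset.Icc u v,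
      lam r (lt a w) (lt a z) (lt (rt x c) u) (lt (rt x c) v)
        (lt a (lt c k)) (lt a (lt c k))
        (rt (lt a i) (lt (rt a i) e)) (rt (lt a i) (lt (rt a i) e)))
    = (if w = z then (1:K) else 0) * (if u = v then (1:K) else 0) := by
  have Lmono : ∀ p u' v' : X, u' ≤ v' → lt p u' ≤ lt p v' :=
    fun p u' v' h => ((L_facts hca hnd hind hnd0 p).1 u' v').mp h
  have Rmono : ∀ q u' v' : X, u' ≤ v' → rt u' q ≤ rt v' q :=
    fun q u' v' h => ((R_facts hca hnd hind hnd0 q).1 u' v').mp h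
  rw [Finset.sum_comm]
  have hAB : lt a w ≤ lt a z := Lmono a w z hwz
  have hCD : lt (rt x c) u ≤ lt (rt x c) v := Lmono _ u v huv
  have h := CRL hca hnd hind hnd0 hAB hCD
  rw [(L_facts hca hnd hind hnd0 (rt x c)).2 u v huv,
      Finset.sum_image (fun p _ q _ hpq => (hnd0.1 (rt x c)).injective hpq)] at h
  have h2 : ∀ k ∈ Finset.Icc u v,
      (∑ x' ∈ Finset.Icc (lt a w) (lt a z),
        lam r (lt a w) (lt a z) (lt (rt x c) u) (lt (rt x c) v)
          (lt (lt a w) (lt (rt x c) k)) (lt (lt a w) (lt (rt x c) k))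
          (rt x' (lt (rt x c) u)) (rt x' (lt (rt x c) u)))
      = ∑ i ∈ Finset.Icc w z,
        lam r (lt a w) (lt a z) (lt (rt x c) u) (lt (rt x c) v)
          (lt a (lt c k)) (lt a (lt c k))
          (rt (lt a i) (lt (rt a i) e)) (rt (lt a i) (lt (rt a i) e)) := by
    intro k _
    rw [(L_facts hca hnd hind hnd0 a).2 w z hwz,
        Finset.sum_image (fun p _ q _ hpq => (hnd0.1 a).injective hpq)]
    have e1 : lt (rt x c) = lt (rt a c) := (T3L hca hind hnd0 (Rmono c a x hax)).symm
    have e2 : lt (lt a w) = lt (lt a c) := (T3L hca hind hnd0 (Lmono a c w hcw)).symm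
    have hEeq : lt (lt a w) (lt (rt x c) k) = lt a (lt c k) := by
      rw [e1, e2, braid1 hbr0]
    refine Finset.sum_congr rfl fun i hi => ?_
    have hwi : w ≤ i := (Finset.mem_Icc.mp hi).1
    have e3 : rt a c = rt a i := congrFun (T3R hca hind hnd0 (le_trans hcw hwi)) a
    have e4 := T3R hca hind hnd0 (Lmono (rt a c) e u heu)
    have hGeq : rt (lt a i) (lt (rt x c) u) = rt (lt a i) (lt (rt a i) e) := by
      calc rt (lt a i) (lt (rt x c) u) = rt (lt a i) (lt (rt a c) u) := by rw [e1]
        _ = rt (lt a i) (lt (rt a c) e) := (congrFun e4 (lt a i)).symm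
        _ = rt (lt a i) (lt (rt a i) e) := by rw [e3]
    rw [hEeq, hGeq]
  rw [Finset.sum_congr rfl h2] at h
  rw [h, ite_inj (hnd0.1 a).injective w z, ite_inj (hnd0.1 (rt x c)).injective u v]

lemma stage2L (hca : IsCoalgAuto r) (hnd : NonDeg r) (hind : Induces r lt rt)
    (hnd0 : NonDeg0 lt rt)
    {c e f x y : X} (hxy : x ≤ y) (hef : e ≤ f) :
    (∑ u ∈ Finset.Icc e f, ∑ g ∈ Finset.Icc x y,
      lam r (rt x c) (rt y c) e f (lt (rt x c) u) (lt (rt x c) u)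
        (rt (rt g c) e) (rt (rt g c) e))
    = (if x = y then (1:K) else 0) * (if e = f then (1:K) else 0) := by
  have hAB : rt x c ≤ rt y c := ((R_facts hca hnd hind hnd0 c).1 x y).mp hxy
  have h := CRL hca hnd hind hnd0 hAB hef
  have h2 : ∀ u ∈ Finset.Icc e f,
      (∑ x' ∈ Finset.Icc (rt x c) (rt y c),
        lam r (rt x c) (rt y c) e f (lt (rt x c) u) (lt (rt x c) u) (rt x' e) (rt x' e))
      = ∑ g ∈ Finset.Icc x y,
        lam r (rt x c) (rt y c) e f (lt (rt x c) u) (lt (rt x c) u)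
          (rt (rt g c) e) (rt (rt g c) e) := by
    intro u _
    rw [(R_facts hca hnd hind hnd0 c).2 x y hxy,
        Finset.sum_image (fun p _ q _ hpq => (hnd0.2 c).injective hpq)]
  rw [Finset.sum_congr rfl h2] at h
  rw [h, ite_inj (hnd0.2 c).injective x y]

lemma stage1R (hca : IsCoalgAuto r) (hnd : NonDeg r) (hind : Induces r lt rt)
    (hnd0 : NonDeg0 lt rt) (hbr0 : Braid0 (r0map lt rt))
    {a c e x y w z u : X} (hax : a ≤ x) (hxy : x ≤ y) (hcw : c ≤ w) (hwz : w ≤ z) (heu : e ≤ u) :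
    (∑ i ∈ Finset.Icc w z, ∑ g ∈ Finset.Icc x y,
      lam r (rt x (lt c u)) (rt y (lt c u)) (rt w e) (rt z e)
        (lt (rt a (lt i e)) (rt i e)) (lt (rt a (lt i e)) (rt i e))
        (rt (rt g c) e) (rt (rt g c) e))
    = (if x = y then (1:K) else 0) * (if w = z then (1:K) else 0) := by
  have Lmono : ∀ p u' v' : X, u' ≤ v' → lt p u' ≤ lt p v' :=
    fun p u' v' h => ((L_facts hca hnd hind hnd0 p).1 u' v').mp h
  have Rmono : ∀ q u' v' : X, u' ≤ v' → rt u' q ≤ rt v' q :=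
    fun q u' v' h => ((R_facts hca hnd hind hnd0 q).1 u' v').mp h
  have hAB : rt x (lt c u) ≤ rt y (lt c u) := Rmono _ x y hxy
  have hCD : rt w e ≤ rt z e := Rmono e w z hwz
  have h := CRL hca hnd hind hnd0 hAB hCD
  rw [(R_facts hca hnd hind hnd0 e).2 w z hwz,
      Finset.sum_image (fun p _ q _ hpq => (hnd0.2 e).injective hpq)] at h
  -- translation facts
  have eu : (fun z' => rt z' (lt c e)) = (fun z' => rt z' (lt c u)) :=
    T3R hca hind hnd0 (Lmono c e u heu)
  have h2 : ∀ i ∈ Finset.Icc w z,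
      (∑ x' ∈ Finset.Icc (rt x (lt c u)) (rt y (lt c u)),
        lam r (rt x (lt c u)) (rt y (lt c u)) (rt w e) (rt z e)
          (lt (rt x (lt c u)) (rt i e)) (lt (rt x (lt c u)) (rt i e))
          (rt x' (rt w e)) (rt x' (rt w e)))
      = ∑ g ∈ Finset.Icc x y,
        lam r (rt x (lt c u)) (rt y (lt c u)) (rt w e) (rt z e)
          (lt (rt a (lt i e)) (rt i e)) (lt (rt a (lt i e)) (rt i e))
          (rt (rt g c) e) (rt (rt g c) e) := by
    intro i hi
    have hwi : w ≤ i := (Finset.mem_Icc.mp hi).1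
    rw [(R_facts hca hnd hind hnd0 (lt c u)).2 x y hxy,
        Finset.sum_image (fun p _ q _ hpq => (hnd0.2 (lt c u)).injective hpq)]
    have hEeq : lt (rt x (lt c u)) (rt i e) = lt (rt a (lt i e)) (rt i e) := by
      have e5 : lt c = lt i := T3L hca hind hnd0 (le_trans hcw hwi)
      have e6 : rt x (lt c u) = rt x (lt c e) := (congrFun eu x).symm
      have e7 : lt (rt x (lt c e)) = lt (rt a (lt c e)) :=
        (T3L hca hind hnd0 (Rmono (lt c e) a x hax)).symm
      rw [e6, e7, ← e5]
    refine Finset.sum_congr rfl fun g _ => ?_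
    have hGeq : rt (rt g (lt c u)) (rt w e) = rt (rt g c) e := by
      have e6 : rt g (lt c u) = rt g (lt c e) := (congrFun eu g).symm
      have e8 : (fun z' => rt z' (rt c e)) = (fun z' => rt z' (rt w e)) :=
        T3R hca hind hnd0 (Rmono e c w hcw)
      calc rt (rt g (lt c u)) (rt w e) = rt (rt g (lt c e)) (rt w e) := by rw [e6]
        _ = rt (rt g (lt c e)) (rt c e) := (congrFun e8 (rt g (lt c e))).symm
        _ = rt (rt g c) e := (braid3 hbr0 g c e).symm
    rw [hEeq, hGeq]
  rw [Finset.sum_congr rfl h2] at h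
  rw [h, ite_inj (hnd0.2 (lt c u)).injective x y, ite_inj (hnd0.2 e).injective w z]

lemma stage2R (hca : IsCoalgAuto r) (hnd : NonDeg r) (hind : Induces r lt rt)
    (hnd0 : NonDeg0 lt rt)
    {a b c u v : X} (hab : a ≤ b) (huv : u ≤ v) :
    (∑ k ∈ Finset.Icc u v, ∑ x ∈ Finset.Icc a b,
      lam r a b (lt c u) (lt c v) (lt a (lt c k)) (lt a (lt c k))
        (rt x (lt c u)) (rt x (lt c u)))
    = (if a = b then (1:K) else 0) * (if u = v then (1:K) else 0) := by
  have hCD : lt c u ≤ lt c v := ((L_facts hca hnd hind hnd0 c).1 u v).mp huv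
  have h := CRL hca hnd hind hnd0 hab hCD
  rw [(L_facts hca hnd hind hnd0 c).2 u v huv,
      Finset.sum_image (fun p _ q _ hpq => (hnd0.1 c).injective hpq)] at h
  rw [h, ite_inj (hnd0.1 c).injective u v]

end Chunk12
section Chunk13
set_option linter.unusedSectionVars false
set_option maxHeartbeats 4000000

variable {K X : Type} [Field K] [PartialOrder X] [DecidableEq X]
  [@DecidableRel X X (· ≤ ·)] [LocallyFiniteOrder X]

/-- first factor of `LBE`. -/
noncomputable def P1 (r : Inc2 K X →ₗ[K] Inc2 K X) (lt rt : X → X → X)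
    (a b c d : X) (x y w z : X) : K :=
  lam r a b c d (lt a w) (lt a z) (rt x c) (rt y c)

noncomputable def P2 (r : Inc2 K X →ₗ[K] Inc2 K X) (lt rt : X → X → X)
    (c e f : X) (x y u v g : X) : K :=
  lam r (rt x c) (rt y c) e f (lt (rt x c) u) (lt (rt x c) v)
    (rt (rt g c) e) (rt (rt g c) e)

noncomputable def P3 (r : Inc2 K X →ₗ[K] Inc2 K X) (lt rt : X → X → X)
    (a c e : X) (w z x u v i k : X) : K :=
  lam r (lt a w) (lt a z) (lt (rt x c) u) (lt (rt x c) v)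
    (lt a (lt c k)) (lt a (lt c k))
    (rt (lt a i) (lt (rt a i) e)) (rt (lt a i) (lt (rt a i) e))

lemma LBE_diag (r : Inc2 K X →ₗ[K] Inc2 K X) (lt rt : X → X → X)
    (a b c d e f g i k : X) :
    LBE r lt rt a b c d e f g g i i k k
      = ∑ x ∈ Finset.Icc a g, ∑ y ∈ Finset.Icc g b, ∑ w ∈ Finset.Icc c i,
        ∑ z ∈ Finset.Icc i d, ∑ u ∈ Finset.Icc e k, ∑ v ∈ Finset.Icc k f,
          P1 r lt rt a b c d x y w z * P2 r lt rt c e f x y u v g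
            * P3 r lt rt a c e w z x u v i k := rfl

noncomputable def Q1 (r : Inc2 K X →ₗ[K] Inc2 K X) (lt rt : X → X → X)
    (c d e f : X) (u v w z : X) : K :=
  lam r c d e f (lt c u) (lt c v) (rt w e) (rt z e)

noncomputable def Q2 (r : Inc2 K X →ₗ[K] Inc2 K X) (lt rt : X → X → X)
    (a b c : X) (u v k x y : X) : K :=
  lam r a b (lt c u) (lt c v) (lt a (lt c k)) (lt a (lt c k))
    (rt x (lt c u)) (rt y (lt c u))

noncomputable def Q3 (r : Inc2 K X →ₗ[K] Inc2 K X) (lt rt : X → X → X)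
    (a c e : X) (x y w z u i g : X) : K :=
  lam r (rt x (lt c u)) (rt y (lt c u)) (rt w e) (rt z e)
    (lt (rt a (lt i e)) (rt i e)) (lt (rt a (lt i e)) (rt i e))
    (rt (rt g c) e) (rt (rt g c) e)

lemma RBE_diag (r : Inc2 K X →ₗ[K] Inc2 K X) (lt rt : X → X → X)
    (a b c d e f g i k : X) :
    RBE r lt rt a b c d e f g g i i k k
      = ∑ x ∈ Finset.Icc a g, ∑ y ∈ Finset.Icc g b, ∑ w ∈ Finset.Icc c i,
        ∑ z ∈ Finset.Icc i d, ∑ u ∈ Finset.Icc e k, ∑ v ∈ Finset.Icc k f,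
          Q1 r lt rt c d e f u v w z * Q2 r lt rt a b c u v k x y
            * Q3 r lt rt a c e x y w z u i g := rfl

end Chunk13
section Chunk14
set_option linter.unusedSectionVars false
set_option maxHeartbeats 4000000

variable {K X : Type} [Field K] [PartialOrder X] [DecidableEq X]
  [@DecidableRel X X (· ≤ ·)] [LocallyFiniteOrder X]

theorem statement0_main
    (r : Inc2 K X →ₗ[K] Inc2 K X) (lt rt : X → X → X)
    (hca : IsCoalgAuto r) (hnd : NonDeg r)
    (hind : Induces r lt rt) (hnd0 : NonDeg0 lt rt) (hbr0 : Braid0 (r0map lt rt)) :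
    ∀ a b c d e f : X, a ≤ b → c ≤ d → e ≤ f →
      ((∑ g ∈ Finset.Icc a b, ∑ i ∈ Finset.Icc c d, ∑ k ∈ Finset.Icc e f,
          LBE r lt rt a b c d e f g g i i k k)
        = (if a = b then (1 : K) else 0) * (if c = d then 1 else 0) *
            (if e = f then 1 else 0)) ∧
      ((∑ g ∈ Finset.Icc a b, ∑ i ∈ Finset.Icc c d, ∑ k ∈ Finset.Icc e f,
          RBE r lt rt a b c d e f g g i i k k)
        = (if a = b then (1 : K) else 0) * (if c = d then 1 else 0) *
            (if e = f then 1 else 0)) := by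
  intro a b c d e f hab hcd hef
  constructor
  · -- LBE
    simp only [LBE_diag]
    rw [triple_tri]
    have A3 : ∀ x ∈ Finset.Icc a b, ∀ y ∈ Finset.Icc x b, ∀ w ∈ Finset.Icc c d,
        (∑ z ∈ Finset.Icc w d, ∑ u ∈ Finset.Icc e f, ∑ v ∈ Finset.Icc u f,
          ∑ g ∈ Finset.Icc x y, ∑ i ∈ Finset.Icc w z, ∑ k ∈ Finset.Icc u v,
            P1 r lt rt a b c d x y w z * P2 r lt rt c e f x y u v g
              * P3 r lt rt a c e w z x u v i k)
        = P1 r lt rt a b c d x y w w *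
            ((if x = y then (1:K) else 0) * (if e = f then (1:K) else 0)) := by
      intro x hx y hy w hw
      have ha : ∀ z ∈ Finset.Icc w d, ∀ u ∈ Finset.Icc e f, ∀ v ∈ Finset.Icc u f,
          (∑ g ∈ Finset.Icc x y, ∑ i ∈ Finset.Icc w z, ∑ k ∈ Finset.Icc u v,
            P1 r lt rt a b c d x y w z * P2 r lt rt c e f x y u v g
              * P3 r lt rt a c e w z x u v i k)
          = (∑ g ∈ Finset.Icc x y,
              P1 r lt rt a b c d x y w z * P2 r lt rt c e f x y u v g)
            * ((if w = z then (1:K) else 0) * (if u = v then (1:K) else 0)) := by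
        intro z hz u hu v hv
        have hst : (∑ i ∈ Finset.Icc w z, ∑ k ∈ Finset.Icc u v,
            P3 r lt rt a c e w z x u v i k)
            = (if w = z then (1:K) else 0) * (if u = v then (1:K) else 0) := by
          simp only [P3]
          exact stage1L hca hnd hind hnd0 hbr0 (Finset.mem_Icc.mp hx).1
            (Finset.mem_Icc.mp hw).1 (Finset.mem_Icc.mp hz).1
            (Finset.mem_Icc.mp hu).1 (Finset.mem_Icc.mp hv).1
        calc _ = ∑ g ∈ Finset.Icc x y,
              (P1 r lt rt a b c d x y w z * P2 r lt rt c e f x y u v g) *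
              (∑ i ∈ Finset.Icc w z, ∑ k ∈ Finset.Icc u v,
                P3 r lt rt a c e w z x u v i k) := by
              refine Finset.sum_congr rfl fun g _ => ?_
              rw [Finset.mul_sum]
              refine Finset.sum_congr rfl fun i _ => ?_
              rw [Finset.mul_sum]
          _ = _ := by rw [hst, ← Finset.sum_mul]
      have hb : ∀ z ∈ Finset.Icc w d, ∀ u ∈ Finset.Icc e f,
          (∑ v ∈ Finset.Icc u f, ∑ g ∈ Finset.Icc x y, ∑ i ∈ Finset.Icc w z,
            ∑ k ∈ Finset.Icc u v,
            P1 r lt rt a b c d x y w z * P2 r lt rt c e f x y u v g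
              * P3 r lt rt a c e w z x u v i k)
          = (∑ g ∈ Finset.Icc x y,
              P1 r lt rt a b c d x y w z * P2 r lt rt c e f x y u u g)
            * (if w = z then (1:K) else 0) := by
        intro z hz u hu
        calc _ = ∑ v ∈ Finset.Icc u f,
              (∑ g ∈ Finset.Icc x y,
                P1 r lt rt a b c d x y w z * P2 r lt rt c e f x y u v g)
              * ((if w = z then (1:K) else 0) * (if u = v then (1:K) else 0)) :=
              Finset.sum_congr rfl fun v hv => ha z hz u hu v hv
          _ = ∑ v ∈ Finset.Icc u f, (if u = v then (1:K) else 0) *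
              ((∑ g ∈ Finset.Icc x y,
                P1 r lt rt a b c d x y w z * P2 r lt rt c e f x y u v g)
               * (if w = z then (1:K) else 0)) :=
              Finset.sum_congr rfl fun v _ => by ring
          _ = _ := collapse_ite (Finset.mem_Icc.mp hu).2 _
      have hc : ∀ z ∈ Finset.Icc w d,
          (∑ u ∈ Finset.Icc e f, ∑ v ∈ Finset.Icc u f, ∑ g ∈ Finset.Icc x y,
            ∑ i ∈ Finset.Icc w z, ∑ k ∈ Finset.Icc u v,
            P1 r lt rt a b c d x y w z * P2 r lt rt c e f x y u v g
              * P3 r lt rt a c e w z x u v i k)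
          = (∑ u ∈ Finset.Icc e f, ∑ g ∈ Finset.Icc x y,
              P1 r lt rt a b c d x y w z * P2 r lt rt c e f x y u u g)
            * (if w = z then (1:K) else 0) := by
        intro z hz
        calc _ = ∑ u ∈ Finset.Icc e f,
              (∑ g ∈ Finset.Icc x y,
                P1 r lt rt a b c d x y w z * P2 r lt rt c e f x y u u g)
              * (if w = z then (1:K) else 0) :=
              Finset.sum_congr rfl fun u hu => hb z hz u hu
          _ = _ := by rw [← Finset.sum_mul]
      have hst2 : (∑ u ∈ Finset.Icc e f, ∑ g ∈ Finset.Icc x y,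
          P2 r lt rt c e f x y u u g)
          = (if x = y then (1:K) else 0) * (if e = f then (1:K) else 0) := by
        simp only [P2]
        exact stage2L hca hnd hind hnd0 (Finset.mem_Icc.mp hy).1 hef
      calc _ = ∑ z ∈ Finset.Icc w d,
            (∑ u ∈ Finset.Icc e f, ∑ g ∈ Finset.Icc x y,
              P1 r lt rt a b c d x y w z * P2 r lt rt c e f x y u u g)
            * (if w = z then (1:K) else 0) :=
            Finset.sum_congr rfl fun z hz => hc z hz
        _ = ∑ z ∈ Finset.Icc w d, (if w = z then (1:K) else 0) *
            (∑ u ∈ Finset.Icc e f, ∑ g ∈ Finset.Icc x y,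
              P1 r lt rt a b c d x y w z * P2 r lt rt c e f x y u u g) :=
            Finset.sum_congr rfl fun z _ => by ring
        _ = ∑ u ∈ Finset.Icc e f, ∑ g ∈ Finset.Icc x y,
              P1 r lt rt a b c d x y w w * P2 r lt rt c e f x y u u g :=
            collapse_ite (Finset.mem_Icc.mp hw).2 _
        _ = P1 r lt rt a b c d x y w w * (∑ u ∈ Finset.Icc e f, ∑ g ∈ Finset.Icc x y,
              P2 r lt rt c e f x y u u g) := by
            rw [Finset.mul_sum]
            refine Finset.sum_congr rfl fun u _ => ?_
            rw [Finset.mul_sum]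
        _ = _ := by rw [hst2]
    have A2 : ∀ x ∈ Finset.Icc a b,
        (∑ y ∈ Finset.Icc x b, ∑ w ∈ Finset.Icc c d,
          ∑ z ∈ Finset.Icc w d, ∑ u ∈ Finset.Icc e f, ∑ v ∈ Finset.Icc u f,
          ∑ g ∈ Finset.Icc x y, ∑ i ∈ Finset.Icc w z, ∑ k ∈ Finset.Icc u v,
            P1 r lt rt a b c d x y w z * P2 r lt rt c e f x y u v g
              * P3 r lt rt a c e w z x u v i k)
        = ∑ w ∈ Finset.Icc c d,
            P1 r lt rt a b c d x x w w * (if e = f then (1:K) else 0) := by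
      intro x hx
      calc _ = ∑ y ∈ Finset.Icc x b, ∑ w ∈ Finset.Icc c d,
            P1 r lt rt a b c d x y w w *
              ((if x = y then (1:K) else 0) * (if e = f then (1:K) else 0)) :=
            Finset.sum_congr rfl fun y hy => Finset.sum_congr rfl fun w hw =>
              A3 x hx y hy w hw
        _ = ∑ y ∈ Finset.Icc x b, (if x = y then (1:K) else 0) *
            (∑ w ∈ Finset.Icc c d,
              P1 r lt rt a b c d x y w w * (if e = f then (1:K) else 0)) := by
            refine Finset.sum_congr rfl fun y _ => ?_
            rw [Finset.mul_sum]
            refine Finset.sum_congr rfl fun w _ => ?_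
            ring
        _ = _ := collapse_ite (Finset.mem_Icc.mp hx).2 _
    refine Eq.trans (Finset.sum_congr rfl A2) ?_
    calc (∑ x ∈ Finset.Icc a b, ∑ w ∈ Finset.Icc c d,
          P1 r lt rt a b c d x x w w * (if e = f then (1:K) else 0))
        = (∑ x ∈ Finset.Icc a b, ∑ w ∈ Finset.Icc c d,
            P1 r lt rt a b c d x x w w) * (if e = f then (1:K) else 0) := by
          rw [Finset.sum_mul]
          refine Finset.sum_congr rfl fun x _ => ?_
          rw [Finset.sum_mul]
      _ = (∑ w ∈ Finset.Icc c d, ∑ x ∈ Finset.Icc a b,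
            P1 r lt rt a b c d x x w w) * (if e = f then (1:K) else 0) := by
          rw [Finset.sum_comm]
      _ = _ := by
          simp only [P1]
          rw [CRL hca hnd hind hnd0 hab hcd]
  · -- RBE
    simp only [RBE_diag]
    rw [triple_tri]
    have B3 : ∀ x ∈ Finset.Icc a b, ∀ y ∈ Finset.Icc x b, ∀ w ∈ Finset.Icc c d,
        (∑ z ∈ Finset.Icc w d, ∑ u ∈ Finset.Icc e f, ∑ v ∈ Finset.Icc u f,
          ∑ g ∈ Finset.Icc x y, ∑ i ∈ Finset.Icc w z, ∑ k ∈ Finset.Icc u v,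
            Q1 r lt rt c d e f u v w z * Q2 r lt rt a b c u v k x y
              * Q3 r lt rt a c e x y w z u i g)
        = (if x = y then (1:K) else 0) *
            (∑ u ∈ Finset.Icc e f, ∑ v ∈ Finset.Icc u f, ∑ k ∈ Finset.Icc u v,
              Q1 r lt rt c d e f u v w w * Q2 r lt rt a b c u v k x y) := by
      intro x hx y hy w hw
      have ha : ∀ z ∈ Finset.Icc w d, ∀ u ∈ Finset.Icc e f, ∀ v ∈ Finset.Icc u f,
          (∑ g ∈ Finset.Icc x y, ∑ i ∈ Finset.Icc w z, ∑ k ∈ Finset.Icc u v,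
            Q1 r lt rt c d e f u v w z * Q2 r lt rt a b c u v k x y
              * Q3 r lt rt a c e x y w z u i g)
          = (∑ k ∈ Finset.Icc u v,
              Q1 r lt rt c d e f u v w z * Q2 r lt rt a b c u v k x y)
            * ((if x = y then (1:K) else 0) * (if w = z then (1:K) else 0)) := by
        intro z hz u hu v hv
        have hst : (∑ i ∈ Finset.Icc w z, ∑ g ∈ Finset.Icc x y,
            Q3 r lt rt a c e x y w z u i g)
            = (if x = y then (1:K) else 0) * (if w = z then (1:K) else 0) := by
          simp only [Q3]
          exact stage1R hca hnd hind hnd0 hbr0 (Finset.mem_Icc.mp hx).1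
            (Finset.mem_Icc.mp hy).1 (Finset.mem_Icc.mp hw).1
            (Finset.mem_Icc.mp hz).1 (Finset.mem_Icc.mp hu).1
        calc _ = ∑ g ∈ Finset.Icc x y, ∑ i ∈ Finset.Icc w z,
              (∑ k ∈ Finset.Icc u v,
                Q1 r lt rt c d e f u v w z * Q2 r lt rt a b c u v k x y)
              * Q3 r lt rt a c e x y w z u i g := by
              refine Finset.sum_congr rfl fun g _ => Finset.sum_congr rfl fun i _ => ?_
              rw [Finset.sum_mul]
          _ = (∑ k ∈ Finset.Icc u v,
                Q1 r lt rt c d e f u v w z * Q2 r lt rt a b c u v k x y)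
              * (∑ g ∈ Finset.Icc x y, ∑ i ∈ Finset.Icc w z,
                  Q3 r lt rt a c e x y w z u i g) := by
              rw [Finset.mul_sum]
              refine Finset.sum_congr rfl fun g _ => ?_
              rw [Finset.mul_sum]
          _ = _ := by rw [Finset.sum_comm, hst]
      have hb : ∀ z ∈ Finset.Icc w d,
          (∑ u ∈ Finset.Icc e f, ∑ v ∈ Finset.Icc u f, ∑ g ∈ Finset.Icc x y,
            ∑ i ∈ Finset.Icc w z, ∑ k ∈ Finset.Icc u v,
            Q1 r lt rt c d e f u v w z * Q2 r lt rt a b c u v k x y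
              * Q3 r lt rt a c e x y w z u i g)
          = (∑ u ∈ Finset.Icc e f, ∑ v ∈ Finset.Icc u f, ∑ k ∈ Finset.Icc u v,
              Q1 r lt rt c d e f u v w z * Q2 r lt rt a b c u v k x y)
            * ((if x = y then (1:K) else 0) * (if w = z then (1:K) else 0)) := by
        intro z hz
        calc _ = ∑ u ∈ Finset.Icc e f, ∑ v ∈ Finset.Icc u f,
              (∑ k ∈ Finset.Icc u v,
                Q1 r lt rt c d e f u v w z * Q2 r lt rt a b c u v k x y)
              * ((if x = y then (1:K) else 0) * (if w = z then (1:K) else 0)) :=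
              Finset.sum_congr rfl fun u hu => Finset.sum_congr rfl fun v hv =>
                ha z hz u hu v hv
          _ = _ := by
              rw [Finset.sum_mul]
              refine Finset.sum_congr rfl fun u _ => ?_
              rw [Finset.sum_mul]
      calc _ = ∑ z ∈ Finset.Icc w d,
            (∑ u ∈ Finset.Icc e f, ∑ v ∈ Finset.Icc u f, ∑ k ∈ Finset.Icc u v,
              Q1 r lt rt c d e f u v w z * Q2 r lt rt a b c u v k x y)
            * ((if x = y then (1:K) else 0) * (if w = z then (1:K) else 0)) :=
            Finset.sum_congr rfl fun z hz => hb z hz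
        _ = ∑ z ∈ Finset.Icc w d, (if w = z then (1:K) else 0) *
            ((if x = y then (1:K) else 0) *
              (∑ u ∈ Finset.Icc e f, ∑ v ∈ Finset.Icc u f, ∑ k ∈ Finset.Icc u v,
                Q1 r lt rt c d e f u v w z * Q2 r lt rt a b c u v k x y)) :=
            Finset.sum_congr rfl fun z _ => by ring
        _ = _ := collapse_ite (Finset.mem_Icc.mp hw).2 _
    have B2 : ∀ x ∈ Finset.Icc a b,
        (∑ y ∈ Finset.Icc x b, ∑ w ∈ Finset.Icc c d,
          ∑ z ∈ Finset.Icc w d, ∑ u ∈ Finset.Icc e f, ∑ v ∈ Finset.Icc u f,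
          ∑ g ∈ Finset.Icc x y, ∑ i ∈ Finset.Icc w z, ∑ k ∈ Finset.Icc u v,
            Q1 r lt rt c d e f u v w z * Q2 r lt rt a b c u v k x y
              * Q3 r lt rt a c e x y w z u i g)
        = ∑ w ∈ Finset.Icc c d, ∑ u ∈ Finset.Icc e f, ∑ v ∈ Finset.Icc u f,
            ∑ k ∈ Finset.Icc u v,
            Q1 r lt rt c d e f u v w w * Q2 r lt rt a b c u v k x x := by
      intro x hx
      calc _ = ∑ y ∈ Finset.Icc x b, ∑ w ∈ Finset.Icc c d,
            (if x = y then (1:K) else 0) *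
            (∑ u ∈ Finset.Icc e f, ∑ v ∈ Finset.Icc u f, ∑ k ∈ Finset.Icc u v,
              Q1 r lt rt c d e f u v w w * Q2 r lt rt a b c u v k x y) :=
            Finset.sum_congr rfl fun y hy => Finset.sum_congr rfl fun w hw =>
              B3 x hx y hy w hw
        _ = ∑ y ∈ Finset.Icc x b, (if x = y then (1:K) else 0) *
            (∑ w ∈ Finset.Icc c d,
              ∑ u ∈ Finset.Icc e f, ∑ v ∈ Finset.Icc u f, ∑ k ∈ Finset.Icc u v,
              Q1 r lt rt c d e f u v w w * Q2 r lt rt a b c u v k x y) := by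
            refine Finset.sum_congr rfl fun y _ => ?_
            rw [Finset.mul_sum]
        _ = _ := collapse_ite (Finset.mem_Icc.mp hx).2 _
    refine Eq.trans (Finset.sum_congr rfl B2) ?_
    refine Eq.trans Finset.sum_comm ?_
    refine Eq.trans (Finset.sum_congr rfl fun w _ => Finset.sum_comm) ?_
    refine Eq.trans (Finset.sum_congr rfl fun w _ => Finset.sum_congr rfl
      fun u _ => Finset.sum_comm) ?_
    refine Eq.trans (Finset.sum_congr rfl fun w _ => Finset.sum_congr rfl
      fun u _ => Finset.sum_congr rfl fun v _ => Finset.sum_comm) ?_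
    -- now : ∑ w ∑ u ∑ v ∑ k ∑ x, Q1 u v w w * Q2 u v k x x
    have C1 : ∀ w ∈ Finset.Icc c d, ∀ u ∈ Finset.Icc e f, ∀ v ∈ Finset.Icc u f,
        (∑ k ∈ Finset.Icc u v, ∑ x ∈ Finset.Icc a b,
          Q1 r lt rt c d e f u v w w * Q2 r lt rt a b c u v k x x)
        = (if u = v then (1:K) else 0) *
            ((if a = b then (1:K) else 0) * Q1 r lt rt c d e f u v w w) := by
      intro w hw u hu v hv
      have hst : (∑ k ∈ Finset.Icc u v, ∑ x ∈ Finset.Icc a b,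
          Q2 r lt rt a b c u v k x x)
          = (if a = b then (1:K) else 0) * (if u = v then (1:K) else 0) := by
        simp only [Q2]
        exact stage2R hca hnd hind hnd0 hab (Finset.mem_Icc.mp hv).1
      calc _ = Q1 r lt rt c d e f u v w w * (∑ k ∈ Finset.Icc u v,
            ∑ x ∈ Finset.Icc a b, Q2 r lt rt a b c u v k x x) := by
            rw [Finset.mul_sum]
            refine Finset.sum_congr rfl fun k _ => ?_
            rw [Finset.mul_sum]
        _ = _ := by rw [hst]; ring
    have C2 : ∀ w ∈ Finset.Icc c d, ∀ u ∈ Finset.Icc e f,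
        (∑ v ∈ Finset.Icc u f, ∑ k ∈ Finset.Icc u v, ∑ x ∈ Finset.Icc a b,
          Q1 r lt rt c d e f u v w w * Q2 r lt rt a b c u v k x x)
        = (if a = b then (1:K) else 0) * Q1 r lt rt c d e f u u w w := by
      intro w hw u hu
      calc _ = ∑ v ∈ Finset.Icc u f, (if u = v then (1:K) else 0) *
            ((if a = b then (1:K) else 0) * Q1 r lt rt c d e f u v w w) :=
            Finset.sum_congr rfl fun v hv => C1 w hw u hu v hv
        _ = _ := collapse_ite (Finset.mem_Icc.mp hu).2 _
    calc _ = ∑ w ∈ Finset.Icc c d, ∑ u ∈ Finset.Icc e f,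
          (if a = b then (1:K) else 0) * Q1 r lt rt c d e f u u w w :=
          Finset.sum_congr rfl fun w hw => Finset.sum_congr rfl fun u hu =>
            C2 w hw u hu
      _ = (if a = b then (1:K) else 0) * (∑ w ∈ Finset.Icc c d,
            ∑ u ∈ Finset.Icc e f, Q1 r lt rt c d e f u u w w) := by
          rw [Finset.mul_sum]
          refine Finset.sum_congr rfl fun w _ => ?_
          rw [Finset.mul_sum]
      _ = (if a = b then (1:K) else 0) * (∑ u ∈ Finset.Icc e f,
            ∑ w ∈ Finset.Icc c d, Q1 r lt rt c d e f u u w w) := by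
          rw [Finset.sum_comm]
      _ = _ := by
          simp only [Q1]
          rw [CRL hca hnd hind hnd0 hcd hef]
          ring

end Chunk14

/-- for a non-degenerate coalgebra automorphism `r` of `D ⊗ D`
inducing a non-degenerate set-theoretic solution `r₀` of the braid equation,
the sum of `LBE(S,T)` (resp. `RBE(S,T)`) over all singleton subintervals
`S ⊆ T` equals `δ_{a,b}·δ_{c,d}·δ_{e,f}`. -/
theorem statement0 {K X : Type} [Field K] [PartialOrder X] [DecidableEq X]
    [@DecidableRel X X (· ≤ ·)] [LocallyFiniteOrder X]
    (r : Inc2 K X →ₗ[K] Inc2 K X) (lt rt : X → X → X)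
    (hca : IsCoalgAuto r) (hnd : NonDeg r)
    (hind : Induces r lt rt) (hnd0 : NonDeg0 lt rt) (hbr0 : Braid0 (r0map lt rt)) :
    ∀ a b c d e f : X, a ≤ b → c ≤ d → e ≤ f →
      ((∑ g ∈ Finset.Icc a b, ∑ i ∈ Finset.Icc c d, ∑ k ∈ Finset.Icc e f,
          LBE r lt rt a b c d e f g g i i k k)
        = (if a = b then (1 : K) else 0) * (if c = d then 1 else 0) *
            (if e = f then 1 else 0)) ∧
      ((∑ g ∈ Finset.Icc a b, ∑ i ∈ Finset.Icc c d, ∑ k ∈ Finset.Icc e f,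
          RBE r lt rt a b c d e f g g i i k k)
        = (if a = b then (1 : K) else 0) * (if c = d then 1 else 0) *
            (if e = f then 1 else 0)) := by
  exact statement0_main r lt rt hca hnd hind hnd0 hbr0

end BraidPaper
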